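/- arXiv:1004.1476 — 3 statements merged into one kernel-verified Lean document; each statement's English description precedes it below -/
import Mathlib

section
/- Let 1 ≤ q < 2, let V be a real Banach space, let ω be a control function, and let Ω, Ω̂ : [0,1] → L(V,V) satisfy ‖Ω(t) − Ω(s)‖ ≤ ω(s,t)^{1/q}, ‖Ω̂(t) − Ω̂(s)‖ ≤ ω(s,t)^{1/q}, and ‖(Ω(t) − Ω(s)) − (Ω̂(t) − Ω̂(s))‖ ≤ ε ω(s,t)^{1/q} for all 0 ≤ s ≤ t ≤ 1, where ε ≥ 0. Fix 0 < T ≤ 1 and set K := ω(0,T)^{1/q} (1 + 2^{2/q} ζ(2/q)). Let I^n and Î^n be the iterated Young integrals of Ω and Ω̂ respectively, defined by I^0(t) = Id_V and I^{n+1}(t) := ∫_0^t dΩ · I^n (the limit of left-point Riemann–Stieltjes sums Σ (Ω(t_i) − Ω(t_{i−1})) ∘ I^n(t_{i−1}) as the mesh tends to 0), and similarly for Î^n with Ω̂. Then for every n ≥ 1 and all 0 ≤ s ≤ t ≤ T, ‖(I^n(t) − I^n(s)) − (Î^n(t) − Î^n(s))‖ ≤ ε n K^{n−1} ω(s,t)^{1/q}.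 -/
/-!
STATEMENT 5: local Lipschitz estimate for iterated Young integrals of two nearby
operator-valued paths.
-/

universe u

/-- A finite partition of the interval `[s,t]`: monotone points `pt 0 = s ≤ ⋯ ≤ pt N = t`. -/
structure Subdivision (s t : ℝ) where
  N : ℕ
  pt : ℕ → ℝ
  pos : 0 < N
  first : pt 0 = s
  last : pt N = t
  mono : ∀ i, i < N → pt i ≤ pt (i + 1)

/-- The mesh of a partition: the largest length of a subinterval. -/
noncomputable def Subdivision.mesh {s t : ℝ} (P : Subdivision s t) : ℝ :=
  (Finset.range P.N).sup' (Finset.nonempty_range_iff.mpr P.pos.ne')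
    (fun i => P.pt (i + 1) - P.pt i)

/-- A control function on the simplex `Δ = {0 ≤ s ≤ t ≤ 1}`. -/
def IsControl (ω : ℝ → ℝ → ℝ) : Prop :=
  ContinuousOn (fun p : ℝ × ℝ => ω p.1 p.2) {p : ℝ × ℝ | 0 ≤ p.1 ∧ p.1 ≤ p.2 ∧ p.2 ≤ 1} ∧
  (∀ t, 0 ≤ t → t ≤ 1 → ω t t = 0) ∧
  (∀ s t, 0 ≤ s → s ≤ t → t ≤ 1 → 0 ≤ ω s t) ∧
  (∀ s u t, 0 ≤ s → s ≤ u → u ≤ t → t ≤ 1 → ω s u + ω u t ≤ ω s t)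

/-- `ζ(θ) = ∑_{n=1}^∞ n^{-θ}`. -/
noncomputable def zetaR (θ : ℝ) : ℝ := ∑' n : ℕ, ((n : ℝ) + 1) ^ (-θ)

/-- `L = ∫_s^t dΩ · G` in the sense of left-point Riemann–Stieltjes sums. -/
def RSLimit {V : Type u} [NormedAddCommGroup V] [NormedSpace ℝ V]
    (Ω G : ℝ → V →L[ℝ] V) (s t : ℝ) (L : V →L[ℝ] V) : Prop :=
  ∀ ε > (0 : ℝ), ∃ δ > (0 : ℝ), ∀ P : Subdivision s t, P.mesh < δ →
    ‖(∑ i ∈ Finset.range P.N, (Ω (P.pt (i + 1)) - Ω (P.pt i)).comp (G (P.pt i))) - L‖ ≤ ε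

/-- `I` is the family of iterated Young integrals of `Ω` on `[0,T]`:
`I^0 = Id` and `I^{n+1}(t) = ∫_0^t dΩ · I^n`. -/
def IsIteratedIntegrals {V : Type u} [NormedAddCommGroup V] [NormedSpace ℝ V]
    (Ω : ℝ → V →L[ℝ] V) (T : ℝ) (I : ℕ → ℝ → V →L[ℝ] V) : Prop :=
  (∀ t, I 0 t = ContinuousLinearMap.id ℝ V) ∧
  (∀ n, I (n + 1) 0 = 0) ∧
  (∀ n t, 0 ≤ t → t ≤ T → RSLimit Ω (I n) 0 t (I (n + 1) t))

namespace St5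

lemma omega_sub {ω : ℝ → ℝ → ℝ} (hω : IsControl ω) {a b c d : ℝ}
    (ha : 0 ≤ a) (hab : a ≤ b) (hbc : b ≤ c) (hcd : c ≤ d) (hd : d ≤ 1) :
    ω b c ≤ ω a d := by
  obtain ⟨-, -, hnn, hsup⟩ := hω
  have h1 := hsup a b c ha hab hbc (hcd.trans hd)
  have h2 := hsup a c d ha (hab.trans hbc) hcd hd
  have n1 := hnn a b ha hab ((hbc.trans hcd).trans hd)
  have n2 := hnn c d (ha.trans ((hab.trans hbc))) hcd hd
  linarith

/-- monotonicity on an initial segment -/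
lemma mono_seg {u : ℕ → ℝ} {M : ℕ} (h : ∀ i, i < M → u i ≤ u (i+1)) :
    ∀ i j, i ≤ j → j ≤ M → u i ≤ u j := by
  intro i j hij hjM
  induction j with
  | zero => simp [Nat.le_zero.mp hij]
  | succ k ih =>
    rcases Nat.lt_or_ge i (k+1) with h1 | h1
    · exact (ih (Nat.lt_succ_iff.mp h1) (le_of_lt hjM)).trans (h k hjM)
    · have : i = k + 1 := le_antisymm hij h1
      simp [this]

/-- Chain estimate: sum of skip-one controls is at most two controls. -/
lemma chain_sum {ω : ℝ → ℝ → ℝ} (hω : IsControl ω) :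
    ∀ (N : ℕ) (u : ℕ → ℝ), 0 ≤ u 0 → u (N+1) ≤ 1 → (∀ i, i < N + 1 → u i ≤ u (i+1)) →
    ∑ j ∈ Finset.range N, ω (u j) (u (j+2)) ≤ ω (u 0) (u N) + ω (u 0) (u (N+1)) := by
  intro N
  induction N with
  | zero =>
    intro u h0 h1 hm
    have := hω.2.1 (u 0) h0 ((hm 0 (by norm_num)).trans h1)
    simp [this]
    exact hω.2.2.1 (u 0) (u 1) h0 (hm 0 (by norm_num)) h1
  | succ N ih =>
    intro u h0 h1 hm
    have hm' : ∀ i, i < N + 1 → u i ≤ u (i+1) := fun i hi => hm i (by omega)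
    have hmono := mono_seg (M := N + 2) hm
    have hN1 : u (N+1) ≤ 1 := (hmono (N+1) (N+2) (by omega) le_rfl).trans h1
    have hIH := ih u h0 hN1 hm'
    rw [Finset.sum_range_succ]
    have key : ω (u 0) (u N) + ω (u N) (u (N+2)) ≤ ω (u 0) (u (N+2)) :=
      hω.2.2.2 (u 0) (u N) (u (N+2)) h0 (hmono 0 N (by omega) (by omega))
        (hmono N (N+2) (by omega) le_rfl) h1
    have mono2 : ω (u 0) (u (N+1)) ≤ ω (u 0) (u (N+2)) :=
      omega_sub hω h0 le_rfl (hmono 0 (N+1) (by omega) (by omega))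
        (hmono (N+1) (N+2) (by omega) le_rfl) h1
    linarith

variable {E : Type*} [NormedAddCommGroup E]

/-- Removing interior point `u (k+1)` from a partition sum. -/
lemma remove_point_sum (Ξ : ℝ → ℝ → E) (u : ℕ → ℝ) (N k : ℕ) (hk : k < N) :
    ∑ i ∈ Finset.range (N+1), Ξ (u i) (u (i+1))
      = (∑ i ∈ Finset.range N,
          Ξ ((fun i => if i ≤ k then u i else u (i+1)) i)
            ((fun i => if i ≤ k then u i else u (i+1)) (i+1)))
        + (Ξ (u k) (u (k+1)) + Ξ (u (k+1)) (u (k+2)) - Ξ (u k) (u (k+2))) := by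
  set v : ℕ → ℝ := fun i => if i ≤ k then u i else u (i+1) with hv
  set f : ℕ → E := fun i => Ξ (u i) (u (i+1)) with hf
  set g : ℕ → E := fun i => Ξ (v i) (v (i+1)) with hgdef
  have hglt : ∀ i, i < k → g i = f i := by
    intro i h
    simp only [hgdef, hv, hf, if_pos h.le, if_pos (Nat.succ_le_of_lt h)]
  have hgk : g k = Ξ (u k) (u (k+2)) := by
    simp [hgdef, hv]
  have hggt : ∀ i, k < i → g i = f (i+1) := by
    intro i h
    simp only [hgdef, hv, hf, if_neg (Nat.not_le.mpr h),
      if_neg (Nat.not_le.mpr (Nat.lt_succ_of_lt h))]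
  have split1 : ∑ i ∈ Finset.range N, g i
      = ((∑ i ∈ Finset.range k, f i) + Ξ (u k) (u (k+2)))
        + ∑ i ∈ Finset.Ico (k+1) N, f (i+1) := by
    rw [Finset.range_eq_Ico, ← Finset.sum_Ico_consecutive g (Nat.zero_le (k+1)) hk]
    congr 1
    · rw [← Finset.range_eq_Ico, Finset.sum_range_succ, hgk]
      congr 1
      exact Finset.sum_congr rfl fun i hi => hglt i (Finset.mem_range.mp hi)
    · exact Finset.sum_congr rfl fun i hi => hggt i (Finset.mem_Ico.mp hi).1
  have split2 : ∑ i ∈ Finset.range (N+1), f i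
      = ((∑ i ∈ Finset.range k, f i) + f k + f (k+1))
        + ∑ i ∈ Finset.Ico (k+1) N, f (i+1) := by
    have h1 : ∑ i ∈ Finset.Ico (k+1) N, f (i+1) = ∑ i ∈ Finset.Ico (k+2) (N+1), f i := by
      rw [Finset.sum_Ico_eq_sum_range, Finset.sum_Ico_eq_sum_range]
      have : N + 1 - (k + 2) = N - (k+1) := by omega
      rw [this]
      exact Finset.sum_congr rfl fun i _ => by ring_nf
    rw [h1, Finset.range_eq_Ico,
      ← Finset.sum_Ico_consecutive f (Nat.zero_le (k+1)) (by omega : k + 1 ≤ N + 1),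
      Finset.sum_eq_sum_Ico_succ_bot (by omega : k + 1 < N + 1) f,
      ← Finset.range_eq_Ico, Finset.sum_range_succ]
    abel
  rw [split2, split1]
  abel

lemma discrete_sewing {ω : ℝ → ℝ → ℝ} (hω : IsControl ω) (Ξ : ℝ → ℝ → E) {s t θ M : ℝ}
    (hs : 0 ≤ s) (ht : t ≤ 1) (hθ : 0 ≤ θ) (hM : 0 ≤ M)
    (hδ : ∀ a b c, s ≤ a → a ≤ b → b ≤ c → c ≤ t →
      ‖Ξ a c - Ξ a b - Ξ b c‖ ≤ M * ω a c ^ θ) :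
    ∀ (N : ℕ) (u : ℕ → ℝ), u 0 = s → u (N+1) = t → (∀ i, i < N+1 → u i ≤ u (i+1)) →
      ‖(∑ i ∈ Finset.range (N+1), Ξ (u i) (u (i+1))) - Ξ s t‖
        ≤ M * ∑ k ∈ Finset.range N, (2 * ω s t / ((k : ℝ)+1)) ^ θ := by
  intro N
  induction N with
  | zero =>
    intro u h0 h1 _
    simp [h0, h1]
  | succ N ih =>
    intro u h0 h1 hm
    have hmono := mono_seg (M := N + 2) hm
    have hu0 : (0:ℝ) ≤ u 0 := h0 ▸ hs
    have huN2 : u (N+2) ≤ 1 := h1 ▸ ht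
    have hst : s ≤ t := by rw [← h0, ← h1]; exact hmono 0 (N+2) (by omega) le_rfl
    have hωst : 0 ≤ ω s t := hω.2.2.1 s t hs hst ht
    obtain ⟨k, hkmem, hkmin⟩ := Finset.exists_min_image (Finset.range (N+1))
      (fun j => ω (u j) (u (j+2))) (Finset.nonempty_range_iff.mpr (Nat.succ_ne_zero N))
    have hk : k < N + 1 := Finset.mem_range.mp hkmem
    have hchain : ∑ j ∈ Finset.range (N+1), ω (u j) (u (j+2)) ≤ 2 * ω s t := by
      have := chain_sum hω (N+1) u hu0 huN2 (fun i hi => hm i (by omega))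
      have h1' : ω (u 0) (u (N+1)) ≤ ω s t := by
        rw [← h0, ← h1]
        exact omega_sub hω hu0 le_rfl (hmono 0 (N+1) (by omega) (by omega))
          (hmono (N+1) (N+2) (by omega) le_rfl) huN2
      have h2' : ω (u 0) (u (N+2)) = ω s t := by rw [h0, h1]
      linarith
    have hkbound : ω (u k) (u (k+2)) ≤ 2 * ω s t / ((N:ℝ)+1) := by
      have hcard := Finset.card_nsmul_le_sum (Finset.range (N+1))
        (fun j => ω (u j) (u (j+2))) (ω (u k) (u (k+2))) (fun x hx => hkmin x hx)
      rw [Finset.card_range, nsmul_eq_mul] at hcard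
      rw [le_div_iff₀ (by positivity)]
      push_cast at hcard ⊢
      linarith
    set v : ℕ → ℝ := fun i => if i ≤ k then u i else u (i+1) with hv
    have hv0 : v 0 = s := by simp [hv, h0]
    have hvN : v (N+1) = t := by
      rw [hv]; simp only [if_neg (by omega : ¬ N + 1 ≤ k)]; exact h1
    have hvm : ∀ i, i < N + 1 → v i ≤ v (i+1) := by
      intro i hi
      rcases lt_trichotomy i k with h | h | h
      · simp only [hv, if_pos h.le, if_pos (Nat.succ_le_of_lt h)]
        exact hm i (by omega)
      · subst h
        simp only [hv, if_pos le_rfl, if_neg (by omega : ¬ i + 1 ≤ i)]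
        exact hmono i (i+2) (by omega) (by omega)
      · simp only [hv, if_neg (by omega : ¬ i ≤ k), if_neg (by omega : ¬ i + 1 ≤ k)]
        exact hm (i+1) (by omega)
    have hIH := ih v hv0 hvN hvm
    have hrm := remove_point_sum Ξ u (N+1) k hk
    have hterm : ‖Ξ (u k) (u (k+1)) + Ξ (u (k+1)) (u (k+2)) - Ξ (u k) (u (k+2))‖
        ≤ M * (2 * ω s t / ((N:ℝ)+1)) ^ θ := by
      have h₁ : ‖Ξ (u k) (u (k+1)) + Ξ (u (k+1)) (u (k+2)) - Ξ (u k) (u (k+2))‖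
          = ‖Ξ (u k) (u (k+2)) - Ξ (u k) (u (k+1)) - Ξ (u (k+1)) (u (k+2))‖ := by
        rw [← norm_neg]; congr 1; abel
      rw [h₁]
      refine (hδ (u k) (u (k+1)) (u (k+2)) (h0 ▸ hmono 0 k (by omega) (by omega))
        (hmono k (k+1) (by omega) (by omega)) (hmono (k+1) (k+2) (by omega) (by omega))
        (h1 ▸ hmono (k+2) (N+2) (by omega) le_rfl)).trans ?_
      have hnn : 0 ≤ ω (u k) (u (k+2)) :=
        hω.2.2.1 _ _ (hu0.trans (hmono 0 k (by omega) (by omega)))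
          (hmono k (k+2) (by omega) (by omega))
          ((hmono (k+2) (N+2) (by omega) le_rfl).trans huN2)
      exact mul_le_mul_of_nonneg_left (Real.rpow_le_rpow hnn hkbound hθ) hM
    calc ‖(∑ i ∈ Finset.range (N+2), Ξ (u i) (u (i+1))) - Ξ s t‖
        ≤ ‖(∑ i ∈ Finset.range (N+1), Ξ (v i) (v (i+1))) - Ξ s t‖
          + ‖Ξ (u k) (u (k+1)) + Ξ (u (k+1)) (u (k+2)) - Ξ (u k) (u (k+2))‖ := by
          rw [hrm]
          exact (norm_add_le _ _).trans_eq' (by congr 1; abel)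
      _ ≤ M * ∑ j ∈ Finset.range N, (2 * ω s t / ((j : ℝ)+1)) ^ θ
          + M * (2 * ω s t / ((N:ℝ)+1)) ^ θ := add_le_add hIH hterm
      _ = M * ∑ j ∈ Finset.range (N+1), (2 * ω s t / ((j : ℝ)+1)) ^ θ := by
          rw [Finset.sum_range_succ]; ring

lemma summable_zeta {θ : ℝ} (hθ : 1 < θ) : Summable (fun n : ℕ => ((n : ℝ) + 1) ^ (-θ)) := by
  have h : Summable (fun n : ℕ => ((n : ℝ)) ^ (-θ)) :=
    Real.summable_nat_rpow.mpr (by linarith)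
  have := (summable_nat_add_iff (f := fun n : ℕ => ((n : ℝ)) ^ (-θ)) 1).mpr h
  refine this.congr fun n => ?_
  push_cast
  rfl

lemma zetaR_nonneg {θ : ℝ} : 0 ≤ zetaR θ :=
  tsum_nonneg fun n => Real.rpow_nonneg (by positivity) _

lemma tail_bound {θ x : ℝ} (hθ : 1 < θ) (hx : 0 ≤ x) (N : ℕ) :
    ∑ k ∈ Finset.range N, (2 * x / ((k : ℝ)+1)) ^ θ ≤ 2 ^ θ * zetaR θ * x ^ θ := by
  have hterm : ∀ k : ℕ, (2 * x / ((k : ℝ)+1)) ^ θ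
      = 2 ^ θ * x ^ θ * ((k : ℝ)+1) ^ (-θ) := by
    intro k
    rw [Real.div_rpow (by positivity) (by positivity), Real.mul_rpow (by norm_num) hx,
      Real.rpow_neg (by positivity), div_eq_mul_inv]
  calc ∑ k ∈ Finset.range N, (2 * x / ((k : ℝ)+1)) ^ θ
      = 2 ^ θ * x ^ θ * ∑ k ∈ Finset.range N, ((k : ℝ)+1) ^ (-θ) := by
        rw [Finset.mul_sum]; exact Finset.sum_congr rfl fun k _ => hterm k
    _ ≤ 2 ^ θ * x ^ θ * zetaR θ := by
        refine mul_le_mul_of_nonneg_left ?_ (by positivity)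
        exact Summable.sum_le_tsum _ (fun k _ => Real.rpow_nonneg (by positivity) _) (summable_zeta hθ)
    _ = 2 ^ θ * zetaR θ * x ^ θ := by ring

lemma fine_subdivision {s t : ℝ} (hst : s ≤ t) {δ : ℝ} (hδ : 0 < δ) :
    ∃ P : Subdivision s t, P.mesh < δ := by
  obtain ⟨n, hn⟩ := exists_nat_gt ((t - s)/δ)
  have hn' : (t - s) / ((n:ℝ) + 1) < δ := by
    rw [div_lt_iff₀ (by positivity)]
    rw [div_lt_iff₀ hδ] at hn
    nlinarith [hδ.le]
  refine ⟨⟨n+1, fun i => s + (t-s) * i / ((n:ℝ)+1), Nat.succ_pos n, by simp, ?_, ?_⟩, ?_⟩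
  · push_cast; field_simp; ring
  · intro i _
    have : s + (t-s) * ((i:ℝ)+1) / ((n:ℝ)+1) - (s + (t-s) * i / ((n:ℝ)+1))
        = (t - s) / ((n:ℝ)+1) := by field_simp; ring
    push_cast
    have hge : 0 ≤ (t-s)/((n:ℝ)+1) := div_nonneg (sub_nonneg.mpr hst) (by positivity)
    linarith
  · rw [Subdivision.mesh, Finset.sup'_lt_iff]
    intro i _
    have heq : s + (t-s) * ((i:ℝ)+1) / ((n:ℝ)+1) - (s + (t-s) * i / ((n:ℝ)+1))
        = (t - s) / ((n:ℝ)+1) := by field_simp; ring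
    simp only
    push_cast
    rw [heq]
    exact hn'

/-- the sewing estimate: any Riemann–Stieltjes-type limit is close to the single increment. -/
lemma young {ω : ℝ → ℝ → ℝ} (hω : IsControl ω) (Ξ : ℝ → ℝ → E) {s t θ M : ℝ}
    (hs : 0 ≤ s) (hst : s ≤ t) (ht : t ≤ 1) (hθ : 1 < θ) (hM : 0 ≤ M)
    (hδ : ∀ a b c, s ≤ a → a ≤ b → b ≤ c → c ≤ t →
      ‖Ξ a c - Ξ a b - Ξ b c‖ ≤ M * ω a c ^ θ)
    (L : E)
    (hlim : ∀ ε > (0:ℝ), ∃ δ > (0:ℝ), ∀ P : Subdivision s t, P.mesh < δ →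
      ‖(∑ i ∈ Finset.range P.N, Ξ (P.pt i) (P.pt (i+1))) - L‖ ≤ ε) :
    ‖L - Ξ s t‖ ≤ M * (2 ^ θ * zetaR θ) * ω s t ^ θ := by
  refine le_of_forall_pos_le_add fun ε hε => ?_
  obtain ⟨δ, hδ0, hP⟩ := hlim ε hε
  obtain ⟨P, hPm⟩ := fine_subdivision hst hδ0
  have hper : ‖(∑ i ∈ Finset.range P.N, Ξ (P.pt i) (P.pt (i+1))) - Ξ s t‖
      ≤ M * (2 ^ θ * zetaR θ) * ω s t ^ θ := by
    obtain ⟨N, pt, pos, first, last, mono⟩ := P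
    obtain ⟨N', rfl⟩ : ∃ N', N = N' + 1 := ⟨N - 1, by omega⟩
    have hds := discrete_sewing hω Ξ hs ht (by linarith) hM hδ N' pt first last mono
    refine hds.trans ?_
    have := tail_bound hθ (hω.2.2.1 s t hs hst ht) N'
    calc M * ∑ k ∈ Finset.range N', (2 * ω s t / ((k : ℝ)+1)) ^ θ
        ≤ M * (2 ^ θ * zetaR θ * ω s t ^ θ) := mul_le_mul_of_nonneg_left this hM
      _ = M * (2 ^ θ * zetaR θ) * ω s t ^ θ := by ring
  have hclose := hP P hPm
  set S := ∑ i ∈ Finset.range P.N, Ξ (P.pt i) (P.pt (i+1)) with hS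
  calc ‖L - Ξ s t‖
      = ‖(L - S) + (S - Ξ s t)‖ := by congr 1; abel
    _ ≤ ‖L - S‖ + ‖S - Ξ s t‖ := norm_add_le _ _
    _ = ‖S - L‖ + ‖S - Ξ s t‖ := by rw [norm_sub_rev]
    _ ≤ ε + M * (2 ^ θ * zetaR θ) * ω s t ^ θ := add_le_add hclose hper
    _ = M * (2 ^ θ * zetaR θ) * ω s t ^ θ + ε := add_comm _ _


lemma mesh_lt_iff {s t : ℝ} (P : Subdivision s t) {δ : ℝ} :
    P.mesh < δ ↔ ∀ i, i < P.N → P.pt (i+1) - P.pt i < δ := by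
  rw [Subdivision.mesh, Finset.sup'_lt_iff]
  constructor
  · intro h i hi; exact h i (Finset.mem_range.mpr hi)
  · intro h i hi; exact h i (Finset.mem_range.mp hi)

/-- Localization: Riemann–Stieltjes sums over `[s,t]` converge to `Lt - Ls`. -/
lemma rs_local {V : Type u} [NormedAddCommGroup V] [NormedSpace ℝ V]
    (Ω G : ℝ → V →L[ℝ] V) {s t : ℝ} (hs : 0 ≤ s) (hst : s ≤ t)
    {Ls Lt : V →L[ℝ] V} (hLs : RSLimit Ω G 0 s Ls) (hLt : RSLimit Ω G 0 t Lt) :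
    ∀ ε > (0:ℝ), ∃ δ > (0:ℝ), ∀ P : Subdivision s t, P.mesh < δ →
      ‖(∑ i ∈ Finset.range P.N, (Ω (P.pt (i+1)) - Ω (P.pt i)).comp (G (P.pt i)))
        - (Lt - Ls)‖ ≤ ε := by
  intro ε hε
  obtain ⟨δ1, hδ1, h1⟩ := hLt (ε/2) (by linarith)
  obtain ⟨δ2, hδ2, h2⟩ := hLs (ε/2) (by linarith)
  refine ⟨min δ1 δ2, lt_min hδ1 hδ2, ?_⟩
  intro P hP
  obtain ⟨Q, hQ⟩ := fine_subdivision hs (lt_min hδ1 hδ2)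
  -- concatenated partition of [0, t]
  set rpt : ℕ → ℝ := fun i => if i < Q.N then Q.pt i else P.pt (i - Q.N) with hrpt
  have hrQ : ∀ j, j ≤ Q.N → rpt j = Q.pt j := by
    intro j hj
    rcases lt_or_eq_of_le hj with h | h
    · simp [hrpt, h]
    · subst h
      simp [hrpt, Q.last, P.first.symm]
  have hrP : ∀ j, rpt (Q.N + j) = P.pt j := by
    intro j
    simp only [hrpt, if_neg (by omega : ¬ Q.N + j < Q.N)]
    congr 1
    omega
  have hmono : ∀ i, i < Q.N + P.N → rpt i ≤ rpt (i+1) := by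
    intro i hi
    rcases Nat.lt_or_ge (i+1) Q.N with h | h
    · rw [hrQ i (by omega), hrQ (i+1) (by omega)]
      exact Q.mono i (by omega)
    · rcases Nat.lt_or_ge i Q.N with h' | h'
      · have : i + 1 = Q.N := by omega
        rw [hrQ i (by omega), hrQ (i+1) (by omega)]
        exact Q.mono i h'
      · obtain ⟨j, rfl⟩ : ∃ j, i = Q.N + j := ⟨i - Q.N, by omega⟩
        rw [hrP j, show Q.N + j + 1 = Q.N + (j+1) from rfl, hrP (j+1)]
        exact P.mono j (by omega)
  set R : Subdivision 0 t :=
    ⟨Q.N + P.N, rpt, by have := Q.pos; omega,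
      by rw [hrQ 0 (Nat.zero_le _), Q.first],
      by rw [show Q.N + P.N = Q.N + P.N from rfl, hrP P.N, P.last], hmono⟩ with hR
  have hRmesh : R.mesh < δ1 := by
    rw [mesh_lt_iff]
    intro i hi
    have hQm := (mesh_lt_iff Q).mp hQ
    have hPm := (mesh_lt_iff P).mp hP
    show rpt (i+1) - rpt i < δ1
    rcases Nat.lt_or_ge i Q.N with h' | h'
    · rw [hrQ i (by omega), hrQ (i+1) (by omega)]
      exact lt_of_lt_of_le (hQm i h') (min_le_left _ _)
    · obtain ⟨j, rfl⟩ : ∃ j, i = Q.N + j := ⟨i - Q.N, by omega⟩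
      rw [hrP j, show Q.N + j + 1 = Q.N + (j+1) from rfl, hrP (j+1)]
      exact lt_of_lt_of_le (hPm j (by have hi' : Q.N + j < Q.N + P.N := hi; omega)) (min_le_left _ _)
  have hQmesh : Q.mesh < δ2 := lt_of_lt_of_le hQ (min_le_right _ _)
  have hRsum : (∑ i ∈ Finset.range R.N, (Ω (R.pt (i+1)) - Ω (R.pt i)).comp (G (R.pt i)))
      = (∑ i ∈ Finset.range Q.N, (Ω (Q.pt (i+1)) - Ω (Q.pt i)).comp (G (Q.pt i)))
        + (∑ i ∈ Finset.range P.N, (Ω (P.pt (i+1)) - Ω (P.pt i)).comp (G (P.pt i))) := by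
    show (∑ i ∈ Finset.range (Q.N + P.N), (Ω (rpt (i+1)) - Ω (rpt i)).comp (G (rpt i))) = _
    rw [Finset.sum_range_add]
    congr 1
    · refine Finset.sum_congr rfl fun i hi => ?_
      have hi' := Finset.mem_range.mp hi
      rw [hrQ i (by omega), hrQ (i+1) (by omega)]
    · refine Finset.sum_congr rfl fun i hi => ?_
      rw [show Q.N + i + 1 = Q.N + (i+1) from rfl, hrP (i+1), hrP i]
  have hA := h1 R hRmesh
  have hB := h2 Q hQmesh
  rw [hRsum] at hA
  set SQ := ∑ i ∈ Finset.range Q.N, (Ω (Q.pt (i+1)) - Ω (Q.pt i)).comp (G (Q.pt i)) with hSQ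
  set SP := ∑ i ∈ Finset.range P.N, (Ω (P.pt (i+1)) - Ω (P.pt i)).comp (G (P.pt i)) with hSP
  calc ‖SP - (Lt - Ls)‖ = ‖(SQ + SP - Lt) - (SQ - Ls)‖ := by congr 1; abel
    _ ≤ ‖SQ + SP - Lt‖ + ‖SQ - Ls‖ := norm_sub_le _ _
    _ ≤ ε/2 + ε/2 := add_le_add hA hB
    _ = ε := by ring

lemma rpow_two_div {q x : ℝ} (hq : 0 < q) (hx : 0 ≤ x) :
    x ^ ((2:ℝ)/q) = x ^ ((1:ℝ)/q) * x ^ ((1:ℝ)/q) := by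
  rcases hx.eq_or_lt with h | h
  · rw [← h, Real.zero_rpow (by positivity), Real.zero_rpow (by positivity), mul_zero]
  · rw [← Real.rpow_add h]
    congr 1
    ring

/-- one-step Hölder estimate for `J r = ∫_0^r dΩ · G`. -/
lemma step_single {V : Type u} [NormedAddCommGroup V] [NormedSpace ℝ V]
    {ω : ℝ → ℝ → ℝ} (hω : IsControl ω) {q T : ℝ} (hq1 : 1 ≤ q) (hq2 : q < 2) (hT1 : T ≤ 1)
    (Ω : ℝ → V →L[ℝ] V)
    (hΩ : ∀ s t, 0 ≤ s → s ≤ t → t ≤ 1 → ‖Ω t - Ω s‖ ≤ ω s t ^ (1/q))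
    (G : ℝ → V →L[ℝ] V) {C B : ℝ} (hC : 0 ≤ C) (hB : 0 ≤ B)
    (hG : ∀ a b, 0 ≤ a → a ≤ b → b ≤ T → ‖G b - G a‖ ≤ C * ω a b ^ (1/q))
    (hGpt : ∀ a, 0 ≤ a → a ≤ T → ‖G a‖ ≤ B)
    (J : ℝ → V →L[ℝ] V)
    (hJ : ∀ r, 0 ≤ r → r ≤ T → RSLimit Ω G 0 r (J r)) :
    ∀ s t, 0 ≤ s → s ≤ t → t ≤ T →
      ‖J t - J s‖ ≤ (B + C * (2 ^ ((2:ℝ)/q) * zetaR (2/q)) * ω 0 T ^ (1/q)) * ω s t ^ (1/q) := by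
  intro s t hs hst htT
  have hq0 : (0:ℝ) < q := lt_of_lt_of_le one_pos hq1
  have ht1 : t ≤ 1 := htT.trans hT1
  have hθ : 1 < 2/q := (one_lt_div hq0).mpr hq2
  set Ξ : ℝ → ℝ → (V →L[ℝ] V) := fun a b => (Ω b - Ω a).comp (G a) with hΞ
  have hδb : ∀ a b c, s ≤ a → a ≤ b → b ≤ c → c ≤ t →
      ‖Ξ a c - Ξ a b - Ξ b c‖ ≤ C * ω a c ^ ((2:ℝ)/q) := by
    intro a b c hsa hab hbc hct
    have h0a : 0 ≤ a := hs.trans hsa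
    have hc1 : c ≤ 1 := hct.trans ht1
    have hid : Ξ a c - Ξ a b - Ξ b c = (Ω c - Ω b).comp (G a - G b) := by
      simp only [hΞ, ContinuousLinearMap.sub_comp, ContinuousLinearMap.comp_sub]
      abel
    rw [hid]
    have h1 : ‖Ω c - Ω b‖ ≤ ω b c ^ (1/q) :=
      hΩ b c (h0a.trans hab) hbc hc1
    have h2 : ‖G a - G b‖ ≤ C * ω a b ^ (1/q) := by
      rw [norm_sub_rev]
      exact hG a b h0a hab (hbc.trans (hct.trans htT))
    have hωnn : ∀ x y, 0 ≤ x → x ≤ y → y ≤ 1 → 0 ≤ ω x y := hω.2.2.1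
    have hbc' : ω b c ≤ ω a c := omega_sub hω h0a hab hbc le_rfl hc1
    have hab' : ω a b ≤ ω a c := omega_sub hω h0a le_rfl hab hbc hc1
    have hnn_ab : 0 ≤ ω a b := hωnn a b h0a hab ((hbc.trans hct).trans ht1)
    have hnn_bc : 0 ≤ ω b c := hωnn b c (h0a.trans hab) hbc hc1
    have r1 : ω b c ^ ((1:ℝ)/q) ≤ ω a c ^ ((1:ℝ)/q) :=
      Real.rpow_le_rpow hnn_bc hbc' (by positivity)
    have r2 : ω a b ^ ((1:ℝ)/q) ≤ ω a c ^ ((1:ℝ)/q) :=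
      Real.rpow_le_rpow hnn_ab hab' (by positivity)
    calc ‖(Ω c - Ω b).comp (G a - G b)‖
        ≤ ‖Ω c - Ω b‖ * ‖G a - G b‖ := ContinuousLinearMap.opNorm_comp_le _ _
      _ ≤ ω b c ^ (1/q) * (C * ω a b ^ (1/q)) :=
          mul_le_mul h1 h2 (norm_nonneg _) (Real.rpow_nonneg hnn_bc _)
      _ ≤ ω a c ^ (1/q) * (C * ω a c ^ (1/q)) :=
          mul_le_mul r1 (mul_le_mul_of_nonneg_left r2 hC)
            (mul_nonneg hC (Real.rpow_nonneg hnn_ab _))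
            (Real.rpow_nonneg (hωnn a c h0a (hab.trans hbc) hc1) _)
      _ = C * ω a c ^ ((2:ℝ)/q) := by
          rw [rpow_two_div hq0 (hωnn a c h0a (hab.trans hbc) hc1)]
          ring
  have hyoung := young hω Ξ hs hst ht1 hθ hC hδb (J t - J s)
    (rs_local Ω G hs hst (hJ s hs (hst.trans htT)) (hJ t (hs.trans hst) htT))
  have hωst_nn : 0 ≤ ω s t := hω.2.2.1 s t hs hst ht1
  have hΞst : ‖Ξ s t‖ ≤ ω s t ^ ((1:ℝ)/q) * B := by
    calc ‖(Ω t - Ω s).comp (G s)‖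
        ≤ ‖Ω t - Ω s‖ * ‖G s‖ := ContinuousLinearMap.opNorm_comp_le _ _
      _ ≤ ω s t ^ (1/q) * B :=
          mul_le_mul (hΩ s t hs hst ht1) (hGpt s hs (hst.trans htT)) (norm_nonneg _)
            (Real.rpow_nonneg hωst_nn _)
  have hωθ : ω s t ^ ((2:ℝ)/q) ≤ ω 0 T ^ ((1:ℝ)/q) * ω s t ^ ((1:ℝ)/q) := by
    rw [rpow_two_div hq0 hωst_nn]
    refine mul_le_mul_of_nonneg_right ?_ (Real.rpow_nonneg hωst_nn _)
    exact Real.rpow_le_rpow hωst_nn (omega_sub hω le_rfl hs hst htT hT1) (by positivity)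
  have hZnn : 0 ≤ 2 ^ ((2:ℝ)/q) * zetaR (2/q) :=
    mul_nonneg (Real.rpow_nonneg (by norm_num) _) zetaR_nonneg
  calc ‖J t - J s‖
      = ‖Ξ s t + ((J t - J s) - Ξ s t)‖ := by congr 1; abel
    _ ≤ ‖Ξ s t‖ + ‖(J t - J s) - Ξ s t‖ := norm_add_le _ _
    _ ≤ ω s t ^ ((1:ℝ)/q) * B + C * (2 ^ ((2:ℝ)/q) * zetaR (2/q)) * ω s t ^ ((2:ℝ)/q) :=
        add_le_add hΞst hyoung
    _ ≤ (B + C * (2 ^ ((2:ℝ)/q) * zetaR (2/q)) * ω 0 T ^ (1/q)) * ω s t ^ (1/q) := by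
        have hmul := mul_le_mul_of_nonneg_left hωθ (mul_nonneg hC hZnn)
        nlinarith

/-- one-step difference estimate for two nearby integrals. -/
lemma step_diff {V : Type u} [NormedAddCommGroup V] [NormedSpace ℝ V]
    {ω : ℝ → ℝ → ℝ} (hω : IsControl ω) {q T ε : ℝ} (hq1 : 1 ≤ q) (hq2 : q < 2) (hT1 : T ≤ 1)
    (hε : 0 ≤ ε)
    (Ω Ωh : ℝ → V →L[ℝ] V)
    (hΩh : ∀ s t, 0 ≤ s → s ≤ t → t ≤ 1 → ‖Ωh t - Ωh s‖ ≤ ω s t ^ (1/q))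
    (hd : ∀ s t, 0 ≤ s → s ≤ t → t ≤ 1 → ‖(Ω t - Ω s) - (Ωh t - Ωh s)‖ ≤ ε * ω s t ^ (1/q))
    (G Gh : ℝ → V →L[ℝ] V) {C B D Dp : ℝ}
    (hC : 0 ≤ C) (hB : 0 ≤ B) (hD : 0 ≤ D) (hDp : 0 ≤ Dp)
    (hG : ∀ a b, 0 ≤ a → a ≤ b → b ≤ T → ‖G b - G a‖ ≤ C * ω a b ^ (1/q))
    (hGpt : ∀ a, 0 ≤ a → a ≤ T → ‖G a‖ ≤ B)
    (hGd : ∀ a b, 0 ≤ a → a ≤ b → b ≤ T →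
      ‖(G b - G a) - (Gh b - Gh a)‖ ≤ D * ω a b ^ (1/q))
    (hGdpt : ∀ a, 0 ≤ a → a ≤ T → ‖G a - Gh a‖ ≤ Dp)
    (J Jh : ℝ → V →L[ℝ] V)
    (hJ : ∀ r, 0 ≤ r → r ≤ T → RSLimit Ω G 0 r (J r))
    (hJh : ∀ r, 0 ≤ r → r ≤ T → RSLimit Ωh Gh 0 r (Jh r)) :
    ∀ s t, 0 ≤ s → s ≤ t → t ≤ T →
      ‖(J t - J s) - (Jh t - Jh s)‖
        ≤ (ε * B + Dp + (ε * C + D) * (2 ^ ((2:ℝ)/q) * zetaR (2/q)) * ω 0 T ^ (1/q))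
            * ω s t ^ (1/q) := by
  intro s t hs hst htT
  have hq0 : (0:ℝ) < q := lt_of_lt_of_le one_pos hq1
  have ht1 : t ≤ 1 := htT.trans hT1
  have hθ : 1 < 2/q := (one_lt_div hq0).mpr hq2
  have hωnn : ∀ x y, 0 ≤ x → x ≤ y → y ≤ 1 → 0 ≤ ω x y := hω.2.2.1
  set Ξ : ℝ → ℝ → (V →L[ℝ] V) :=
    fun a b => (Ω b - Ω a).comp (G a) - (Ωh b - Ωh a).comp (Gh a) with hΞ
  have hδb : ∀ a b c, s ≤ a → a ≤ b → b ≤ c → c ≤ t →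
      ‖Ξ a c - Ξ a b - Ξ b c‖ ≤ (ε * C + D) * ω a c ^ ((2:ℝ)/q) := by
    intro a b c hsa hab hbc hct
    have h0a : 0 ≤ a := hs.trans hsa
    have hc1 : c ≤ 1 := hct.trans ht1
    have hid : Ξ a c - Ξ a b - Ξ b c
        = ((Ω c - Ω b) - (Ωh c - Ωh b)).comp (G a - G b)
          + (Ωh c - Ωh b).comp ((G a - G b) - (Gh a - Gh b)) := by
      simp only [hΞ, ContinuousLinearMap.sub_comp, ContinuousLinearMap.comp_sub]
      abel
    rw [hid]
    have hbT : b ≤ T := hbc.trans (hct.trans htT)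
    have h1 : ‖(Ω c - Ω b) - (Ωh c - Ωh b)‖ ≤ ε * ω b c ^ (1/q) :=
      hd b c (h0a.trans hab) hbc hc1
    have h2 : ‖G a - G b‖ ≤ C * ω a b ^ (1/q) := by
      rw [norm_sub_rev]; exact hG a b h0a hab hbT
    have h3 : ‖Ωh c - Ωh b‖ ≤ ω b c ^ (1/q) := hΩh b c (h0a.trans hab) hbc hc1
    have h4 : ‖(G a - G b) - (Gh a - Gh b)‖ ≤ D * ω a b ^ (1/q) := by
      rw [show (G a - G b) - (Gh a - Gh b) = -((G b - G a) - (Gh b - Gh a)) from by abel,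
        norm_neg]
      exact hGd a b h0a hab hbT
    have hbc' : ω b c ≤ ω a c := omega_sub hω h0a hab hbc le_rfl hc1
    have hab' : ω a b ≤ ω a c := omega_sub hω h0a le_rfl hab hbc hc1
    have hnn_ab : 0 ≤ ω a b := hωnn a b h0a hab (hbT.trans hT1)
    have hnn_bc : 0 ≤ ω b c := hωnn b c (h0a.trans hab) hbc hc1
    have hnn_ac : 0 ≤ ω a c := hωnn a c h0a (hab.trans hbc) hc1
    have r1 : ω b c ^ ((1:ℝ)/q) ≤ ω a c ^ ((1:ℝ)/q) :=
      Real.rpow_le_rpow hnn_bc hbc' (by positivity)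
    have r2 : ω a b ^ ((1:ℝ)/q) ≤ ω a c ^ ((1:ℝ)/q) :=
      Real.rpow_le_rpow hnn_ab hab' (by positivity)
    have e1 : ‖((Ω c - Ω b) - (Ωh c - Ωh b)).comp (G a - G b)‖
        ≤ (ε * ω a c ^ (1/q)) * (C * ω a c ^ (1/q)) := by
      refine (ContinuousLinearMap.opNorm_comp_le _ _).trans ?_
      refine mul_le_mul (h1.trans ?_) (h2.trans ?_) (norm_nonneg _) (by positivity)
      · exact mul_le_mul_of_nonneg_left r1 hε
      · exact mul_le_mul_of_nonneg_left r2 hC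
    have e2 : ‖(Ωh c - Ωh b).comp ((G a - G b) - (Gh a - Gh b))‖
        ≤ (ω a c ^ (1/q)) * (D * ω a c ^ (1/q)) := by
      refine (ContinuousLinearMap.opNorm_comp_le _ _).trans ?_
      refine mul_le_mul (h3.trans r1) (h4.trans ?_) (norm_nonneg _) (by positivity)
      exact mul_le_mul_of_nonneg_left r2 hD
    calc ‖((Ω c - Ω b) - (Ωh c - Ωh b)).comp (G a - G b)
          + (Ωh c - Ωh b).comp ((G a - G b) - (Gh a - Gh b))‖
        ≤ ‖((Ω c - Ω b) - (Ωh c - Ωh b)).comp (G a - G b)‖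
          + ‖(Ωh c - Ωh b).comp ((G a - G b) - (Gh a - Gh b))‖ := norm_add_le _ _
      _ ≤ (ε * ω a c ^ (1/q)) * (C * ω a c ^ (1/q))
          + (ω a c ^ (1/q)) * (D * ω a c ^ (1/q)) := add_le_add e1 e2
      _ = (ε * C + D) * ω a c ^ ((2:ℝ)/q) := by
          rw [rpow_two_div hq0 hnn_ac]; ring
  have hlim : ∀ ε' > (0:ℝ), ∃ δ > (0:ℝ), ∀ P : Subdivision s t, P.mesh < δ →
      ‖(∑ i ∈ Finset.range P.N, Ξ (P.pt i) (P.pt (i+1)))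
        - ((J t - J s) - (Jh t - Jh s))‖ ≤ ε' := by
    intro ε' hε'
    obtain ⟨δ1, hδ1, h1⟩ := rs_local Ω G hs hst (hJ s hs (hst.trans htT)) (hJ t (hs.trans hst) htT)
      (ε'/2) (by linarith)
    obtain ⟨δ2, hδ2, h2⟩ := rs_local Ωh Gh hs hst (hJh s hs (hst.trans htT)) (hJh t (hs.trans hst) htT)
      (ε'/2) (by linarith)
    refine ⟨min δ1 δ2, lt_min hδ1 hδ2, fun P hP => ?_⟩
    have hsplit : (∑ i ∈ Finset.range P.N, Ξ (P.pt i) (P.pt (i+1)))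
        = (∑ i ∈ Finset.range P.N, (Ω (P.pt (i+1)) - Ω (P.pt i)).comp (G (P.pt i)))
          - ∑ i ∈ Finset.range P.N, (Ωh (P.pt (i+1)) - Ωh (P.pt i)).comp (Gh (P.pt i)) := by
      rw [← Finset.sum_sub_distrib]
    rw [hsplit]
    have hA := h1 P (lt_of_lt_of_le hP (min_le_left _ _))
    have hB' := h2 P (lt_of_lt_of_le hP (min_le_right _ _))
    calc ‖((∑ i ∈ Finset.range P.N, (Ω (P.pt (i+1)) - Ω (P.pt i)).comp (G (P.pt i)))
          - ∑ i ∈ Finset.range P.N, (Ωh (P.pt (i+1)) - Ωh (P.pt i)).comp (Gh (P.pt i)))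
          - ((J t - J s) - (Jh t - Jh s))‖
        = ‖((∑ i ∈ Finset.range P.N, (Ω (P.pt (i+1)) - Ω (P.pt i)).comp (G (P.pt i)))
            - (J t - J s))
          - ((∑ i ∈ Finset.range P.N, (Ωh (P.pt (i+1)) - Ωh (P.pt i)).comp (Gh (P.pt i)))
            - (Jh t - Jh s))‖ := by congr 1; abel
      _ ≤ ε'/2 + ε'/2 := (norm_sub_le _ _).trans (add_le_add hA hB')
      _ = ε' := by ring
  have hyoung := young hω Ξ hs hst ht1 hθ (by positivity) hδb
    ((J t - J s) - (Jh t - Jh s)) hlim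
  have hωst_nn : 0 ≤ ω s t := hωnn s t hs hst ht1
  have hΞst : ‖Ξ s t‖ ≤ (ε * B + Dp) * ω s t ^ ((1:ℝ)/q) := by
    have hid : Ξ s t = ((Ω t - Ω s) - (Ωh t - Ωh s)).comp (G s)
        + (Ωh t - Ωh s).comp (G s - Gh s) := by
      simp only [hΞ, ContinuousLinearMap.sub_comp, ContinuousLinearMap.comp_sub]
      abel
    rw [hid]
    have e1 : ‖((Ω t - Ω s) - (Ωh t - Ωh s)).comp (G s)‖ ≤ (ε * ω s t ^ (1/q)) * B :=
      (ContinuousLinearMap.opNorm_comp_le _ _).trans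
        (mul_le_mul (hd s t hs hst ht1) (hGpt s hs (hst.trans htT)) (norm_nonneg _)
          (by positivity))
    have e2 : ‖(Ωh t - Ωh s).comp (G s - Gh s)‖ ≤ ω s t ^ (1/q) * Dp :=
      (ContinuousLinearMap.opNorm_comp_le _ _).trans
        (mul_le_mul (hΩh s t hs hst ht1) (hGdpt s hs (hst.trans htT)) (norm_nonneg _)
          (Real.rpow_nonneg hωst_nn _))
    calc ‖((Ω t - Ω s) - (Ωh t - Ωh s)).comp (G s) + (Ωh t - Ωh s).comp (G s - Gh s)‖
        ≤ ‖((Ω t - Ω s) - (Ωh t - Ωh s)).comp (G s)‖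
          + ‖(Ωh t - Ωh s).comp (G s - Gh s)‖ := norm_add_le _ _
      _ ≤ (ε * ω s t ^ (1/q)) * B + ω s t ^ (1/q) * Dp := add_le_add e1 e2
      _ = (ε * B + Dp) * ω s t ^ ((1:ℝ)/q) := by ring
  have hωθ : ω s t ^ ((2:ℝ)/q) ≤ ω 0 T ^ ((1:ℝ)/q) * ω s t ^ ((1:ℝ)/q) := by
    rw [rpow_two_div hq0 hωst_nn]
    refine mul_le_mul_of_nonneg_right ?_ (Real.rpow_nonneg hωst_nn _)
    exact Real.rpow_le_rpow hωst_nn (omega_sub hω le_rfl hs hst htT hT1) (by positivity)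
  have hZnn : 0 ≤ 2 ^ ((2:ℝ)/q) * zetaR (2/q) :=
    mul_nonneg (Real.rpow_nonneg (by norm_num) _) zetaR_nonneg
  calc ‖(J t - J s) - (Jh t - Jh s)‖
      = ‖Ξ s t + (((J t - J s) - (Jh t - Jh s)) - Ξ s t)‖ := by congr 1; abel
    _ ≤ ‖Ξ s t‖ + ‖((J t - J s) - (Jh t - Jh s)) - Ξ s t‖ := norm_add_le _ _
    _ ≤ (ε * B + Dp) * ω s t ^ ((1:ℝ)/q)
        + (ε * C + D) * (2 ^ ((2:ℝ)/q) * zetaR (2/q)) * ω s t ^ ((2:ℝ)/q) :=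
        add_le_add hΞst hyoung
    _ ≤ (ε * B + Dp + (ε * C + D) * (2 ^ ((2:ℝ)/q) * zetaR (2/q)) * ω 0 T ^ (1/q))
          * ω s t ^ (1/q) := by
        have hmul := mul_le_mul_of_nonneg_left hωθ
          (mul_nonneg (add_nonneg (mul_nonneg hε hC) hD) hZnn)
        nlinarith

end St5

/-- If `Ω` and `Ω̂` are `ε`-close in the controlled sense, their iterated
Young integrals satisfy `‖(I^n_t − I^n_s) − (Î^n_t − Î^n_s)‖ ≤ ε n K^{n−1} ω(s,t)^{1/q}`. -/
theorem statement5 (q T ε : ℝ) (hq1 : 1 ≤ q) (hq2 : q < 2) (hT0 : 0 < T) (hT1 : T ≤ 1)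
    (hε : 0 ≤ ε)
    (V : Type u) [NormedAddCommGroup V] [NormedSpace ℝ V] [CompleteSpace V]
    (ω : ℝ → ℝ → ℝ) (hω : IsControl ω)
    (Ω Ωh : ℝ → V →L[ℝ] V)
    (hΩ : ∀ s t, 0 ≤ s → s ≤ t → t ≤ 1 → ‖Ω t - Ω s‖ ≤ ω s t ^ (1 / q))
    (hΩh : ∀ s t, 0 ≤ s → s ≤ t → t ≤ 1 → ‖Ωh t - Ωh s‖ ≤ ω s t ^ (1 / q))
    (hdiff : ∀ s t, 0 ≤ s → s ≤ t → t ≤ 1 →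
      ‖(Ω t - Ω s) - (Ωh t - Ωh s)‖ ≤ ε * ω s t ^ (1 / q))
    (I Ih : ℕ → ℝ → V →L[ℝ] V)
    (hI : IsIteratedIntegrals Ω T I) (hIh : IsIteratedIntegrals Ωh T Ih) :
    ∀ n : ℕ, 1 ≤ n → ∀ s t, 0 ≤ s → s ≤ t → t ≤ T →
      ‖(I n t - I n s) - (Ih n t - Ih n s)‖
        ≤ ε * n * (ω 0 T ^ (1 / q) * (1 + 2 ^ ((2 : ℝ) / q) * zetaR (2 / q))) ^ (n - 1)
          * ω s t ^ (1 / q) := by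
  have hq0 : (0:ℝ) < q := lt_of_lt_of_le one_pos hq1
  set A := ω 0 T ^ (1 / q) with hA
  set Z := (2:ℝ) ^ ((2:ℝ)/q) * zetaR (2/q) with hZ
  set K := A * (1 + Z) with hK
  have hAnn : 0 ≤ A := Real.rpow_nonneg (hω.2.2.1 0 T le_rfl hT0.le hT1) _
  have hZnn : 0 ≤ Z := mul_nonneg (Real.rpow_nonneg (by norm_num) _) St5.zetaR_nonneg
  have hKnn : 0 ≤ K := mul_nonneg hAnn (by linarith)
  set Cc : ℕ → ℝ := fun m => if m = 0 then 0 else K ^ (m - 1) with hCc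
  have hCcnn : ∀ m, 0 ≤ Cc m := by
    intro m
    by_cases h : m = 0 <;> simp [hCc, h, pow_nonneg hKnn]
  have main : ∀ m : ℕ,
      (∀ a b, 0 ≤ a → a ≤ b → b ≤ T → ‖I m b - I m a‖ ≤ Cc m * ω a b ^ (1 / q))
      ∧ (∀ a b, 0 ≤ a → a ≤ b → b ≤ T → ‖Ih m b - Ih m a‖ ≤ Cc m * ω a b ^ (1 / q))
      ∧ (∀ a b, 0 ≤ a → a ≤ b → b ≤ T →
          ‖(I m b - I m a) - (Ih m b - Ih m a)‖ ≤ ε * m * K ^ (m - 1) * ω a b ^ (1 / q)) := by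
    intro m
    induction m with
    | zero =>
      refine ⟨?_, ?_, ?_⟩ <;> intro a b ha hab hbT
      · rw [hI.1 b, hI.1 a, sub_self]; simp [hCc]
      · rw [hIh.1 b, hIh.1 a, sub_self]; simp [hCc]
      · rw [hI.1 b, hI.1 a, hIh.1 b, hIh.1 a]; simp
    | succ m ih =>
      obtain ⟨ihI, ihIh, ihd⟩ := ih
      have hωa : ∀ a, 0 ≤ a → a ≤ T → ω 0 a ^ ((1:ℝ)/q) ≤ A := fun a ha haT =>
        Real.rpow_le_rpow (hω.2.2.1 0 a le_rfl ha (haT.trans hT1))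
          (St5.omega_sub hω le_rfl le_rfl ha haT hT1) (by positivity)
      set B : ℝ := if m = 0 then 1 else K ^ (m-1) * A with hB
      have hBnn : 0 ≤ B := by
        by_cases h : m = 0 <;> simp [hB, h]
        positivity
      set D : ℝ := ε * m * K ^ (m - 1) with hD
      have hDnn : 0 ≤ D := by positivity
      set Dp : ℝ := ε * m * K ^ (m - 1) * A with hDp
      have hDpnn : 0 ≤ Dp := by positivity
      have hptI : ∀ a, 0 ≤ a → a ≤ T → ‖I m a‖ ≤ B := by
        intro a ha haT
        cases m with
        | zero => rw [hI.1 a]; simpa [hB] using ContinuousLinearMap.norm_id_le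
        | succ k =>
          have h0 := hI.2.1 k
          have hh := ihI 0 a le_rfl ha haT
          rw [h0, sub_zero] at hh
          refine hh.trans ?_
          have hCc1 : Cc (k+1) = K ^ k := by simp [hCc]
          have hB1 : B = K ^ k * A := by simp [hB]
          rw [hCc1, hB1]
          exact mul_le_mul_of_nonneg_left (hωa a ha haT) (pow_nonneg hKnn _)
      have hptIh : ∀ a, 0 ≤ a → a ≤ T → ‖Ih m a‖ ≤ B := by
        intro a ha haT
        cases m with
        | zero => rw [hIh.1 a]; simpa [hB] using ContinuousLinearMap.norm_id_le
        | succ k =>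
          have h0 := hIh.2.1 k
          have hh := ihIh 0 a le_rfl ha haT
          rw [h0, sub_zero] at hh
          refine hh.trans ?_
          have hCc1 : Cc (k+1) = K ^ k := by simp [hCc]
          have hB1 : B = K ^ k * A := by simp [hB]
          rw [hCc1, hB1]
          exact mul_le_mul_of_nonneg_left (hωa a ha haT) (pow_nonneg hKnn _)
      have hptd : ∀ a, 0 ≤ a → a ≤ T → ‖I m a - Ih m a‖ ≤ Dp := by
        intro a ha haT
        cases m with
        | zero =>
          rw [hI.1 a, hIh.1 a, sub_self]
          simpa [hDp] using hDpnn
        | succ k =>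
          have hh := ihd 0 a le_rfl ha haT
          rw [hI.2.1 k, hIh.2.1 k, sub_zero, sub_zero] at hh
          refine hh.trans ?_
          rw [hDp]
          exact mul_le_mul_of_nonneg_left (hωa a ha haT) (by positivity)
      have hHI := St5.step_single hω hq1 hq2 hT1 Ω hΩ (I m) (hCcnn m) hBnn
        (fun a b ha hab hbT => ihI a b ha hab hbT) hptI (I (m+1))
        (fun r hr hrT => hI.2.2 m r hr hrT)
      have hHIh := St5.step_single hω hq1 hq2 hT1 Ωh hΩh (Ih m) (hCcnn m) hBnn
        (fun a b ha hab hbT => ihIh a b ha hab hbT) hptIh (Ih (m+1))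
        (fun r hr hrT => hIh.2.2 m r hr hrT)
      have hDf := St5.step_diff hω hq1 hq2 hT1 hε Ω Ωh hΩh hdiff (I m) (Ih m)
        (hCcnn m) hBnn hDnn hDpnn
        (fun a b ha hab hbT => ihI a b ha hab hbT) hptI
        (fun a b ha hab hbT => ihd a b ha hab hbT) hptd (I (m+1)) (Ih (m+1))
        (fun r hr hrT => hI.2.2 m r hr hrT) (fun r hr hrT => hIh.2.2 m r hr hrT)
      have hconstH : B + Cc m * Z * A ≤ Cc (m+1) := by
        cases m with
        | zero => simp [hB, hCc]
        | succ k =>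
          have : Cc (k+1+1) = K ^ (k+1) := by simp [hCc]
          rw [this]
          have hB1 : B = K ^ k * A := by simp [hB]
          have hC1 : Cc (k+1) = K ^ k := by simp [hCc]
          rw [hB1, hC1, hK, pow_succ]
          ring_nf
          nlinarith [pow_nonneg hKnn k]
      have hconstD : ε * B + Dp + (ε * Cc m + D) * Z * A ≤ ε * (↑(m+1)) * K ^ m := by
        cases m with
        | zero => simp [hB, hCc, hD, hDp]
        | succ k =>
          have hB1 : B = K ^ k * A := by simp [hB]
          have hC1 : Cc (k+1) = K ^ k := by simp [hCc]
          have hD1 : D = ε * (↑(k+1)) * K ^ k := by simp [hD]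
          have hDp1 : Dp = ε * (↑(k+1)) * K ^ k * A := by simp [hDp]
          rw [hB1, hC1, hD1, hDp1, hK, pow_succ]
          push_cast
          ring_nf
          nlinarith [pow_nonneg hKnn k]
      have hωτnn : ∀ a b, 0 ≤ a → a ≤ b → b ≤ T → (0:ℝ) ≤ ω a b ^ (1/q) := fun a b ha hab hbT =>
        Real.rpow_nonneg (hω.2.2.1 a b ha hab (hbT.trans hT1)) _
      refine ⟨?_, ?_, ?_⟩ <;> intro a b ha hab hbT
      · exact (hHI a b ha hab hbT).trans
          (mul_le_mul_of_nonneg_right hconstH (hωτnn a b ha hab hbT))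
      · exact (hHIh a b ha hab hbT).trans
          (mul_le_mul_of_nonneg_right hconstH (hωτnn a b ha hab hbT))
      · refine (hDf a b ha hab hbT).trans ?_
        have : ε * ↑(m+1) * K ^ ((m+1) - 1) = ε * (↑(m+1)) * K ^ m := by norm_num
        rw [this]
        exact mul_le_mul_of_nonneg_right hconstD (hωτnn a b ha hab hbT)
  intro n hn s t hs hst htT
  exact (main n).2.2 s t hs hst htT
end

section
/- Let 1 ≤ q < 2, let V be a real Banach space, let ω be a control function, let ε ≥ 0, and let Ω, Ω̂ ∈ C_{0,q}(L(V,V)) satisfy ‖Ω(t) − Ω(s)‖ ≤ ω(s,t)^{1/q}, ‖Ω̂(t) − Ω̂(s)‖ ≤ ω(s,t)^{1/q}, and ‖(Ω(t) − Ω(s)) − (Ω̂(t) − Ω̂(s))‖ ≤ ε ω(s,t)^{1/q} for all 0 ≤ s ≤ t ≤ 1. Let M and M̂ be the unique continuous finite q-variation solutions with M(0) = M̂(0) = Id_V of M(t) − M(s) = ∫_s^t dΩ · M and M̂(t) − M̂(s) = ∫_s^t dΩ̂ · M̂ (Young integrals, i.e. limits of left-point Riemann–Stieltjes sums Σ (Ω(t_i)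 − Ω(t_{i−1})) ∘ M(t_{i−1}) as the mesh tends to 0). Then there exists a constant C > 0 depending only on q and ω(0,1) such that ‖(M(t) − M(s)) − (M̂(t) − M̂(s))‖ ≤ C ε ω(s,t)^{1/q} for all 0 ≤ s ≤ t ≤ 1. -/
/-! STATEMENT 7: local Lipschitz continuity of the solution of the linear Young ODE. -/

universe u

/-- A path has finite `q`-variation on `[0,1]`. -/
def FiniteQVar {E : Type u} [NormedAddCommGroup E] (q : ℝ) (X : ℝ → E) : Prop :=
  ∃ B : ℝ, ∀ P : Subdivision 0 1,
    (∑ i ∈ Finset.range P.N, ‖X (P.pt (i + 1)) - X (P.pt i)‖ ^ q) ≤ B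

/-- `X ∈ C_{0,q}(E)`: continuous on `[0,1]`, starting at `0`, of finite `q`-variation. -/
def MemC0q {E : Type u} [NormedAddCommGroup E] (q : ℝ) (X : ℝ → E) : Prop :=
  ContinuousOn X (Set.Icc 0 1) ∧ X 0 = 0 ∧ FiniteQVar q X

/-- `M` solves `dM = dΩ · M` on `[0,1]` in the Young sense: for all `0 ≤ s ≤ t ≤ 1` the Young
integral `∫_s^t dΩ · M` exists and equals `M(t) − M(s)`. -/
def SolvesLinearODE {V : Type u} [NormedAddCommGroup V] [NormedSpace ℝ V]
    (Ω M : ℝ → V →L[ℝ] V) : Prop :=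
  ∀ s t, 0 ≤ s → s ≤ t → t ≤ 1 → RSLimit Ω M s t (M t - M s)

namespace S7
variable {s t : ℝ}

lemma Sub.mono_le (P : Subdivision s t) {i j : ℕ} (hij : i ≤ j) (hj : j ≤ P.N) :
    P.pt i ≤ P.pt j := by
  induction j with
  | zero => simp_all
  | succ k ih =>
    rcases Nat.lt_or_ge i (k+1) with h | h
    · exact le_trans (ih (Nat.lt_succ_iff.mp h) (le_trans (Nat.le_succ k) hj))
        (P.mono k (Nat.lt_of_lt_of_le (Nat.lt_succ_self k) hj))
    · have : i = k + 1 := le_antisymm hij h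
      simp [this]

lemma Sub.ge_s (P : Subdivision s t) {i : ℕ} (hi : i ≤ P.N) : s ≤ P.pt i := by
  simpa [P.first] using Sub.mono_le P (Nat.zero_le i) hi

lemma Sub.le_t (P : Subdivision s t) {i : ℕ} (hi : i ≤ P.N) : P.pt i ≤ t := by
  simpa [P.last] using Sub.mono_le P hi (le_refl P.N)

lemma Sub.s_le_t (P : Subdivision s t) : s ≤ t := by
  simpa [P.first, P.last] using Sub.mono_le P (Nat.zero_le P.N) (le_refl P.N)

noncomputable def unif (s t : ℝ) (hst : s ≤ t) (n : ℕ) (hn : 0 < n) : Subdivision s t where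
  N := n
  pt := fun i => s + (t - s) * i / n
  pos := hn
  first := by simp
  last := by field_simp; ring
  mono := fun i _ => by
    have := sub_nonneg.mpr hst
    have hn' : (0:ℝ) < n := by positivity
    show s + (t - s) * i / n ≤ s + (t - s) * (i+1:ℕ) / n
    push_cast
    have h1 : (i:ℝ) ≤ (i:ℝ)+1 := by linarith
    gcongr

lemma unif_mesh (s t : ℝ) (hst : s ≤ t) (n : ℕ) (hn : 0 < n) :
    (unif s t hst n hn).mesh = (t - s)/n := by
  unfold Subdivision.mesh
  have : ∀ i : ℕ, (unif s t hst n hn).pt (i+1) - (unif s t hst n hn).pt i = (t-s)/n := by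
    intro i
    show s + (t-s)*(i+1:ℕ)/n - (s + (t-s)*i/n) = (t-s)/n
    push_cast; field_simp; ring
  calc (Finset.range n).sup' (Finset.nonempty_range_iff.mpr hn.ne') _
      = (Finset.range n).sup' (Finset.nonempty_range_iff.mpr hn.ne') (fun _ => (t-s)/n) := by
        apply Finset.sup'_congr _ rfl (fun i _ => this i)
    _ = (t-s)/n := Finset.sup'_const _ _

lemma exists_fine (hst : s ≤ t) {δ : ℝ} (hδ : 0 < δ) : ∃ P : Subdivision s t, P.mesh < δ := by
  obtain ⟨n, hn⟩ := exists_nat_gt ((t - s)/δ)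
  have hn0 : 0 < n := by
    by_contra h
    push_neg at h
    interval_cases n
    have : 0 ≤ (t-s)/δ := div_nonneg (by linarith) hδ.le
    simp at hn; linarith
  refine ⟨unif s t hst n hn0, ?_⟩
  rw [unif_mesh]
  rw [div_lt_iff₀ (by positivity)]
  have h2 : t - s = δ * ((t-s)/δ) := by field_simp
  rw [h2]
  exact mul_lt_mul_of_pos_left hn hδ


variable {E : Type v} [NormedAddCommGroup E]

lemma chain_bound {s t : ℝ} (χ : ℝ → ℝ → ℝ) (P : Subdivision s t)
    (hχ0 : ∀ u v, s ≤ u → u ≤ v → v ≤ t → 0 ≤ χ u v)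
    (hχsa : ∀ u m v, s ≤ u → u ≤ m → m ≤ v → v ≤ t → χ u m + χ m v ≤ χ u v) :
    ∀ n, n ≤ P.N → (∑ i ∈ Finset.Icc 1 (n-1), χ (P.pt (i-1)) (P.pt (i+1)))
      ≤ χ (P.pt 0) (P.pt n) + χ (P.pt 0) (P.pt (n-1)) := by
  intro n hn
  induction n with
  | zero =>
    rw [show (0:ℕ)-1 = 0 from rfl, Finset.Icc_eq_empty (by omega), Finset.sum_empty]
    have h := hχ0 (P.pt 0) (P.pt 0) (Sub.ge_s P (Nat.zero_le _)) le_rfl (Sub.le_t P (Nat.zero_le _))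
    linarith
  | succ k ih =>
    have hkN : k ≤ P.N := le_trans (Nat.le_succ k) hn
    rcases Nat.eq_zero_or_pos k with hk0 | hk1
    · subst hk0
      rw [show (0:ℕ)+1-1 = 0 from rfl, Finset.Icc_eq_empty (by omega), Finset.sum_empty]
      have h1 := hχ0 (P.pt 0) (P.pt 1) (Sub.ge_s P (Nat.zero_le _)) (Sub.mono_le P (Nat.zero_le 1) hn) (Sub.le_t P hn)
      have h2 := hχ0 (P.pt 0) (P.pt 0) (Sub.ge_s P (Nat.zero_le _)) le_rfl (Sub.le_t P (Nat.zero_le _))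
      simp only [Nat.zero_add]
      linarith
    · have hk : k = (k-1) + 1 := (Nat.succ_pred_eq_of_pos hk1).symm
      have hsum : (∑ i ∈ Finset.Icc 1 ((k+1)-1), χ (P.pt (i-1)) (P.pt (i+1)))
          = (∑ i ∈ Finset.Icc 1 (k-1), χ (P.pt (i-1)) (P.pt (i+1))) + χ (P.pt (k-1)) (P.pt (k+1)) := by
        have e1 : (k+1)-1 = (k-1)+1 := by omega
        rw [e1, Finset.sum_Icc_succ_top (by omega : 1 ≤ (k-1)+1)]
        congr 1
        rw [Nat.add_sub_cancel, ← hk]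
      rw [hsum]
      have hIH := ih hkN
      have hkey : χ (P.pt 0) (P.pt (k-1)) + χ (P.pt (k-1)) (P.pt (k+1)) ≤ χ (P.pt 0) (P.pt (k+1)) := by
        apply hχsa _ _ _ (Sub.ge_s P (Nat.zero_le _)) (Sub.mono_le P (Nat.zero_le _) (by omega))
          (Sub.mono_le P (by omega) hn) (Sub.le_t P hn)
      have : P.pt ((k+1)-1) = P.pt k := by norm_num
      rw [this]
      linarith

lemma exists_good_index {s t : ℝ} (χ : ℝ → ℝ → ℝ) (P : Subdivision s t) (hN : 2 ≤ P.N)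
    (hχ0 : ∀ u v, s ≤ u → u ≤ v → v ≤ t → 0 ≤ χ u v)
    (hχsa : ∀ u m v, s ≤ u → u ≤ m → m ≤ v → v ≤ t → χ u m + χ m v ≤ χ u v) :
    ∃ i, 1 ≤ i ∧ i + 1 ≤ P.N ∧
      ((P.N:ℝ) - 1) * χ (P.pt (i-1)) (P.pt (i+1)) ≤ 2 * χ s t := by
  have hne : (Finset.Icc 1 (P.N - 1)).Nonempty := by
    refine ⟨1, ?_⟩; simp; omega
  obtain ⟨i, hi, hmin⟩ := Finset.exists_min_image (Finset.Icc 1 (P.N-1))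
    (fun i => χ (P.pt (i-1)) (P.pt (i+1))) hne
  simp only [Finset.mem_Icc] at hi
  refine ⟨i, hi.1, by omega, ?_⟩
  have hcard : (Finset.Icc 1 (P.N-1)).card = P.N - 1 := by
    rw [Nat.card_Icc]; omega
  have hsum : (Finset.Icc 1 (P.N-1)).card • χ (P.pt (i-1)) (P.pt (i+1))
      ≤ ∑ j ∈ Finset.Icc 1 (P.N-1), χ (P.pt (j-1)) (P.pt (j+1)) :=
    Finset.card_nsmul_le_sum _ _ _ (fun j hj => hmin j hj)
  have hchain := chain_bound χ P hχ0 hχsa P.N le_rfl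
  have h1 : χ (P.pt 0) (P.pt P.N) = χ s t := by rw [P.first, P.last]
  have h2 : χ (P.pt 0) (P.pt (P.N - 1)) ≤ χ s t := by
    rw [P.first]
    have hA := hχsa s (P.pt (P.N-1)) t le_rfl (Sub.ge_s P (by omega)) (Sub.le_t P (by omega)) le_rfl
    have hC := hχ0 (P.pt (P.N-1)) t (Sub.ge_s P (by omega)) (Sub.le_t P (by omega)) le_rfl
    linarith
  have hcast : ((Finset.Icc 1 (P.N-1)).card : ℝ) = (P.N:ℝ) - 1 := by
    rw [hcard]; push_cast [Nat.cast_sub (by omega : 1 ≤ P.N)]; ring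
  have := hsum
  rw [nsmul_eq_mul, hcast] at this
  calc ((P.N:ℝ) - 1) * χ (P.pt (i-1)) (P.pt (i+1))
      ≤ ∑ j ∈ Finset.Icc 1 (P.N-1), χ (P.pt (j-1)) (P.pt (j+1)) := this
    _ ≤ χ (P.pt 0) (P.pt P.N) + χ (P.pt 0) (P.pt (P.N-1)) := hchain
    _ ≤ 2 * χ s t := by rw [h1]; rw [P.first] at h2 ⊢; linarith


noncomputable def Sth (θ : ℝ) : ℝ := ∑' n : ℕ, ((n:ℝ)^θ)⁻¹

lemma Sth_nonneg (θ : ℝ) : 0 ≤ Sth θ := tsum_nonneg (fun n => by positivity)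

lemma sum_Icc_le_Sth (θ : ℝ) (hθ : 1 < θ) (n : ℕ) :
    (∑ k ∈ Finset.Icc 1 n, ((k:ℝ)^θ)⁻¹) ≤ Sth θ :=
  Summable.sum_le_tsum _ (fun k _ => by positivity) (Real.summable_nat_rpow_inv.mpr hθ)

def Sub.remove {s t : ℝ} (P : Subdivision s t) (i : ℕ) (h1 : 1 ≤ i) (h2 : i + 1 ≤ P.N) :
    Subdivision s t where
  N := P.N - 1
  pt := fun j => if j < i then P.pt j else P.pt (j+1)
  pos := by omega
  first := by
    show (if 0 < i then P.pt 0 else P.pt (0+1)) = s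
    rw [if_pos (by omega)]; exact P.first
  last := by
    show (if P.N - 1 < i then P.pt (P.N-1) else P.pt (P.N-1+1)) = t
    rw [if_neg (by omega)]
    have h : P.N - 1 + 1 = P.N := by omega
    rw [h]; exact P.last
  mono := by
    intro j hj
    show (if j < i then P.pt j else P.pt (j+1)) ≤ (if j + 1 < i then P.pt (j+1) else P.pt (j+1+1))
    by_cases hji : j + 1 < i
    · rw [if_pos (by omega), if_pos hji]; exact P.mono j (by omega)
    · by_cases hji2 : j < i
      · rw [if_pos hji2, if_neg (by omega)]
        exact Sub.mono_le P (by omega) (by omega)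
      · rw [if_neg hji2, if_neg (by omega)]
        exact Sub.mono_le P (by omega) (by omega)

lemma remove_sum {s t : ℝ} (Ξ : ℝ → ℝ → E) (P : Subdivision s t) (i : ℕ)
    (h1 : 1 ≤ i) (h2 : i + 1 ≤ P.N) :
    (∑ j ∈ Finset.range ((Sub.remove P i h1 h2).N),
        Ξ ((Sub.remove P i h1 h2).pt j) ((Sub.remove P i h1 h2).pt (j+1)))
      = (∑ j ∈ Finset.range P.N, Ξ (P.pt j) (P.pt (j+1)))
        - (Ξ (P.pt (i-1)) (P.pt i) + Ξ (P.pt i) (P.pt (i+1)) - Ξ (P.pt (i-1)) (P.pt (i+1))) := by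
  set Q := Sub.remove P i h1 h2 with hQ
  set f : ℕ → E := fun j => Ξ (P.pt j) (P.pt (j+1)) with hf
  set g : ℕ → E := fun j => Ξ (Q.pt j) (Q.pt (j+1)) with hg
  have hQN : Q.N = P.N - 1 := rfl
  have hQpt : ∀ j, Q.pt j = if j < i then P.pt j else P.pt (j+1) := fun j => rfl
  have hg_low : ∀ j, j < i - 1 → g j = f j := by
    intro j hjlt
    simp only [hg, hf, hQpt, if_pos (by omega : j < i), if_pos (by omega : j + 1 < i)]
  have hg_mid : g (i-1) = Ξ (P.pt (i-1)) (P.pt (i+1)) := by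
    simp only [hg, hQpt, if_pos (by omega : i - 1 < i)]
    have : i - 1 + 1 = i := by omega
    rw [this, if_neg (by omega)]
  have hg_hi : ∀ j, i ≤ j → g j = f (j+1) := by
    intro j hij
    simp only [hg, hf, hQpt, if_neg (by omega : ¬ j < i), if_neg (by omega : ¬ j + 1 < i)]
  -- split Q sum
  have hsplitQ : (∑ j ∈ Finset.range Q.N, g j)
      = (∑ j ∈ Finset.Ico 0 (i-1), g j) + g (i-1) + (∑ j ∈ Finset.Ico i Q.N, g j) := by
    rw [Finset.range_eq_Ico, ← Finset.sum_Ico_consecutive _ (by omega : 0 ≤ i) (by omega : i ≤ Q.N)]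
    congr 1
    have : i = (i-1) + 1 := by omega
    rw [this, Finset.sum_Ico_succ_top (by omega)]
    congr 2 <;> omega
  have hsplitP : (∑ j ∈ Finset.range P.N, f j)
      = (∑ j ∈ Finset.Ico 0 (i-1), f j) + f (i-1) + f i + (∑ j ∈ Finset.Ico (i+1) P.N, f j) := by
    rw [Finset.range_eq_Ico, ← Finset.sum_Ico_consecutive _ (by omega : 0 ≤ i+1) (by omega : i+1 ≤ P.N)]
    congr 1
    rw [Finset.sum_Ico_succ_top (by omega : 0 ≤ i)]
    congr 1
    have : i = (i-1) + 1 := by omega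
    rw [this, Finset.sum_Ico_succ_top (by omega)]
    congr 2 <;> omega
  have hshift : (∑ j ∈ Finset.Ico i Q.N, g j) = (∑ j ∈ Finset.Ico (i+1) P.N, f j) := by
    have e : (∑ j ∈ Finset.Ico i Q.N, g j) = (∑ j ∈ Finset.Ico i Q.N, f (j+1)) := by
      apply Finset.sum_congr rfl
      intro j hj
      simp only [Finset.mem_Ico] at hj
      exact hg_hi j hj.1
    rw [e]
    have hb : P.N - 1 + 1 = P.N := by omega
    have h' := Finset.sum_Ico_add f i (P.N - 1) 1
    rw [hb] at h'
    rw [hQN, ← h']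
    exact Finset.sum_congr rfl (fun j _ => by rw [add_comm])
  have hlow : (∑ j ∈ Finset.Ico 0 (i-1), g j) = (∑ j ∈ Finset.Ico 0 (i-1), f j) := by
    apply Finset.sum_congr rfl
    intro j hj
    simp only [Finset.mem_Ico] at hj
    exact hg_low j hj.2
  have hf1 : f (i-1) = Ξ (P.pt (i-1)) (P.pt i) := by
    show Ξ (P.pt (i-1)) (P.pt (i-1+1)) = Ξ (P.pt (i-1)) (P.pt i)
    congr 2
    omega
  have hf2 : f i = Ξ (P.pt i) (P.pt (i+1)) := rfl
  rw [hsplitQ, hsplitP, hshift, hlow, hg_mid, hf1, hf2]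
  abel

lemma sewing {s t : ℝ} (θ : ℝ) (hθ : 1 < θ) (χ : ℝ → ℝ → ℝ)
    (hχ0 : ∀ u v, s ≤ u → u ≤ v → v ≤ t → 0 ≤ χ u v)
    (hχsa : ∀ u m v, s ≤ u → u ≤ m → m ≤ v → v ≤ t → χ u m + χ m v ≤ χ u v)
    (Ξ : ℝ → ℝ → E) (c : ℝ) (hc : 0 ≤ c)
    (hδ : ∀ u m v, s ≤ u → u ≤ m → m ≤ v → v ≤ t →
      ‖Ξ u v - Ξ u m - Ξ m v‖ ≤ c * χ u v ^ θ)
    (P : Subdivision s t) :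
    ‖(∑ j ∈ Finset.range P.N, Ξ (P.pt j) (P.pt (j+1))) - Ξ s t‖
      ≤ c * (2 ^ θ * Sth θ) * χ s t ^ θ := by
  have hst : s ≤ t := Sub.s_le_t P
  have hχst : 0 ≤ χ s t := hχ0 s t le_rfl hst le_rfl
  suffices H : ∀ N : ℕ, ∀ P : Subdivision s t, P.N = N →
      ‖(∑ j ∈ Finset.range P.N, Ξ (P.pt j) (P.pt (j+1))) - Ξ s t‖
        ≤ c * 2 ^ θ * χ s t ^ θ * (∑ k ∈ Finset.Icc 1 (N-1), ((k:ℝ)^θ)⁻¹) by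
    have := H P.N P rfl
    calc ‖(∑ j ∈ Finset.range P.N, Ξ (P.pt j) (P.pt (j+1))) - Ξ s t‖
        ≤ c * 2 ^ θ * χ s t ^ θ * (∑ k ∈ Finset.Icc 1 (P.N-1), ((k:ℝ)^θ)⁻¹) := this
      _ ≤ c * 2 ^ θ * χ s t ^ θ * Sth θ := by
          apply mul_le_mul_of_nonneg_left (sum_Icc_le_Sth θ hθ _)
          have : (0:ℝ) ≤ (2:ℝ) ^ θ := le_of_lt (Real.rpow_pos_of_pos (by norm_num) θ)
          have hp : (0:ℝ) ≤ χ s t ^ θ := Real.rpow_nonneg hχst θ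
          positivity
      _ = c * (2 ^ θ * Sth θ) * χ s t ^ θ := by ring
  intro N
  induction N using Nat.strong_induction_on with
  | _ N ih =>
    intro P hPN
    rcases le_or_gt N 1 with hN1 | hN2
    · -- N = 1
      have hpos := P.pos
      have hN : P.N = 1 := by omega
      have : (∑ j ∈ Finset.range P.N, Ξ (P.pt j) (P.pt (j+1))) = Ξ s t := by
        rw [hN, Finset.sum_range_one]
        rw [show P.pt 0 = s from P.first, show P.pt 1 = t from by rw [← hN]; exact P.last]
      rw [this, sub_self, norm_zero]
      have h2 : (0:ℝ) ≤ (2:ℝ) ^ θ := le_of_lt (Real.rpow_pos_of_pos (by norm_num) θ)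
      have hp : (0:ℝ) ≤ χ s t ^ θ := Real.rpow_nonneg hχst θ
      have hsum : (0:ℝ) ≤ ∑ k ∈ Finset.Icc 1 (N-1), ((k:ℝ)^θ)⁻¹ :=
        Finset.sum_nonneg (fun k _ => by positivity)
      positivity
    · -- N ≥ 2
      obtain ⟨i, hi1, hi2, hgood⟩ := exists_good_index χ P (by omega) hχ0 hχsa
      set Q := Sub.remove P i hi1 hi2 with hQdef
      have hQN : Q.N = N - 1 := by show P.N - 1 = N - 1; rw [hPN]
      have hIH := ih (N-1) (by omega) Q hQN
      have hrm := remove_sum Ξ P i hi1 hi2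
      -- defect bound
      have hpts : s ≤ P.pt (i-1) ∧ P.pt (i-1) ≤ P.pt i ∧ P.pt i ≤ P.pt (i+1) ∧ P.pt (i+1) ≤ t :=
        ⟨Sub.ge_s P (by omega), Sub.mono_le P (by omega) (by omega),
         Sub.mono_le P (by omega) (by omega), Sub.le_t P (by omega)⟩
      have hδi : ‖Ξ (P.pt (i-1)) (P.pt (i+1)) - Ξ (P.pt (i-1)) (P.pt i) - Ξ (P.pt i) (P.pt (i+1))‖
          ≤ c * χ (P.pt (i-1)) (P.pt (i+1)) ^ θ :=
        hδ _ _ _ hpts.1 hpts.2.1 hpts.2.2.1 hpts.2.2.2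
      have hχi0 : 0 ≤ χ (P.pt (i-1)) (P.pt (i+1)) :=
        hχ0 _ _ hpts.1 (le_trans hpts.2.1 hpts.2.2.1) hpts.2.2.2
      have hNR : (0:ℝ) < (N:ℝ) - 1 := by
        have : (2:ℝ) ≤ (N:ℝ) := by exact_mod_cast hN2
        linarith
      have hχile : χ (P.pt (i-1)) (P.pt (i+1)) ≤ 2 * χ s t / ((N:ℝ) - 1) := by
        rw [le_div_iff₀ hNR]
        rw [hPN] at hgood
        linarith [hgood]
      have hpow : χ (P.pt (i-1)) (P.pt (i+1)) ^ θ ≤ 2 ^ θ * χ s t ^ θ * (((N-1:ℕ):ℝ)^θ)⁻¹ := by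
        have hcast : ((N-1:ℕ):ℝ) = (N:ℝ) - 1 := by
          push_cast [Nat.cast_sub (by omega : 1 ≤ N)]; ring
        calc χ (P.pt (i-1)) (P.pt (i+1)) ^ θ
            ≤ (2 * χ s t / ((N:ℝ) - 1)) ^ θ := Real.rpow_le_rpow hχi0 hχile (by linarith)
          _ = (2 * χ s t) ^ θ / (((N:ℝ) - 1)) ^ θ := Real.div_rpow (by linarith) hNR.le θ
          _ = 2 ^ θ * χ s t ^ θ * (((N-1:ℕ):ℝ)^θ)⁻¹ := by
              rw [Real.mul_rpow (by norm_num) hχst, hcast, div_eq_mul_inv]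
      -- assemble
      have key : ‖(∑ j ∈ Finset.range P.N, Ξ (P.pt j) (P.pt (j+1))) - Ξ s t‖
          ≤ ‖(∑ j ∈ Finset.range Q.N, Ξ (Q.pt j) (Q.pt (j+1))) - Ξ s t‖
            + c * (2 ^ θ * χ s t ^ θ * (((N-1:ℕ):ℝ)^θ)⁻¹) := by
        have hsub : (∑ j ∈ Finset.range P.N, Ξ (P.pt j) (P.pt (j+1))) - Ξ s t
            = ((∑ j ∈ Finset.range Q.N, Ξ (Q.pt j) (Q.pt (j+1))) - Ξ s t)
              - (Ξ (P.pt (i-1)) (P.pt (i+1)) - Ξ (P.pt (i-1)) (P.pt i) - Ξ (P.pt i) (P.pt (i+1))) := by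
          rw [hrm]; abel
        rw [hsub]
        refine le_trans (norm_sub_le _ _) ?_
        have : ‖Ξ (P.pt (i-1)) (P.pt (i+1)) - Ξ (P.pt (i-1)) (P.pt i) - Ξ (P.pt i) (P.pt (i+1))‖
            ≤ c * (2 ^ θ * χ s t ^ θ * (((N-1:ℕ):ℝ)^θ)⁻¹) := by
          refine le_trans hδi ?_
          rw [← mul_assoc, mul_assoc]
          exact mul_le_mul_of_nonneg_left hpow hc
        linarith
      have hstep : (∑ k ∈ Finset.Icc 1 ((N-1)-1), ((k:ℝ)^θ)⁻¹) + (((N-1:ℕ):ℝ)^θ)⁻¹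
          = ∑ k ∈ Finset.Icc 1 (N-1), ((k:ℝ)^θ)⁻¹ := by
        have h : N - 1 = ((N-1)-1) + 1 := by omega
        rw [h, Finset.sum_Icc_succ_top (by omega)]
        congr 2 <;> omega
      calc ‖(∑ j ∈ Finset.range P.N, Ξ (P.pt j) (P.pt (j+1))) - Ξ s t‖
          ≤ ‖(∑ j ∈ Finset.range Q.N, Ξ (Q.pt j) (Q.pt (j+1))) - Ξ s t‖
            + c * (2 ^ θ * χ s t ^ θ * (((N-1:ℕ):ℝ)^θ)⁻¹) := key
        _ ≤ c * 2 ^ θ * χ s t ^ θ * (∑ k ∈ Finset.Icc 1 ((N-1)-1), ((k:ℝ)^θ)⁻¹)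
            + c * (2 ^ θ * χ s t ^ θ * (((N-1:ℕ):ℝ)^θ)⁻¹) := by linarith [hIH]
        _ = c * 2 ^ θ * χ s t ^ θ * ((∑ k ∈ Finset.Icc 1 ((N-1)-1), ((k:ℝ)^θ)⁻¹) + (((N-1:ℕ):ℝ)^θ)⁻¹) := by ring
        _ = c * 2 ^ θ * χ s t ^ θ * (∑ k ∈ Finset.Icc 1 (N-1), ((k:ℝ)^θ)⁻¹) := by rw [hstep]

lemma rs_close {s t : ℝ} (hst : s ≤ t) (F : Subdivision s t → E) (L G : E) (R : ℝ)
    (hlim : ∀ ε > (0:ℝ), ∃ δ > (0:ℝ), ∀ P : Subdivision s t, P.mesh < δ → ‖F P - L‖ ≤ ε)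
    (hall : ∀ P : Subdivision s t, ‖F P - G‖ ≤ R) : ‖L - G‖ ≤ R := by
  apply le_of_forall_pos_le_add
  intro ε hε
  obtain ⟨δ, hδ, hP⟩ := hlim ε hε
  obtain ⟨P, hPm⟩ := exists_fine hst hδ
  calc ‖L - G‖ ≤ ‖L - F P‖ + ‖F P - G‖ := by
        have : L - G = (L - F P) + (F P - G) := by abel
        rw [this]; exact norm_add_le _ _
    _ ≤ ε + R := by
        have h1 := hP P hPm
        rw [norm_sub_rev] at h1
        linarith [hall P]
    _ = R + ε := by ring

lemma le_of_forall_le_add_geom {x b a : ℝ} (h : ∀ n : ℕ, x ≤ b + (1/2)^n * a) : x ≤ b := by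
  have htend : Filter.Tendsto (fun n : ℕ => b + (1/2)^n * a) Filter.atTop (nhds b) := by
    have h0 : Filter.Tendsto (fun n : ℕ => ((1:ℝ)/2)^n) Filter.atTop (nhds 0) := by
      apply tendsto_pow_atTop_nhds_zero_of_lt_one <;> norm_num
    have := (h0.mul_const a).const_add b
    simpa using this
  exact ge_of_tendsto' htend h

lemma mono_of_step {u : ℕ → ℝ} {m : ℕ} (h : ∀ j, j < m → u j ≤ u (j+1)) :
    ∀ i j, i ≤ j → j ≤ m → u i ≤ u j := by
  intro i j hij hjm
  induction j with
  | zero => simp_all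
  | succ k ih =>
    rcases Nat.lt_or_ge i (k+1) with hl | hg
    · exact le_trans (ih (by omega) (by omega)) (h k (by omega))
    · have : i = k+1 := by omega
      simp [this]

lemma piece_bootstrap (q : ℝ) (X : ℝ → E) (w : ℝ → ℝ → ℝ)
    (a b : ℝ) (β γ A₀ : ℝ) (hβ : 0 ≤ β) (hγ : 0 ≤ γ) (hγ2 : γ ≤ 1/2) (hA₀ : 0 ≤ A₀)
    (hw0 : ∀ u v, a ≤ u → u ≤ v → v ≤ b → 0 ≤ w u v ^ (1/q))
    (step : ∀ c, 0 ≤ c → (∀ u v, a ≤ u → u ≤ v → v ≤ b → ‖X v - X u‖ ≤ c * w u v ^ (1/q)) →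
            (∀ u v, a ≤ u → u ≤ v → v ≤ b → ‖X v - X u‖ ≤ (β + γ * c) * w u v ^ (1/q)))
    (init : ∀ u v, a ≤ u → u ≤ v → v ≤ b → ‖X v - X u‖ ≤ A₀ * w u v ^ (1/q)) :
    ∀ u v, a ≤ u → u ≤ v → v ≤ b → ‖X v - X u‖ ≤ (2*β) * w u v ^ (1/q) := by
  have key : ∀ n : ℕ, ∀ u v, a ≤ u → u ≤ v → v ≤ b →
      ‖X v - X u‖ ≤ (2*β + (1/2)^n * A₀) * w u v ^ (1/q) := by
    intro n
    induction n with
    | zero =>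
      intro u v h1 h2 h3
      have := init u v h1 h2 h3
      have hco : A₀ ≤ 2*β + (1/2:ℝ)^0 * A₀ := by norm_num; linarith
      exact le_trans this (mul_le_mul_of_nonneg_right hco (hw0 u v h1 h2 h3))
    | succ n ihn =>
      have hcn : (0:ℝ) ≤ 2*β + (1/2)^n * A₀ := by positivity
      have hstep := step _ hcn ihn
      intro u v h1 h2 h3
      refine le_trans (hstep u v h1 h2 h3) (mul_le_mul_of_nonneg_right ?_ (hw0 u v h1 h2 h3))
      have hp : (0:ℝ) ≤ (1/2:ℝ)^n := by positivity
      have e : ((1:ℝ)/2)^(n+1) = (1/2) * (1/2)^n := by ring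
      rw [e]
      nlinarith [mul_le_mul_of_nonneg_right hγ2 (mul_nonneg hp hA₀)]
  intro u v h1 h2 h3
  have : ∀ n : ℕ, ‖X v - X u‖ ≤ (2*β) * w u v ^ (1/q) + (1/2)^n * (A₀ * w u v ^ (1/q)) := by
    intro n
    have := key n u v h1 h2 h3
    calc ‖X v - X u‖ ≤ (2*β + (1/2)^n * A₀) * w u v ^ (1/q) := this
      _ = (2*β) * w u v ^ (1/q) + (1/2)^n * (A₀ * w u v ^ (1/q)) := by ring
  exact le_of_forall_le_add_geom this

lemma glue (q : ℝ) (hq : 0 < q) (X : ℝ → E) (w : ℝ → ℝ → ℝ)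
    (hw0 : ∀ x y, 0 ≤ x → x ≤ y → y ≤ 1 → 0 ≤ w x y)
    (hwmono : ∀ s x y t, 0 ≤ s → s ≤ x → x ≤ y → y ≤ t → t ≤ 1 → w x y ≤ w s t)
    (u : ℕ → ℝ) (m : ℕ) (hu0 : u 0 = 0) (hum : u m = 1)
    (humono : ∀ j, j < m → u j ≤ u (j+1))
    (cA : ℝ) (hcA : 0 ≤ cA)
    (hpiece : ∀ j, j < m → ∀ x y, u j ≤ x → x ≤ y → y ≤ u (j+1) →
      ‖X y - X x‖ ≤ cA * w x y ^ (1/q)) :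
    ∀ x y, 0 ≤ x → x ≤ y → y ≤ 1 → ‖X y - X x‖ ≤ ((m:ℝ) * cA) * w x y ^ (1/q) := by
  have hmono2 := mono_of_step humono
  have huIcc : ∀ j, j ≤ m → 0 ≤ u j ∧ u j ≤ 1 := by
    intro j hj
    constructor
    · rw [← hu0]; exact hmono2 0 j (Nat.zero_le j) hj
    · rw [← hum]; exact hmono2 j m hj le_rfl
  have claim : ∀ j, j ≤ m → ∀ x y, 0 ≤ x → x ≤ y → y ≤ u j →
      ‖X y - X x‖ ≤ ((j:ℝ) * cA) * w x y ^ (1/q) := by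
    intro j
    induction j with
    | zero =>
      intro _ x y hx hxy hyu
      rw [hu0] at hyu
      have : x = y := le_antisymm hxy (le_trans hyu hx)
      rw [this, sub_self, norm_zero]
      simp
    | succ j ih =>
      intro hjm x y hx hxy hyu
      have hj1 : j ≤ m := by omega
      have hy1 : y ≤ 1 := le_trans hyu (huIcc (j+1) hjm).2
      have hwxy : 0 ≤ w x y ^ (1/q) :=
        Real.rpow_nonneg (hw0 x y hx hxy hy1) _
      rcases le_or_gt y (u j) with hyj | hyj
      · have := ih hj1 x y hx hxy hyj
        refine le_trans this (mul_le_mul_of_nonneg_right ?_ hwxy)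
        have : (j:ℝ) ≤ (j:ℝ)+1 := by linarith
        push_cast
        nlinarith
      · rcases le_or_gt (u j) x with hxj | hxj
        · have := hpiece j (by omega) x y hxj hxy hyu
          refine le_trans this (mul_le_mul_of_nonneg_right ?_ hwxy)
          have h1 : (1:ℝ) ≤ (j:ℝ)+1 := by have : (0:ℝ) ≤ (j:ℝ) := Nat.cast_nonneg j; linarith
          push_cast
          nlinarith
        · have h0uj : 0 ≤ u j := (huIcc j hj1).1
          have t1 : ‖X y - X (u j)‖ ≤ cA * w (u j) y ^ (1/q) :=
            hpiece j (by omega) (u j) y le_rfl hyj.le hyu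
          have t2 : ‖X (u j) - X x‖ ≤ ((j:ℝ) * cA) * w x (u j) ^ (1/q) :=
            ih hj1 x (u j) hx hxj.le le_rfl
          have hw1 : w (u j) y ^ (1/q) ≤ w x y ^ (1/q) :=
            Real.rpow_le_rpow (hw0 (u j) y h0uj hyj.le hy1)
              (hwmono x (u j) y y hx hxj.le hyj.le le_rfl hy1) (by positivity)
          have hw2 : w x (u j) ^ (1/q) ≤ w x y ^ (1/q) :=
            Real.rpow_le_rpow (hw0 x (u j) hx hxj.le (huIcc j hj1).2)
              (hwmono x x (u j) y hx le_rfl hxj.le hyj.le hy1) (by positivity)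
          calc ‖X y - X x‖ ≤ ‖X y - X (u j)‖ + ‖X (u j) - X x‖ := by
                have : X y - X x = (X y - X (u j)) + (X (u j) - X x) := by abel
                rw [this]; exact norm_add_le _ _
            _ ≤ cA * w x y ^ (1/q) + ((j:ℝ) * cA) * w x y ^ (1/q) := by
                have a1 : cA * w (u j) y ^ (1/q) ≤ cA * w x y ^ (1/q) :=
                  mul_le_mul_of_nonneg_left hw1 hcA
                have a2 : ((j:ℝ) * cA) * w x (u j) ^ (1/q) ≤ ((j:ℝ) * cA) * w x y ^ (1/q) :=
                  mul_le_mul_of_nonneg_left hw2 (by positivity)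
                linarith
            _ = (((j:ℕ)+1:ℝ) * cA) * w x y ^ (1/q) := by ring
            _ = (((j+1:ℕ)):ℝ) * cA * w x y ^ (1/q) := by push_cast; ring
  intro x y hx hxy hy
  have := claim m le_rfl x y hx hxy (by rw [hum]; exact hy)
  exact this

noncomputable def qsum (q : ℝ) (X : ℝ → E) {s t : ℝ} (P : Subdivision s t) : ℝ :=
  ∑ j ∈ Finset.range P.N, ‖X (P.pt (j+1)) - X (P.pt j)‖ ^ q

lemma qsum_nonneg (q : ℝ) (X : ℝ → E) {s t : ℝ} (P : Subdivision s t) : 0 ≤ qsum q X P :=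
  Finset.sum_nonneg (fun j _ => Real.rpow_nonneg (norm_nonneg _) q)

def triv (s t : ℝ) (hst : s ≤ t) : Subdivision s t where
  N := 1
  pt := fun j => if j = 0 then s else t
  pos := one_pos
  first := by simp
  last := by simp
  mono := by intro i hi; interval_cases i; simpa using hst

lemma qsum_triv (q : ℝ) (X : ℝ → E) {s t : ℝ} (hst : s ≤ t) :
    qsum q X (triv s t hst) = ‖X t - X s‖ ^ q := by
  unfold qsum triv
  simp

def Sub.ext {s t : ℝ} (P : Subdivision s t) (hs : 0 ≤ s) (ht : t ≤ 1) : Subdivision 0 1 where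
  N := P.N + 2
  pt := fun j => if j = 0 then 0 else if j ≤ P.N + 1 then P.pt (j-1) else 1
  pos := by omega
  first := by simp
  last := by
    show (if P.N + 2 = 0 then (0:ℝ) else if P.N + 2 ≤ P.N + 1 then P.pt (P.N+2-1) else 1) = 1
    rw [if_neg (by omega), if_neg (by omega)]
  mono := by
    intro j hj
    show (if j = 0 then (0:ℝ) else if j ≤ P.N + 1 then P.pt (j-1) else 1)
      ≤ (if j + 1 = 0 then (0:ℝ) else if j + 1 ≤ P.N + 1 then P.pt (j+1-1) else 1)
    rcases Nat.eq_zero_or_pos j with h0 | hpos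
    · subst h0
      rw [if_pos rfl, if_neg (by omega), if_pos (by omega)]
      rw [show (0:ℕ)+1-1 = 0 from rfl, P.first]
      exact hs
    · rw [if_neg (by omega)]
      by_cases hle : j + 1 ≤ P.N + 1
      · rw [if_pos (by omega), if_neg (by omega), if_pos hle]
        have : j + 1 - 1 = (j-1) + 1 := by omega
        rw [this]
        exact P.mono (j-1) (by omega)
      · rw [if_pos (by omega), if_neg (by omega), if_neg hle]
        have : j - 1 ≤ P.N := by omega
        calc P.pt (j-1) ≤ t := Sub.le_t P this
          _ ≤ 1 := ht

lemma qsum_ext_le (q : ℝ) (X : ℝ → E) {s t : ℝ} (P : Subdivision s t) (hs : 0 ≤ s) (ht : t ≤ 1) :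
    qsum q X P ≤ qsum q X (Sub.ext P hs ht) := by
  set P' := Sub.ext P hs ht with hP'
  have hpt : ∀ j, 1 ≤ j → j ≤ P.N + 1 → P'.pt j = P.pt (j-1) := by
    intro j h1 h2
    show (if j = 0 then (0:ℝ) else if j ≤ P.N + 1 then P.pt (j-1) else 1) = P.pt (j-1)
    rw [if_neg (by omega), if_pos h2]
  have hsub : Finset.Ico 1 (P.N+1) ⊆ Finset.range (P'.N) := by
    intro j hj
    simp only [Finset.mem_Ico] at hj
    simp only [Finset.mem_range]
    show j < P.N + 2
    omega
  have h1 : (∑ j ∈ Finset.Ico 1 (P.N+1), ‖X (P'.pt (j+1)) - X (P'.pt j)‖ ^ q) ≤ qsum q X P' := by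
    apply Finset.sum_le_sum_of_subset_of_nonneg hsub
    intro j _ _
    exact Real.rpow_nonneg (norm_nonneg _) q
  have h2 : (∑ j ∈ Finset.Ico 1 (P.N+1), ‖X (P'.pt (j+1)) - X (P'.pt j)‖ ^ q) = qsum q X P := by
    rw [Finset.sum_Ico_eq_sum_range]
    unfold qsum
    apply Finset.sum_congr rfl
    intro j hj
    simp only [Finset.mem_range] at hj
    rw [hpt (1+j) (by omega) (by omega), hpt (1+j+1) (by omega) (by omega)]
    have e1 : 1+j+1-1 = j+1 := by omega
    have e2 : 1+j-1 = j := by omega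
    rw [e1, e2]
  rw [← h2]
  exact h1

def Sub.cat {s u t : ℝ} (P1 : Subdivision s u) (P2 : Subdivision u t) : Subdivision s t where
  N := P1.N + P2.N
  pt := fun j => if j ≤ P1.N then P1.pt j else P2.pt (j - P1.N)
  pos := by have := P1.pos; omega
  first := by
    show (if 0 ≤ P1.N then P1.pt 0 else P2.pt (0 - P1.N)) = s
    rw [if_pos (Nat.zero_le _)]; exact P1.first
  last := by
    show (if P1.N + P2.N ≤ P1.N then P1.pt (P1.N + P2.N) else P2.pt (P1.N + P2.N - P1.N)) = t
    have := P2.pos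
    rw [if_neg (by omega)]
    have e : P1.N + P2.N - P1.N = P2.N := by omega
    rw [e]; exact P2.last
  mono := by
    intro j hj
    show (if j ≤ P1.N then P1.pt j else P2.pt (j - P1.N))
      ≤ (if j + 1 ≤ P1.N then P1.pt (j+1) else P2.pt (j + 1 - P1.N))
    by_cases h1 : j + 1 ≤ P1.N
    · rw [if_pos (by omega), if_pos h1]; exact P1.mono j (by omega)
    · by_cases h2 : j ≤ P1.N
      · have hjeq : j = P1.N := by omega
        rw [if_pos h2, if_neg h1, hjeq]
        have e : P1.N + 1 - P1.N = 1 := by omega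
        rw [e, P1.last]
        have h := Sub.mono_le P2 (Nat.zero_le 1) (by have := P2.pos; omega)
        rwa [P2.first] at h
      · rw [if_neg h2, if_neg h1]
        have e : j + 1 - P1.N = (j - P1.N) + 1 := by omega
        rw [e]
        exact P2.mono (j - P1.N) (by omega)

lemma qsum_cat (q : ℝ) (X : ℝ → E) {s u t : ℝ} (P1 : Subdivision s u) (P2 : Subdivision u t) :
    qsum q X (Sub.cat P1 P2) = qsum q X P1 + qsum q X P2 := by
  set P := Sub.cat P1 P2 with hP
  have hpt_low : ∀ j, j ≤ P1.N → P.pt j = P1.pt j := by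
    intro j hj
    show (if j ≤ P1.N then P1.pt j else P2.pt (j - P1.N)) = P1.pt j
    rw [if_pos hj]
  have hpt_hi : ∀ i : ℕ, P.pt (P1.N + i) = P2.pt i := by
    intro i
    rcases Nat.eq_zero_or_pos i with h0 | hpos
    · subst h0
      rw [hpt_low (P1.N + 0) (by omega)]
      show P1.pt P1.N = P2.pt 0
      rw [P1.last, P2.first]
    · show (if P1.N + i ≤ P1.N then P1.pt (P1.N+i) else P2.pt (P1.N + i - P1.N)) = P2.pt i
      rw [if_neg (by omega)]
      congr 1
      omega
  unfold qsum
  have hsplit : Finset.range P.N = Finset.range (P1.N + P2.N) := by rw [hP]; rfl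
  rw [hsplit, Finset.sum_range_add]
  congr 1
  · apply Finset.sum_congr rfl
    intro j hj
    simp only [Finset.mem_range] at hj
    rw [hpt_low j (by omega), hpt_low (j+1) (by omega)]
  · apply Finset.sum_congr rfl
    intro i _
    rw [show P1.N + i + 1 = P1.N + (i+1) from by omega, hpt_hi (i+1), hpt_hi i]

noncomputable def pvar (q : ℝ) (X : ℝ → E) (s t : ℝ) : ℝ :=
  sSup {r : ℝ | ∃ P : Subdivision s t, r = qsum q X P}

section pvar
variable {q : ℝ} {X : ℝ → E} {B : ℝ}

lemma pvar_set_nonempty (hst : s ≤ t) :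
    {r : ℝ | ∃ P : Subdivision s t, r = qsum q X P}.Nonempty :=
  ⟨qsum q X (triv s t hst), ⟨triv s t hst, rfl⟩⟩

lemma pvar_set_bdd (B : ℝ) (hB : ∀ P : Subdivision 0 1, qsum q X P ≤ B) (hs : 0 ≤ s) (ht : t ≤ 1) :
    BddAbove {r : ℝ | ∃ P : Subdivision s t, r = qsum q X P} := by
  refine ⟨B, ?_⟩
  rintro r ⟨P, rfl⟩
  exact le_trans (qsum_ext_le q X P hs ht) (hB _)

lemma qsum_le_pvar (hB : ∀ P : Subdivision 0 1, qsum q X P ≤ B) (hs : 0 ≤ s) (ht : t ≤ 1) (P : Subdivision s t) :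
    qsum q X P ≤ pvar q X s t :=
  le_csSup (pvar_set_bdd B hB hs ht) ⟨P, rfl⟩

lemma pvar_nonneg (hB : ∀ P : Subdivision 0 1, qsum q X P ≤ B) (hs : 0 ≤ s) (hst : s ≤ t) (ht : t ≤ 1) : 0 ≤ pvar q X s t :=
  le_trans (qsum_nonneg q X (triv s t hst)) (qsum_le_pvar hB hs ht _)

lemma pvar_le_B (hB : ∀ P : Subdivision 0 1, qsum q X P ≤ B) (hs : 0 ≤ s) (hst : s ≤ t) (ht : t ≤ 1) : pvar q X s t ≤ B := by
  apply csSup_le (pvar_set_nonempty hst)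
  rintro r ⟨P, rfl⟩
  exact le_trans (qsum_ext_le q X P hs ht) (hB _)

lemma norm_rpow_le_pvar (hB : ∀ P : Subdivision 0 1, qsum q X P ≤ B) (hs : 0 ≤ s) (hst : s ≤ t) (ht : t ≤ 1) :
    ‖X t - X s‖ ^ q ≤ pvar q X s t := by
  have := qsum_le_pvar hB hs ht (triv s t hst)
  rwa [qsum_triv q X hst] at this

lemma pvar_superadd (hB : ∀ P : Subdivision 0 1, qsum q X P ≤ B) (hs : 0 ≤ s) (hsu : s ≤ u) (hut : u ≤ t) (ht : t ≤ 1) :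
    pvar q X s u + pvar q X u t ≤ pvar q X s t := by
  have hu0 : 0 ≤ u := le_trans hs hsu
  have hu1 : u ≤ 1 := le_trans hut ht
  rw [pvar, pvar]
  rw [← le_sub_iff_add_le']
  apply csSup_le (pvar_set_nonempty hut)
  rintro r ⟨P2, rfl⟩
  rw [le_sub_iff_add_le']
  rw [add_comm, ← le_sub_iff_add_le']
  apply csSup_le (pvar_set_nonempty hsu)
  rintro r ⟨P1, rfl⟩
  rw [le_sub_iff_add_le']
  have : qsum q X P2 + qsum q X P1 = qsum q X (Sub.cat P1 P2) := by
    rw [qsum_cat]; ring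
  rw [this]
  exact qsum_le_pvar hB hs ht _

lemma pvar_mono (hB : ∀ P : Subdivision 0 1, qsum q X P ≤ B) (hs : 0 ≤ s) (hsu : s ≤ u) (huv : u ≤ v) (hvt : v ≤ t) (ht : t ≤ 1) :
    pvar q X u v ≤ pvar q X s t := by
  have hu0 : 0 ≤ u := le_trans hs hsu
  have hv1 : v ≤ 1 := le_trans hvt ht
  have h1 := pvar_superadd hB hs hsu huv hv1
  have h2 := pvar_superadd hB hs (le_trans hsu huv) hvt ht
  have g1 := pvar_nonneg hB hs hsu (le_trans huv hv1)
  have g2 := pvar_nonneg hB hs (le_trans hsu huv) hv1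
  have g3 := pvar_nonneg hB (le_trans hu0 huv) hvt ht
  linarith

end pvar

lemma sqrt_cs {a1 b1 a2 b2 : ℝ} (ha1 : 0 ≤ a1) (hb1 : 0 ≤ b1) (ha2 : 0 ≤ a2) (hb2 : 0 ≤ b2) :
    Real.sqrt (a1*b1) + Real.sqrt (a2*b2) ≤ Real.sqrt ((a1+a2)*(b1+b2)) := by
  rw [Real.sqrt_mul ha1, Real.sqrt_mul ha2]
  have e1 : Real.sqrt a1 ^ 2 = a1 := Real.sq_sqrt ha1
  have e2 : Real.sqrt b1 ^ 2 = b1 := Real.sq_sqrt hb1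
  have e3 : Real.sqrt a2 ^ 2 = a2 := Real.sq_sqrt ha2
  have e4 : Real.sqrt b2 ^ 2 = b2 := Real.sq_sqrt hb2
  have key : (Real.sqrt a1 * Real.sqrt b1 + Real.sqrt a2 * Real.sqrt b2)^2 ≤ (a1+a2)*(b1+b2) := by
    have am := two_mul_le_add_sq (Real.sqrt a1 * Real.sqrt b2) (Real.sqrt a2 * Real.sqrt b1)
    nlinarith [Real.sqrt_nonneg a1, Real.sqrt_nonneg b1, Real.sqrt_nonneg a2, Real.sqrt_nonneg b2]
  calc Real.sqrt a1 * Real.sqrt b1 + Real.sqrt a2 * Real.sqrt b2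
      = Real.sqrt ((Real.sqrt a1 * Real.sqrt b1 + Real.sqrt a2 * Real.sqrt b2)^2) := by
        rw [Real.sqrt_sq (by positivity)]
    _ ≤ Real.sqrt ((a1+a2)*(b1+b2)) := Real.sqrt_le_sqrt key

noncomputable def Cth (q : ℝ) : ℝ := 2 ^ ((2:ℝ)/q) * Sth (2/q)

lemma Cth_nonneg (q : ℝ) : 0 ≤ Cth q :=
  mul_nonneg (Real.rpow_pos_of_pos (by norm_num) _).le (Sth_nonneg _)

lemma rpow_two_div_eq {q : ℝ} (hq : 0 < q) {a : ℝ} (ha : 0 ≤ a) :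
    a ^ ((2:ℝ)/q) = a ^ ((1:ℝ)/q) * a ^ ((1:ℝ)/q) := by
  rw [← Real.rpow_add' ha (by positivity)]
  congr 1; ring

lemma le_rpow_inv_of_rpow_le {q a b : ℝ} (hq : 0 < q) (ha : 0 ≤ a) (h : a ^ q ≤ b) :
    a ≤ b ^ ((1:ℝ)/q) := by
  have hb : 0 ≤ b := le_trans (Real.rpow_nonneg ha q) h
  have : (a ^ q) ^ ((1:ℝ)/q) ≤ b ^ ((1:ℝ)/q) :=
    Real.rpow_le_rpow (Real.rpow_nonneg ha q) h (by positivity)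
  rwa [← Real.rpow_mul ha, mul_one_div, div_self hq.ne', Real.rpow_one] at this

section odelemmas
variable {V : Type u} [NormedAddCommGroup V] [NormedSpace ℝ V]

lemma delta_xi_single (Ω M : ℝ → V →L[ℝ] V) (x y z : ℝ) :
    ((Ω z - Ω x).comp (M x) - (Ω y - Ω x).comp (M x) - (Ω z - Ω y).comp (M y))
      = (Ω z - Ω y).comp (M x - M y) := by
  ext w
  simp only [ContinuousLinearMap.coe_sub', Pi.sub_apply, ContinuousLinearMap.comp_apply,
    ContinuousLinearMap.sub_apply, map_sub]
  abel

variable {q : ℝ} (hq1 : 1 ≤ q) (hq2 : q < 2)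
  {ω : ℝ → ℝ → ℝ}
  (hωnn : ∀ x y, 0 ≤ x → x ≤ y → y ≤ 1 → 0 ≤ ω x y)
  (hωsa : ∀ x y z, 0 ≤ x → x ≤ y → y ≤ z → z ≤ 1 → ω x y + ω y z ≤ ω x z)

include hq1 hωnn hωsa in
lemma omega_mono : ∀ a x y b, 0 ≤ a → a ≤ x → x ≤ y → y ≤ b → b ≤ 1 →
    ω x y ≤ ω a b := by
  intro a x y b ha hax hxy hyb hb1
  have h1 := hωsa a x y ha hax hxy (le_trans hyb hb1)
  have h2 := hωsa a y b ha (le_trans hax hxy) hyb hb1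
  have g1 := hωnn a x ha hax (le_trans (le_trans hxy hyb) hb1)
  have g2 := hωnn y b (le_trans ha (le_trans hax hxy)) hyb hb1
  linarith

include hq1 hq2 hωnn hωsa in
lemma YL_single (Ω M : ℝ → V →L[ℝ] V)
    (hΩb : ∀ x y, 0 ≤ x → x ≤ y → y ≤ 1 → ‖Ω y - Ω x‖ ≤ ω x y ^ ((1:ℝ)/q))
    {u v : ℝ} (hu : 0 ≤ u) (huv : u ≤ v) (hv : v ≤ 1)
    (hlim : RSLimit Ω M u v (M v - M u))
    (c : ℝ) (hc : 0 ≤ c)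
    (hH : ∀ x y, u ≤ x → x ≤ y → y ≤ v → ‖M y - M x‖ ≤ c * ω x y ^ ((1:ℝ)/q)) :
    ‖(M v - M u) - (Ω v - Ω u).comp (M u)‖ ≤ c * Cth q * ω u v ^ ((2:ℝ)/q) := by
  have hq0 : (0:ℝ) < q := lt_of_lt_of_le one_pos hq1
  have hθ : 1 < 2/q := by rw [lt_div_iff₀ hq0]; linarith
  have hmono := omega_mono hq1 hωnn hωsa
  apply rs_close huv
    (fun P : Subdivision u v =>
      ∑ i ∈ Finset.range P.N, (Ω (P.pt (i + 1)) - Ω (P.pt i)).comp (M (P.pt i)))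
    (M v - M u) _ _ hlim
  intro P
  have hsew := sewing (2/q) hθ ω
    (fun x y hx hxy hy => hωnn x y (le_trans hu hx) hxy (le_trans hy hv))
    (fun x y z hx hxy hyz hz =>
      hωsa x y z (le_trans hu hx) hxy hyz (le_trans hz hv))
    (fun x y => (Ω y - Ω x).comp (M x)) c hc ?_ P
  · calc _ ≤ c * (2 ^ ((2:ℝ)/q) * Sth (2/q)) * ω u v ^ ((2:ℝ)/q) := hsew
      _ = c * Cth q * ω u v ^ ((2:ℝ)/q) := rfl
  · intro x y z hx hxy hyz hz
    have hx0 : 0 ≤ x := le_trans hu hx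
    have hz1 : z ≤ 1 := le_trans hz hv
    have hy0 : 0 ≤ y := le_trans hx0 hxy
    rw [delta_xi_single]
    have h1 : ‖(Ω z - Ω y).comp (M x - M y)‖ ≤ ‖Ω z - Ω y‖ * ‖M x - M y‖ :=
      ContinuousLinearMap.opNorm_comp_le _ _
    have h2 : ‖Ω z - Ω y‖ ≤ ω y z ^ ((1:ℝ)/q) := hΩb y z hy0 hyz hz1
    have h3 : ‖M x - M y‖ ≤ c * ω x y ^ ((1:ℝ)/q) := by
      rw [norm_sub_rev]; exact hH x y hx hxy (le_trans hyz hz)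
    have hm1 : ω y z ^ ((1:ℝ)/q) ≤ ω x z ^ ((1:ℝ)/q) :=
      Real.rpow_le_rpow (hωnn y z hy0 hyz hz1)
        (hmono x y z z hx0 hxy hyz le_rfl hz1) (by positivity)
    have hm2 : ω x y ^ ((1:ℝ)/q) ≤ ω x z ^ ((1:ℝ)/q) :=
      Real.rpow_le_rpow (hωnn x y hx0 hxy (le_trans (le_trans hyz hz) hv))
        (hmono x x y z hx0 le_rfl hxy hyz hz1) (by positivity)
    have hnn : (0:ℝ) ≤ ω x z ^ ((1:ℝ)/q) :=
      Real.rpow_nonneg (hωnn x z hx0 (le_trans hxy hyz) hz1) _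
    have hnn2 : (0:ℝ) ≤ ω y z ^ ((1:ℝ)/q) :=
      Real.rpow_nonneg (hωnn y z hy0 hyz hz1) _
    calc ‖(Ω z - Ω y).comp (M x - M y)‖
        ≤ ‖Ω z - Ω y‖ * ‖M x - M y‖ := h1
      _ ≤ ω y z ^ ((1:ℝ)/q) * (c * ω x y ^ ((1:ℝ)/q)) :=
          mul_le_mul h2 h3 (norm_nonneg _) hnn2
      _ ≤ ω x z ^ ((1:ℝ)/q) * (c * ω x z ^ ((1:ℝ)/q)) :=
          mul_le_mul hm1 (mul_le_mul_of_nonneg_left hm2 hc)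
            (mul_nonneg hc (Real.rpow_nonneg
              (hωnn x y (le_trans hu hx) hxy (le_trans (le_trans hyz hz) hv)) _)) hnn
      _ = c * ω x z ^ ((2:ℝ)/q) := by
          rw [rpow_two_div_eq hq0 (hωnn x z hx0 (le_trans hxy hyz) hz1)]
          ring
end odelemmas

section odelemmas2
variable {V : Type u} [NormedAddCommGroup V] [NormedSpace ℝ V]
variable {q : ℝ} (hq1 : 1 ≤ q) (hq2 : q < 2)
  {ω : ℝ → ℝ → ℝ}
  (hωnn : ∀ x y, 0 ≤ x → x ≤ y → y ≤ 1 → 0 ≤ ω x y)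
  (hωsa : ∀ x y z, 0 ≤ x → x ≤ y → y ≤ z → z ≤ 1 → ω x y + ω y z ≤ ω x z)

lemma delta_xi_diff (Ω Ωh M Mh : ℝ → V →L[ℝ] V) (x y z : ℝ) :
    (((Ω z - Ω x).comp (M x) - (Ωh z - Ωh x).comp (Mh x))
      - ((Ω y - Ω x).comp (M x) - (Ωh y - Ωh x).comp (Mh x))
      - ((Ω z - Ω y).comp (M y) - (Ωh z - Ωh y).comp (Mh y)))
    = ((Ω z - Ω y) - (Ωh z - Ωh y)).comp (M x - M y)
      + (Ωh z - Ωh y).comp ((M x - M y) - (Mh x - Mh y)) := by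
  ext w
  simp only [ContinuousLinearMap.coe_sub', Pi.sub_apply, ContinuousLinearMap.comp_apply,
    ContinuousLinearMap.sub_apply, ContinuousLinearMap.add_apply, map_sub,
    ContinuousLinearMap.coe_add', Pi.add_apply]
  abel

lemma xi_diff_decomp (Ω Ωh M Mh : ℝ → V →L[ℝ] V) (u v : ℝ) :
    ((Ω v - Ω u).comp (M u) - (Ωh v - Ωh u).comp (Mh u))
    = (Ω v - Ω u).comp (M u - Mh u) + ((Ω v - Ω u) - (Ωh v - Ωh u)).comp (Mh u) := by
  ext w
  simp only [ContinuousLinearMap.coe_sub', Pi.sub_apply, ContinuousLinearMap.comp_apply,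
    ContinuousLinearMap.sub_apply, ContinuousLinearMap.add_apply, map_sub,
    ContinuousLinearMap.coe_add', Pi.add_apply]
  abel

include hq1 hq2 hωnn hωsa in
lemma YL_diff (Ω Ωh M Mh : ℝ → V →L[ℝ] V) (ε A' : ℝ) (hε : 0 ≤ ε) (hA' : 0 ≤ A')
    (hΩhb : ∀ x y, 0 ≤ x → x ≤ y → y ≤ 1 → ‖Ωh y - Ωh x‖ ≤ ω x y ^ ((1:ℝ)/q))
    (hΩd : ∀ x y, 0 ≤ x → x ≤ y → y ≤ 1 →
      ‖(Ω y - Ω x) - (Ωh y - Ωh x)‖ ≤ ε * ω x y ^ ((1:ℝ)/q))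
    (hMb : ∀ x y, 0 ≤ x → x ≤ y → y ≤ 1 → ‖M y - M x‖ ≤ A' * ω x y ^ ((1:ℝ)/q))
    {u v : ℝ} (hu : 0 ≤ u) (huv : u ≤ v) (hv : v ≤ 1)
    (hlim1 : RSLimit Ω M u v (M v - M u))
    (hlim2 : RSLimit Ωh Mh u v (Mh v - Mh u))
    (c : ℝ) (hc : 0 ≤ c)
    (hH : ∀ x y, u ≤ x → x ≤ y → y ≤ v →
      ‖(M y - Mh y) - (M x - Mh x)‖ ≤ c * ω x y ^ ((1:ℝ)/q)) :
    ‖((M v - M u) - (Mh v - Mh u))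
        - ((Ω v - Ω u).comp (M u) - (Ωh v - Ωh u).comp (Mh u))‖
      ≤ (ε * A' + c) * Cth q * ω u v ^ ((2:ℝ)/q) := by
  have hq0 : (0:ℝ) < q := lt_of_lt_of_le one_pos hq1
  have hθ : 1 < 2/q := by rw [lt_div_iff₀ hq0]; linarith
  have hmono := omega_mono hq1 hωnn hωsa
  have hlim : ∀ e > (0:ℝ), ∃ δ > (0:ℝ), ∀ P : Subdivision u v, P.mesh < δ →
      ‖(∑ i ∈ Finset.range P.N,
          ((Ω (P.pt (i+1)) - Ω (P.pt i)).comp (M (P.pt i))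
            - (Ωh (P.pt (i+1)) - Ωh (P.pt i)).comp (Mh (P.pt i))))
        - ((M v - M u) - (Mh v - Mh u))‖ ≤ e := by
    intro e he
    obtain ⟨δ1, hδ1, h1⟩ := hlim1 (e/2) (by linarith)
    obtain ⟨δ2, hδ2, h2⟩ := hlim2 (e/2) (by linarith)
    refine ⟨min δ1 δ2, lt_min hδ1 hδ2, ?_⟩
    intro P hP
    have g1 := h1 P (lt_of_lt_of_le hP (min_le_left _ _))
    have g2 := h2 P (lt_of_lt_of_le hP (min_le_right _ _))
    rw [Finset.sum_sub_distrib]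
    have e1 : (∑ i ∈ Finset.range P.N, (Ω (P.pt (i+1)) - Ω (P.pt i)).comp (M (P.pt i)))
        - (∑ i ∈ Finset.range P.N, (Ωh (P.pt (i+1)) - Ωh (P.pt i)).comp (Mh (P.pt i)))
        - ((M v - M u) - (Mh v - Mh u))
      = ((∑ i ∈ Finset.range P.N, (Ω (P.pt (i+1)) - Ω (P.pt i)).comp (M (P.pt i))) - (M v - M u))
        - ((∑ i ∈ Finset.range P.N, (Ωh (P.pt (i+1)) - Ωh (P.pt i)).comp (Mh (P.pt i))) - (Mh v - Mh u)) := by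
      abel
    rw [e1]
    calc _ ≤ ‖(∑ i ∈ Finset.range P.N, (Ω (P.pt (i+1)) - Ω (P.pt i)).comp (M (P.pt i))) - (M v - M u)‖
        + ‖(∑ i ∈ Finset.range P.N, (Ωh (P.pt (i+1)) - Ωh (P.pt i)).comp (Mh (P.pt i))) - (Mh v - Mh u)‖ :=
          norm_sub_le _ _
      _ ≤ e := by linarith
  apply rs_close huv
    (fun P : Subdivision u v =>
      ∑ i ∈ Finset.range P.N,
        ((Ω (P.pt (i+1)) - Ω (P.pt i)).comp (M (P.pt i))
          - (Ωh (P.pt (i+1)) - Ωh (P.pt i)).comp (Mh (P.pt i))))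
    ((M v - M u) - (Mh v - Mh u)) _ _ hlim
  intro P
  have hsew := sewing (2/q) hθ ω
    (fun x y hx hxy hy => hωnn x y (le_trans hu hx) hxy (le_trans hy hv))
    (fun x y z hx hxy hyz hz =>
      hωsa x y z (le_trans hu hx) hxy hyz (le_trans hz hv))
    (fun x y => (Ω y - Ω x).comp (M x) - (Ωh y - Ωh x).comp (Mh x))
    (ε * A' + c) (by positivity) ?_ P
  · calc _ ≤ (ε * A' + c) * (2 ^ ((2:ℝ)/q) * Sth (2/q)) * ω u v ^ ((2:ℝ)/q) := hsew
      _ = (ε * A' + c) * Cth q * ω u v ^ ((2:ℝ)/q) := rfl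
  · intro x y z hx hxy hyz hz
    have hx0 : 0 ≤ x := le_trans hu hx
    have hz1 : z ≤ 1 := le_trans hz hv
    have hy0 : 0 ≤ y := le_trans hx0 hxy
    have hy1 : y ≤ 1 := le_trans (le_trans hyz hz) hv
    rw [delta_xi_diff]
    have hωyz0 : 0 ≤ ω y z := hωnn y z hy0 hyz hz1
    have hωxy0 : 0 ≤ ω x y := hωnn x y hx0 hxy hy1
    have hωxz0 : 0 ≤ ω x z := hωnn x z hx0 (le_trans hxy hyz) hz1
    have hm1 : ω y z ^ ((1:ℝ)/q) ≤ ω x z ^ ((1:ℝ)/q) :=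
      Real.rpow_le_rpow hωyz0 (hmono x y z z hx0 hxy hyz le_rfl hz1) (by positivity)
    have hm2 : ω x y ^ ((1:ℝ)/q) ≤ ω x z ^ ((1:ℝ)/q) :=
      Real.rpow_le_rpow hωxy0 (hmono x x y z hx0 le_rfl hxy hyz hz1) (by positivity)
    have hxz_nn : (0:ℝ) ≤ ω x z ^ ((1:ℝ)/q) := Real.rpow_nonneg hωxz0 _
    have hyz_nn : (0:ℝ) ≤ ω y z ^ ((1:ℝ)/q) := Real.rpow_nonneg hωyz0 _
    have hxy_nn : (0:ℝ) ≤ ω x y ^ ((1:ℝ)/q) := Real.rpow_nonneg hωxy0 _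
    have t1 : ‖((Ω z - Ω y) - (Ωh z - Ωh y)).comp (M x - M y)‖
        ≤ (ε * ω y z ^ ((1:ℝ)/q)) * (A' * ω x y ^ ((1:ℝ)/q)) := by
      refine le_trans (ContinuousLinearMap.opNorm_comp_le _ _) ?_
      apply mul_le_mul (hΩd y z hy0 hyz hz1) _ (norm_nonneg _) (by positivity)
      rw [norm_sub_rev]
      exact hMb x y hx0 hxy hy1
    have t2 : ‖(Ωh z - Ωh y).comp ((M x - M y) - (Mh x - Mh y))‖
        ≤ ω y z ^ ((1:ℝ)/q) * (c * ω x y ^ ((1:ℝ)/q)) := by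
      refine le_trans (ContinuousLinearMap.opNorm_comp_le _ _) ?_
      apply mul_le_mul (hΩhb y z hy0 hyz hz1) _ (norm_nonneg _) hyz_nn
      have := hH x y hx hxy (le_trans hyz hz)
      calc ‖(M x - M y) - (Mh x - Mh y)‖
          = ‖(M y - Mh y) - (M x - Mh x)‖ := by rw [← norm_neg]; congr 1; abel
        _ ≤ c * ω x y ^ ((1:ℝ)/q) := this
    calc ‖((Ω z - Ω y) - (Ωh z - Ωh y)).comp (M x - M y)
          + (Ωh z - Ωh y).comp ((M x - M y) - (Mh x - Mh y))‖
        ≤ (ε * ω y z ^ ((1:ℝ)/q)) * (A' * ω x y ^ ((1:ℝ)/q))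
          + ω y z ^ ((1:ℝ)/q) * (c * ω x y ^ ((1:ℝ)/q)) := by
          refine le_trans (norm_add_le _ _) ?_
          linarith
      _ ≤ (ε * ω x z ^ ((1:ℝ)/q)) * (A' * ω x z ^ ((1:ℝ)/q))
          + ω x z ^ ((1:ℝ)/q) * (c * ω x z ^ ((1:ℝ)/q)) := by
          have a1 : (ε * ω y z ^ ((1:ℝ)/q)) * (A' * ω x y ^ ((1:ℝ)/q))
              ≤ (ε * ω x z ^ ((1:ℝ)/q)) * (A' * ω x z ^ ((1:ℝ)/q)) := by
            apply mul_le_mul (mul_le_mul_of_nonneg_left hm1 hε)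
              (mul_le_mul_of_nonneg_left hm2 hA') (by positivity) (by positivity)
          have a2 : ω y z ^ ((1:ℝ)/q) * (c * ω x y ^ ((1:ℝ)/q))
              ≤ ω x z ^ ((1:ℝ)/q) * (c * ω x z ^ ((1:ℝ)/q)) := by
            apply mul_le_mul hm1 (mul_le_mul_of_nonneg_left hm2 hc) (by positivity) hxz_nn
          linarith
      _ = (ε * A' + c) * ω x z ^ ((2:ℝ)/q) := by
          rw [rpow_two_div_eq hq0 hωxz0]
          ring
end odelemmas2

section stepA
variable {V : Type u} [NormedAddCommGroup V] [NormedSpace ℝ V]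
variable {q : ℝ} (hq1 : 1 ≤ q) (hq2 : q < 2)
  {ω : ℝ → ℝ → ℝ}
  (hωnn : ∀ x y, 0 ≤ x → x ≤ y → y ≤ 1 → 0 ≤ ω x y)
  (hωsa : ∀ x y z, 0 ≤ x → x ≤ y → y ≤ z → z ≤ 1 → ω x y + ω y z ≤ ω x z)

include hq1 hq2 hωnn hωsa in
lemma stepA (Ω M : ℝ → V →L[ℝ] V)
    (hΩb : ∀ x y, 0 ≤ x → x ≤ y → y ≤ 1 → ‖Ω y - Ω x‖ ≤ ω x y ^ ((1:ℝ)/q))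
    (hMc : ContinuousOn M (Set.Icc 0 1)) (hMq : FiniteQVar q M)
    (hMsol : SolvesLinearODE Ω M) :
    ∃ A : ℝ, 0 ≤ A ∧ ∀ u v, 0 ≤ u → u ≤ v → v ≤ 1 →
      ‖M v - M u‖ ≤ A * ω u v ^ ((1:ℝ)/q) := by
  have hq0 : (0:ℝ) < q := lt_of_lt_of_le one_pos hq1
  have hθ : 1 < 2/q := by rw [lt_div_iff₀ hq0]; linarith
  have hmono := omega_mono hq1 hωnn hωsa
  obtain ⟨B, hB⟩ := hMq
  have hB' : ∀ P : Subdivision 0 1, qsum q M P ≤ B := hB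
  have hB0 : 0 ≤ B := le_trans (qsum_nonneg q M (triv 0 1 zero_le_one)) (hB' _)
  obtain ⟨K, hK⟩ := IsCompact.exists_bound_of_continuousOn isCompact_Icc hMc
  have hK0 : 0 ≤ K := le_trans (norm_nonneg (M 0)) (hK 0 (by constructor <;> norm_num))
  refine ⟨K + Cth q * B ^ ((1:ℝ)/q),
    add_nonneg hK0 (mul_nonneg (Cth_nonneg q) (Real.rpow_nonneg hB0 _)), ?_⟩
  intro u v hu huv hv
  set χ : ℝ → ℝ → ℝ := fun x y => Real.sqrt (ω x y * pvar q M x y) with hχdef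
  have hχ0 : ∀ x y, u ≤ x → x ≤ y → y ≤ v → 0 ≤ χ x y := fun x y _ _ _ => Real.sqrt_nonneg _
  have hχsa : ∀ x y z, u ≤ x → x ≤ y → y ≤ z → z ≤ v → χ x y + χ y z ≤ χ x z := by
    intro x y z hx hxy hyz hz
    have hx0 : 0 ≤ x := le_trans hu hx
    have hz1 : z ≤ 1 := le_trans hz hv
    have hy0 : 0 ≤ y := le_trans hx0 hxy
    have hy1 : y ≤ 1 := le_trans (le_trans hyz hz) hv
    have c1 := sqrt_cs (hωnn x y hx0 hxy hy1) (pvar_nonneg hB' hx0 hxy hy1)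
      (hωnn y z hy0 hyz hz1) (pvar_nonneg hB' hy0 hyz hz1)
    refine le_trans c1 (Real.sqrt_le_sqrt ?_)
    apply mul_le_mul (hωsa x y z hx0 hxy hyz hz1) (pvar_superadd hB' hx0 hxy hyz hz1)
      (add_nonneg (pvar_nonneg hB' hx0 hxy hy1) (pvar_nonneg hB' hy0 hyz hz1))
      (hωnn x z hx0 (le_trans hxy hyz) hz1)
  have hδ : ∀ x y z, u ≤ x → x ≤ y → y ≤ z → z ≤ v →
      ‖((Ω z - Ω x).comp (M x) - (Ω y - Ω x).comp (M x) - (Ω z - Ω y).comp (M y))‖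
        ≤ 1 * χ x z ^ ((2:ℝ)/q) := by
    intro x y z hx hxy hyz hz
    have hx0 : 0 ≤ x := le_trans hu hx
    have hz1 : z ≤ 1 := le_trans hz hv
    have hy0 : 0 ≤ y := le_trans hx0 hxy
    have hy1 : y ≤ 1 := le_trans (le_trans hyz hz) hv
    have hωxz0 : 0 ≤ ω x z := hωnn x z hx0 (le_trans hxy hyz) hz1
    have hpxz0 : 0 ≤ pvar q M x z := pvar_nonneg hB' hx0 (le_trans hxy hyz) hz1
    rw [delta_xi_single, one_mul]
    have hMxy : ‖M x - M y‖ ≤ (pvar q M x y) ^ ((1:ℝ)/q) := by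
      rw [norm_sub_rev]
      exact le_rpow_inv_of_rpow_le hq0 (norm_nonneg _) (norm_rpow_le_pvar hB' hx0 hxy hy1)
    have hΩyz : ‖Ω z - Ω y‖ ≤ ω y z ^ ((1:ℝ)/q) := hΩb y z hy0 hyz hz1
    have hm1 : ω y z ^ ((1:ℝ)/q) ≤ ω x z ^ ((1:ℝ)/q) :=
      Real.rpow_le_rpow (hωnn y z hy0 hyz hz1) (hmono x y z z hx0 hxy hyz le_rfl hz1)
        (by positivity)
    have hm2 : (pvar q M x y) ^ ((1:ℝ)/q) ≤ (pvar q M x z) ^ ((1:ℝ)/q) :=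
      Real.rpow_le_rpow (pvar_nonneg hB' hx0 hxy hy1)
        (pvar_mono hB' hx0 le_rfl hxy hyz hz1) (by positivity)
    have hχval : χ x z ^ ((2:ℝ)/q) = ω x z ^ ((1:ℝ)/q) * (pvar q M x z) ^ ((1:ℝ)/q) := by
      rw [hχdef]
      show (Real.sqrt (ω x z * pvar q M x z)) ^ ((2:ℝ)/q) = _
      rw [Real.sqrt_eq_rpow, ← Real.rpow_mul (by positivity)]
      rw [show (1:ℝ)/2 * (2/q) = 1/q by field_simp]
      exact Real.mul_rpow hωxz0 hpxz0
    rw [hχval]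
    calc ‖(Ω z - Ω y).comp (M x - M y)‖
        ≤ ‖Ω z - Ω y‖ * ‖M x - M y‖ := ContinuousLinearMap.opNorm_comp_le _ _
      _ ≤ ω y z ^ ((1:ℝ)/q) * (pvar q M x y) ^ ((1:ℝ)/q) :=
          mul_le_mul hΩyz hMxy (norm_nonneg _)
            (Real.rpow_nonneg (hωnn y z hy0 hyz hz1) _)
      _ ≤ ω x z ^ ((1:ℝ)/q) * (pvar q M x z) ^ ((1:ℝ)/q) :=
          mul_le_mul hm1 hm2 (Real.rpow_nonneg (pvar_nonneg hB' hx0 hxy hy1) _)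
            (Real.rpow_nonneg hωxz0 _)
  have hYL : ‖(M v - M u) - (Ω v - Ω u).comp (M u)‖
      ≤ 1 * Cth q * χ u v ^ ((2:ℝ)/q) := by
    apply rs_close huv
      (fun P : Subdivision u v =>
        ∑ i ∈ Finset.range P.N, (Ω (P.pt (i + 1)) - Ω (P.pt i)).comp (M (P.pt i)))
      (M v - M u) _ _ (hMsol u v hu huv hv)
    intro P
    have hsew := sewing (2/q) hθ χ hχ0 hχsa
      (fun x y => (Ω y - Ω x).comp (M x)) 1 zero_le_one hδ P
    calc _ ≤ 1 * (2 ^ ((2:ℝ)/q) * Sth (2/q)) * χ u v ^ ((2:ℝ)/q) := hsew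
      _ = 1 * Cth q * χ u v ^ ((2:ℝ)/q) := rfl
  have hωuv0 : 0 ≤ ω u v := hωnn u v hu huv hv
  have hpuv0 : 0 ≤ pvar q M u v := pvar_nonneg hB' hu huv hv
  have hχuv : χ u v ^ ((2:ℝ)/q) ≤ ω u v ^ ((1:ℝ)/q) * B ^ ((1:ℝ)/q) := by
    have hval : χ u v ^ ((2:ℝ)/q) = ω u v ^ ((1:ℝ)/q) * (pvar q M u v) ^ ((1:ℝ)/q) := by
      rw [hχdef]
      show (Real.sqrt (ω u v * pvar q M u v)) ^ ((2:ℝ)/q) = _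
      rw [Real.sqrt_eq_rpow, ← Real.rpow_mul (by positivity)]
      rw [show (1:ℝ)/2 * (2/q) = 1/q by field_simp]
      exact Real.mul_rpow hωuv0 hpuv0
    rw [hval]
    apply mul_le_mul_of_nonneg_left _ (Real.rpow_nonneg hωuv0 _)
    exact Real.rpow_le_rpow hpuv0 (pvar_le_B hB' hu huv hv) (by positivity)
  calc ‖M v - M u‖
      ≤ ‖(M v - M u) - (Ω v - Ω u).comp (M u)‖ + ‖(Ω v - Ω u).comp (M u)‖ := by
        have e2 := norm_add_le ((M v - M u) - (Ω v - Ω u).comp (M u)) ((Ω v - Ω u).comp (M u))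
        have e3 : ((M v - M u) - (Ω v - Ω u).comp (M u)) + (Ω v - Ω u).comp (M u)
            = M v - M u := by abel
        rw [e3] at e2
        exact e2
    _ ≤ 1 * Cth q * χ u v ^ ((2:ℝ)/q) + ω u v ^ ((1:ℝ)/q) * K := by
        have h1 : ‖(Ω v - Ω u).comp (M u)‖ ≤ ω u v ^ ((1:ℝ)/q) * K := by
          refine le_trans (ContinuousLinearMap.opNorm_comp_le _ _) ?_
          apply mul_le_mul (hΩb u v hu huv hv) (hK u ⟨hu, le_trans huv hv⟩)
            (norm_nonneg _) (Real.rpow_nonneg hωuv0 _)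
        linarith [hYL]
    _ ≤ Cth q * (ω u v ^ ((1:ℝ)/q) * B ^ ((1:ℝ)/q)) + ω u v ^ ((1:ℝ)/q) * K := by
        rw [one_mul]
        have := mul_le_mul_of_nonneg_left hχuv (Cth_nonneg q)
        linarith
    _ = (K + Cth q * B ^ ((1:ℝ)/q)) * ω u v ^ ((1:ℝ)/q) := by ring
end stepA

noncomputable def eta (q : ℝ) : ℝ := (1/(2*(1+Cth q))) ^ q

noncomputable def mq (q c₀ : ℝ) : ℕ := ⌈(max c₀ 0) / eta q⌉₊ + 1

noncomputable def AG (q c₀ : ℝ) : ℝ := (mq q c₀ : ℝ) * 2 ^ (mq q c₀ + 1)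

noncomputable def KK (q c₀ : ℝ) : ℝ := 1 + AG q c₀ * (max c₀ 0 + 1)

noncomputable def EE (q c₀ : ℝ) : ℝ := KK q c₀ + Cth q * AG q c₀

noncomputable def CC (q c₀ : ℝ) : ℝ := (mq q c₀ : ℝ) * 2 ^ (mq q c₀ + 1) * EE q c₀ + 1

section constants
variable {q : ℝ} (hq1 : 1 ≤ q) (hq2 : q < 2)

lemma one_add_Cth_pos (q : ℝ) : (0:ℝ) < 1 + Cth q := by linarith [Cth_nonneg q]

include hq1 in
lemma eta_pos : 0 < eta q := by
  apply Real.rpow_pos_of_pos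
  have := one_add_Cth_pos q
  positivity

include hq1 in
lemma eta_rpow : eta q ^ ((1:ℝ)/q) = 1/(2*(1+Cth q)) := by
  have hq0 : (0:ℝ) < q := lt_of_lt_of_le one_pos hq1
  have hb : (0:ℝ) ≤ 1/(2*(1+Cth q)) := by
    have := one_add_Cth_pos q
    positivity
  rw [eta, ← Real.rpow_mul hb, mul_one_div, div_self hq0.ne', Real.rpow_one]

include hq1 in
lemma eta_rpow_half : (1 + Cth q) * eta q ^ ((1:ℝ)/q) = 1/2 := by
  rw [eta_rpow hq1]
  have := one_add_Cth_pos q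
  field_simp

include hq1 in
lemma eta_rpow_le_half : eta q ^ ((1:ℝ)/q) ≤ 1/2 := by
  rw [eta_rpow hq1]
  have h := one_add_Cth_pos q
  rw [div_le_div_iff₀ (by linarith) (by norm_num)]
  nlinarith [Cth_nonneg q]

include hq1 in
lemma eta_rpow_le_one : eta q ^ ((1:ℝ)/q) ≤ 1 :=
  le_trans (eta_rpow_le_half hq1) (by norm_num)

lemma AG_nonneg (q c₀ : ℝ) : 0 ≤ AG q c₀ := by
  unfold AG; positivity

lemma mq_pos (q c₀ : ℝ) : 1 ≤ mq q c₀ := by unfold mq; omega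

lemma KK_nonneg (q c₀ : ℝ) : 0 ≤ KK q c₀ := by
  unfold KK
  have := AG_nonneg q c₀
  have h : (0:ℝ) ≤ max c₀ 0 + 1 := by
    have := le_max_right c₀ 0; linarith
  positivity

lemma EE_nonneg (q c₀ : ℝ) : 0 ≤ EE q c₀ :=
  add_nonneg (KK_nonneg q c₀) (mul_nonneg (Cth_nonneg q) (AG_nonneg q c₀))

include hq1 in
lemma rpow_inv_le_add_one {x : ℝ} (hx : 0 ≤ x) : x ^ ((1:ℝ)/q) ≤ x + 1 := by
  have hq0 : (0:ℝ) < q := lt_of_lt_of_le one_pos hq1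
  have hinv1 : (1:ℝ)/q ≤ 1 := by
    rw [div_le_one hq0]; linarith
  rcases le_or_gt x 1 with h1 | h1
  · have := Real.rpow_le_one (z := (1:ℝ)/q) hx h1 (by positivity)
    linarith
  · have := Real.rpow_le_rpow_of_exponent_le h1.le hinv1
    rw [Real.rpow_one] at this
    linarith
end constants

lemma norm_le_add_sub {F : Type v} [NormedAddCommGroup F] (a b : F) :
    ‖b‖ ≤ ‖a‖ + ‖b - a‖ := by
  have h := norm_add_le a (b - a)
  have e : a + (b - a) = b := by abel
  rwa [e] at h

end S7


set_option maxHeartbeats 2000000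
open S7

/-- If `Ω, Ω̂` are `ε`-close in the controlled sense, the solutions `M, M̂` of
`dM = dΩ · M`, `dM̂ = dΩ̂ · M̂` with `M(0) = M̂(0) = Id` satisfy
`‖(M(t) − M(s)) − (M̂(t) − M̂(s))‖ ≤ C ε ω(s,t)^{1/q}` where `C > 0` depends only on `q` and
`ω(0,1)`. -/
theorem statement7 (q : ℝ) (hq1 : 1 ≤ q) (hq2 : q < 2) (c₀ : ℝ) :
    ∃ C : ℝ, 0 < C ∧
      ∀ (V : Type u) [NormedAddCommGroup V] [NormedSpace ℝ V] [CompleteSpace V],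
        ∀ (ε : ℝ), 0 ≤ ε →
        ∀ (Ω Ωh : ℝ → V →L[ℝ] V) (ω : ℝ → ℝ → ℝ),
          MemC0q q Ω → MemC0q q Ωh → IsControl ω → ω 0 1 = c₀ →
          (∀ s t, 0 ≤ s → s ≤ t → t ≤ 1 → ‖Ω t - Ω s‖ ≤ ω s t ^ (1 / q)) →
          (∀ s t, 0 ≤ s → s ≤ t → t ≤ 1 → ‖Ωh t - Ωh s‖ ≤ ω s t ^ (1 / q)) →
          (∀ s t, 0 ≤ s → s ≤ t → t ≤ 1 →
            ‖(Ω t - Ω s) - (Ωh t - Ωh s)‖ ≤ ε * ω s t ^ (1 / q)) →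
          ∀ M Mh : ℝ → V →L[ℝ] V,
            ContinuousOn M (Set.Icc 0 1) → FiniteQVar q M →
            M 0 = ContinuousLinearMap.id ℝ V → SolvesLinearODE Ω M →
            ContinuousOn Mh (Set.Icc 0 1) → FiniteQVar q Mh →
            Mh 0 = ContinuousLinearMap.id ℝ V → SolvesLinearODE Ωh Mh →
            ∀ s t, 0 ≤ s → s ≤ t → t ≤ 1 →
              ‖(M t - M s) - (Mh t - Mh s)‖ ≤ C * ε * ω s t ^ (1 / q) := by
  
  have hq0 : (0:ℝ) < q := lt_of_lt_of_le one_pos hq1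
  refine ⟨CC q c₀, ?_, ?_⟩
  · unfold CC
    have h1 : (0:ℝ) ≤ (mq q c₀ : ℝ) * 2 ^ (mq q c₀ + 1) * EE q c₀ :=
      mul_nonneg (by positivity) (EE_nonneg q c₀)
    linarith
  intro V _ _ _ ε hε Ω Ωh ω hΩmem hΩhmem hctl hω01 hΩb hΩhb hΩd
    M Mh hMc hMq hM0 hMsol hMhc hMhq hMh0 hMhsol
  obtain ⟨hωc, hωdg, hωnn, hωsa⟩ := hctl
  have hc00 : 0 ≤ c₀ := by rw [← hω01]; exact hωnn 0 1 le_rfl zero_le_one le_rfl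
  have hmono := omega_mono hq1 hωnn hωsa
  have hηpos := eta_pos (q := q) hq1
  have hηhalf := eta_rpow_le_half (q := q) hq1
  have hηone := eta_rpow_le_one (q := q) hq1
  have hηrw := eta_rpow_half (q := q) hq1
  have hCth0 := Cth_nonneg q
  set m := mq q c₀ with hmdef
  have hm1 : 1 ≤ m := mq_pos q c₀
  -- the partition
  have hpart : ∃ uu : ℕ → ℝ, uu 0 = 0 ∧ uu m = 1 ∧ (∀ j, j < m → uu j ≤ uu (j+1)) ∧
      (∀ j, j < m → ω (uu j) (uu (j+1)) ≤ eta q) := by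
    rcases eq_or_lt_of_le hc00 with hc0 | hc0
    · -- c₀ = 0 : ω vanishes on the simplex
      have hωzero : ∀ x y, 0 ≤ x → x ≤ y → y ≤ 1 → ω x y ≤ 0 := by
        intro x y hx hxy hy
        have := hmono 0 x y 1 le_rfl hx hxy hy le_rfl
        rw [hω01, ← hc0] at this
        exact this
      refine ⟨fun j => if j = 0 then 0 else 1, by simp, ?_, ?_, ?_⟩
      · show (if m = 0 then (0:ℝ) else 1) = 1
        rw [if_neg (by omega)]
      · intro j hj
        show (if j = 0 then (0:ℝ) else 1) ≤ (if j + 1 = 0 then (0:ℝ) else 1)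
        rw [if_neg (by omega : ¬ j + 1 = 0)]
        by_cases h0 : j = 0
        · rw [if_pos h0]; norm_num
        · rw [if_neg h0]
      · intro j hj
        show ω (if j = 0 then (0:ℝ) else 1) (if j + 1 = 0 then (0:ℝ) else 1) ≤ eta q
        rw [if_neg (by omega : ¬ j + 1 = 0)]
        by_cases h0 : j = 0
        · rw [if_pos h0]
          exact le_trans (hωzero 0 1 le_rfl zero_le_one le_rfl) hηpos.le
        · rw [if_neg h0]
          exact le_trans (hωzero 1 1 zero_le_one le_rfl le_rfl) hηpos.le
    · -- 0 < c₀
      have hmR : (0:ℝ) < (m:ℝ) := by exact_mod_cast hm1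
      have hcm : c₀ / (m:ℝ) ≤ eta q := by
        have h1 : c₀ / eta q ≤ ((⌈(max c₀ 0) / eta q⌉₊ : ℝ)) := by
          rw [max_eq_left hc00]
          exact Nat.le_ceil _
        have h2 : ((⌈(max c₀ 0) / eta q⌉₊ : ℝ)) ≤ (m:ℝ) := by
          rw [hmdef]; unfold mq; push_cast; linarith
        have h3 : c₀ / eta q ≤ (m:ℝ) := le_trans h1 h2
        rw [div_le_iff₀ hηpos] at h3
        rw [div_le_iff₀ hmR]
        linarith [h3]
      have hgc : ContinuousOn (fun x : ℝ => ω 0 x) (Set.Icc 0 1) := by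
        have hmap : Set.MapsTo (fun x : ℝ => ((0:ℝ), x)) (Set.Icc 0 1)
            {p : ℝ × ℝ | 0 ≤ p.1 ∧ p.1 ≤ p.2 ∧ p.2 ≤ 1} := by
          intro x hx
          exact ⟨le_rfl, hx.1, hx.2⟩
        have h2 : ContinuousOn ((fun p : ℝ × ℝ => ω p.1 p.2) ∘ (fun x : ℝ => ((0:ℝ), x)))
            (Set.Icc 0 1) :=
          ContinuousOn.comp hωc (Continuous.continuousOn (by continuity)) hmap
        exact h2
      have hIVT' : ∀ j : ℕ, ∃ x, x ∈ Set.Icc (0:ℝ) 1 ∧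
          (j ≤ m → ω 0 x = (j:ℝ) * c₀ / (m:ℝ)) := by
        intro j
        by_cases hj : j ≤ m
        · have h0 : ω 0 0 = 0 := hωdg 0 le_rfl zero_le_one
          have hjm : (j:ℝ) ≤ (m:ℝ) := by exact_mod_cast hj
          have hj0 : (0:ℝ) ≤ (j:ℝ) := Nat.cast_nonneg j
          have hv1 : ω 0 0 ≤ (j:ℝ) * c₀ / (m:ℝ) := by
            rw [h0]; positivity
          have hv2 : (j:ℝ) * c₀ / (m:ℝ) ≤ ω 0 1 := by
            rw [hω01, div_le_iff₀ hmR]; nlinarith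
          obtain ⟨x, hx, hxv⟩ :=
            intermediate_value_Icc zero_le_one hgc (Set.mem_Icc.mpr ⟨hv1, hv2⟩)
          exact ⟨x, hx, fun _ => hxv⟩
        · exact ⟨0, ⟨le_rfl, zero_le_one⟩, fun h => absurd h hj⟩
      choose vv hvIcc hvval using hIVT'
      set uu := fun j : ℕ => if j = 0 then (0:ℝ) else if m ≤ j then 1 else vv j with huudef
      have huIcc : ∀ j, 0 ≤ uu j ∧ uu j ≤ 1 := by
        intro j
        show 0 ≤ (if j = 0 then (0:ℝ) else if m ≤ j then 1 else vv j) ∧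
          (if j = 0 then (0:ℝ) else if m ≤ j then 1 else vv j) ≤ 1
        by_cases h0 : j = 0
        · rw [if_pos h0]; norm_num
        · rw [if_neg h0]
          by_cases hm : m ≤ j
          · rw [if_pos hm]; norm_num
          · rw [if_neg hm]
            exact ⟨(hvIcc j).1, (hvIcc j).2⟩
      have hval : ∀ j, j ≤ m → ω 0 (uu j) = (j:ℝ) * c₀ / (m:ℝ) := by
        intro j hj
        show ω 0 (if j = 0 then (0:ℝ) else if m ≤ j then 1 else vv j) = _
        by_cases h0 : j = 0
        · rw [if_pos h0, hωdg 0 le_rfl zero_le_one, h0]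
          norm_num
        · by_cases hm : m ≤ j
          · have hjm : j = m := le_antisymm hj hm
            rw [if_neg h0, if_pos hm, hω01, hjm]
            field_simp
          · rw [if_neg h0, if_neg hm]
            exact hvval j hj
      have hgmono : ∀ x y, 0 ≤ x → x ≤ y → y ≤ 1 → ω 0 x ≤ ω 0 y := by
        intro x y hx hxy hy
        have h1 := hωsa 0 x y le_rfl hx hxy hy
        have h2 := hωnn x y hx hxy hy
        linarith
      have hmono' : ∀ j, j < m → uu j ≤ uu (j+1) := by
        intro j hj
        by_contra hcon
        push_neg at hcon
        have hg := hgmono (uu (j+1)) (uu j) (huIcc (j+1)).1 hcon.le (huIcc j).2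
        rw [hval j hj.le, hval (j+1) hj] at hg
        rw [div_le_div_iff₀ hmR hmR] at hg
        push_cast at hg
        nlinarith
      have hsmall : ∀ j, j < m → ω (uu j) (uu (j+1)) ≤ eta q := by
        intro j hj
        have hsa := hωsa 0 (uu j) (uu (j+1)) le_rfl (huIcc j).1 (hmono' j hj) (huIcc (j+1)).2
        rw [hval j hj.le, hval (j+1) hj] at hsa
        have hstep : ((j:ℕ)+1:ℝ) * c₀ / (m:ℝ) - (j:ℝ) * c₀ / (m:ℝ) = c₀ / (m:ℝ) := by
          field_simp
          ring
        push_cast at hsa hstep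
        have : ω (uu j) (uu (j+1)) ≤ c₀ / (m:ℝ) := by linarith
        exact le_trans this hcm
      refine ⟨uu, ?_, ?_, hmono', hsmall⟩
      · show (if 0 = 0 then (0:ℝ) else _) = 0
        rw [if_pos rfl]
      · show (if m = 0 then (0:ℝ) else if m ≤ m then 1 else vv m) = 1
        rw [if_neg (by omega), if_pos le_rfl]
  obtain ⟨uu, huu0, huum, huumono, huusm⟩ := hpart
  have huuIcc : ∀ j, j ≤ m → 0 ≤ uu j ∧ uu j ≤ 1 := by
    intro j hj
    have h2 := mono_of_step huumono
    constructor
    · rw [← huu0]; exact h2 0 j (Nat.zero_le j) hj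
    · rw [← huum]; exact h2 j m hj le_rfl
  -- Step B : uniform Hölder bound with constant AG for any solution
  have hAGrw : AG q c₀ = (m:ℝ) * 2^(m+1) := by rw [hmdef]; rfl
  have stepB : ∀ (Ω' M' : ℝ → V →L[ℝ] V),
      (∀ x y, 0 ≤ x → x ≤ y → y ≤ 1 → ‖Ω' y - Ω' x‖ ≤ ω x y ^ (1/q)) →
      ContinuousOn M' (Set.Icc 0 1) → FiniteQVar q M' →
      M' 0 = ContinuousLinearMap.id ℝ V → SolvesLinearODE Ω' M' →
      ∀ x y, 0 ≤ x → x ≤ y → y ≤ 1 → ‖M' y - M' x‖ ≤ AG q c₀ * ω x y ^ (1/q) := by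
    intro Ω' M' hΩ'b hM'c hM'q hM'0 hM'sol
    obtain ⟨A, hA0, hA⟩ := stepA hq1 hq2 hωnn hωsa Ω' M' hΩ'b hM'c hM'q hM'sol
    have hpieceM : ∀ j, j < m → ∀ x y, uu j ≤ x → x ≤ y → y ≤ uu (j+1) →
        ‖M' y - M' x‖ ≤ (2 * ‖M' (uu j)‖) * ω x y ^ (1/q) := by
      intro j hj
      have ha0 : 0 ≤ uu j := (huuIcc j (le_of_lt hj)).1
      have hb1 : uu (j+1) ≤ 1 := (huuIcc (j+1) hj).2
      apply piece_bootstrap q M' ω (uu j) (uu (j+1)) (‖M' (uu j)‖) (1/2) A (norm_nonneg _)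
        (by norm_num) le_rfl hA0
      · intro x y hx hxy hy
        exact Real.rpow_nonneg (hωnn x y (le_trans ha0 hx) hxy (le_trans hy hb1)) _
      · intro c hc hH x y hx hxy hy
        have hx0 : 0 ≤ x := le_trans ha0 hx
        have hy1 : y ≤ 1 := le_trans hy hb1
        have hηj : ω x y ≤ eta q :=
          le_trans (hmono (uu j) x y (uu (j+1)) ha0 hx hxy hy hb1) (huusm j hj)
        have hωxy0 : 0 ≤ ω x y := hωnn x y hx0 hxy hy1
        have hωr0 : 0 ≤ ω x y ^ (1/q) := Real.rpow_nonneg hωxy0 _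
        have hηr : ω x y ^ (1/q) ≤ eta q ^ (1/q) :=
          Real.rpow_le_rpow hωxy0 hηj (by positivity)
        have hηr0 : (0:ℝ) ≤ eta q ^ (1/q) := Real.rpow_nonneg hηpos.le _
        have hyl := YL_single hq1 hq2 hωnn hωsa Ω' M' hΩ'b hx0 hxy hy1
          (hM'sol x y hx0 hxy hy1) c hc
          (fun a b h1 h2 h3 => hH a b (le_trans hx h1) h2 (le_trans h3 hy))
        have hMx : ‖M' x‖ ≤ ‖M' (uu j)‖ + c * eta q ^ (1/q) := by
          have h1 := hH (uu j) x le_rfl hx (le_trans hxy hy)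
          have h2 : ω (uu j) x ^ (1/q) ≤ eta q ^ (1/q) := by
            apply Real.rpow_le_rpow
              (hωnn _ _ ha0 hx (le_trans (le_trans hxy hy) hb1))
              (le_trans (hmono (uu j) (uu j) x (uu (j+1)) ha0 le_rfl hx
                (le_trans hxy hy) hb1) (huusm j hj)) (by positivity)
          have h3 := norm_le_add_sub (M' (uu j)) (M' x)
          have h4 : c * ω (uu j) x ^ (1/q) ≤ c * eta q ^ (1/q) :=
            mul_le_mul_of_nonneg_left h2 hc
          linarith
        have hcomp : ‖(Ω' y - Ω' x).comp (M' x)‖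
            ≤ ω x y ^ (1/q) * (‖M' (uu j)‖ + c * eta q ^ (1/q)) := by
          refine le_trans (ContinuousLinearMap.opNorm_comp_le _ _) ?_
          exact mul_le_mul (hΩ'b x y hx0 hxy hy1) hMx (norm_nonneg _) hωr0
        have h2q : ω x y ^ ((2:ℝ)/q) ≤ ω x y ^ (1/q) * eta q ^ (1/q) := by
          rw [rpow_two_div_eq hq0 hωxy0]
          exact mul_le_mul_of_nonneg_left hηr hωr0
        have hfin := norm_le_add_sub ((Ω' y - Ω' x).comp (M' x)) (M' y - M' x)
        have hyl2 : ‖(M' y - M' x) - (Ω' y - Ω' x).comp (M' x)‖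
            ≤ c * Cth q * (ω x y ^ (1/q) * eta q ^ (1/q)) := by
          refine le_trans hyl ?_
          exact mul_le_mul_of_nonneg_left h2q (by positivity)
        calc ‖M' y - M' x‖
            ≤ ‖(Ω' y - Ω' x).comp (M' x)‖
              + ‖(M' y - M' x) - (Ω' y - Ω' x).comp (M' x)‖ := hfin
          _ ≤ ω x y ^ (1/q) * (‖M' (uu j)‖ + c * eta q ^ (1/q))
              + c * Cth q * (ω x y ^ (1/q) * eta q ^ (1/q)) := by linarith
          _ = (‖M' (uu j)‖ + c * ((1 + Cth q) * eta q ^ ((1:ℝ)/q))) * ω x y ^ (1/q) := by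
              ring
          _ = (‖M' (uu j)‖ + 1/2 * c) * ω x y ^ (1/q) := by
              rw [hηrw]; ring
      · intro x y hx hxy hy
        exact hA x y (le_trans ha0 hx) hxy (le_trans hy hb1)
    have hend : ∀ j, j ≤ m → ‖M' (uu j)‖ ≤ 2^j := by
      intro j
      induction j with
      | zero =>
        intro _
        rw [huu0, hM'0, pow_zero]
        exact ContinuousLinearMap.norm_id_le
      | succ j ih =>
        intro hjm
        have hj : j < m := by omega
        have hKj := ih (by omega)
        have hpc := hpieceM j hj (uu j) (uu (j+1)) le_rfl (huumono j hj) le_rfl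
        have hωj : ω (uu j) (uu (j+1)) ^ (1/q) ≤ 1/2 := by
          refine le_trans ?_ hηhalf
          apply Real.rpow_le_rpow
            (hωnn _ _ (huuIcc j hj.le).1 (huumono j hj) (huuIcc (j+1) hj).2)
            (huusm j hj) (by positivity)
        have hnorm := norm_le_add_sub (M' (uu j)) (M' (uu (j+1)))
        have hstep2 : ‖M' (uu (j+1)) - M' (uu j)‖ ≤ (2 * ‖M' (uu j)‖) * (1/2) := by
          refine le_trans hpc ?_
          exact mul_le_mul_of_nonneg_left hωj (by positivity)
        have h2 : (2:ℝ)^(j+1) = 2 * 2^j := by ring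
        rw [h2]
        nlinarith [norm_nonneg (M' (uu j))]
    have hQ : ∀ j, j < m → ∀ x y, uu j ≤ x → x ≤ y → y ≤ uu (j+1) →
        ‖M' y - M' x‖ ≤ ((2:ℝ)^(m+1)) * ω x y ^ (1/q) := by
      intro j hj x y hx hxy hy
      have hωr0 : 0 ≤ ω x y ^ (1/q) :=
        Real.rpow_nonneg (hωnn x y (le_trans (huuIcc j hj.le).1 hx) hxy
          (le_trans hy (huuIcc (j+1) hj).2)) _
      refine le_trans (hpieceM j hj x y hx hxy hy)
        (mul_le_mul_of_nonneg_right ?_ hωr0)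
      have h1 := hend j hj.le
      have h2 : (2:ℝ)^(j+1) ≤ 2^(m+1) :=
        pow_le_pow_right₀ (by norm_num) (by omega)
      calc 2 * ‖M' (uu j)‖ ≤ 2 * 2^j := by linarith
        _ = (2:ℝ)^(j+1) := by ring
        _ ≤ (2:ℝ)^(m+1) := h2
    have hg := glue q hq0 M' ω hωnn hmono uu m huu0 huum huumono
      ((2:ℝ)^(m+1)) (by positivity) hQ
    intro x y hx hxy hy
    rw [hAGrw, mul_assoc]
    have := hg x y hx hxy hy
    calc ‖M' y - M' x‖ ≤ ((m:ℝ) * 2^(m+1)) * ω x y ^ (1/q) := this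
      _ = (m:ℝ) * (2^(m+1) * ω x y ^ (1/q)) := by ring
  have hMG := stepB Ω M hΩb hMc hMq hM0 hMsol
  have hMhG := stepB Ωh Mh hΩhb hMhc hMhq hMh0 hMhsol
  have hAG0 := AG_nonneg q c₀
  -- uniform bound on ‖Mh x‖
  have hKMh : ∀ x, 0 ≤ x → x ≤ 1 → ‖Mh x‖ ≤ KK q c₀ := by
    intro x hx hx1
    have h1 := norm_le_add_sub (Mh 0) (Mh x)
    have h2 := hMhG 0 x le_rfl hx hx1
    have h3 : ‖Mh 0‖ ≤ 1 := by rw [hMh0]; exact ContinuousLinearMap.norm_id_le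
    have h4 : ω 0 x ≤ max c₀ 0 := by
      rw [max_eq_left hc00, ← hω01]
      exact hmono 0 0 x 1 le_rfl le_rfl hx hx1 le_rfl
    have h5 : ω 0 x ^ (1/q) ≤ max c₀ 0 + 1 := by
      refine le_trans (Real.rpow_le_rpow (hωnn 0 x le_rfl hx hx1) h4 (by positivity)) ?_
      exact rpow_inv_le_add_one hq1 (le_max_right c₀ 0)
    have h6 : AG q c₀ * ω 0 x ^ (1/q) ≤ AG q c₀ * (max c₀ 0 + 1) :=
      mul_le_mul_of_nonneg_left h5 hAG0
    unfold KK
    linarith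
  -- Step D : difference bootstrap on pieces
  have hEE0 := EE_nonneg q c₀
  have hKK0 := KK_nonneg q c₀
  have hDpiece : ∀ j, j < m → ∀ x y, uu j ≤ x → x ≤ y → y ≤ uu (j+1) →
      ‖(M y - Mh y) - (M x - Mh x)‖
        ≤ (2 * (‖M (uu j) - Mh (uu j)‖ + ε * EE q c₀)) * ω x y ^ (1/q) := by
    intro j hj
    have ha0 : 0 ≤ uu j := (huuIcc j (le_of_lt hj)).1
    have hb1 : uu (j+1) ≤ 1 := (huuIcc (j+1) hj).2
    apply piece_bootstrap q (fun r => M r - Mh r) ω (uu j) (uu (j+1))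
      (‖M (uu j) - Mh (uu j)‖ + ε * EE q c₀) (1/2) (2 * AG q c₀)
      (by positivity) (by norm_num) le_rfl (by positivity)
    · intro x y hx hxy hy
      exact Real.rpow_nonneg (hωnn x y (le_trans ha0 hx) hxy (le_trans hy hb1)) _
    · intro c hc hH x y hx hxy hy
      have hx0 : 0 ≤ x := le_trans ha0 hx
      have hy1 : y ≤ 1 := le_trans hy hb1
      have hηj : ω x y ≤ eta q :=
        le_trans (hmono (uu j) x y (uu (j+1)) ha0 hx hxy hy hb1) (huusm j hj)
      have hωxy0 : 0 ≤ ω x y := hωnn x y hx0 hxy hy1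
      have hωr0 : 0 ≤ ω x y ^ (1/q) := Real.rpow_nonneg hωxy0 _
      have hηr : ω x y ^ (1/q) ≤ eta q ^ (1/q) :=
        Real.rpow_le_rpow hωxy0 hηj (by positivity)
      have hηr0 : (0:ℝ) ≤ eta q ^ (1/q) := Real.rpow_nonneg hηpos.le _
      have hyl := YL_diff hq1 hq2 hωnn hωsa Ω Ωh M Mh ε (AG q c₀) hε hAG0
        hΩhb hΩd hMG hx0 hxy hy1 (hMsol x y hx0 hxy hy1) (hMhsol x y hx0 hxy hy1) c hc
        (fun a b h1 h2 h3 => hH a b (le_trans hx h1) h2 (le_trans h3 hy))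
      have hDx : ‖M x - Mh x‖ ≤ ‖M (uu j) - Mh (uu j)‖ + c * eta q ^ (1/q) := by
        have h1 := hH (uu j) x le_rfl hx (le_trans hxy hy)
        have h2 : ω (uu j) x ^ (1/q) ≤ eta q ^ (1/q) := by
          apply Real.rpow_le_rpow
            (hωnn _ _ ha0 hx (le_trans (le_trans hxy hy) hb1))
            (le_trans (hmono (uu j) (uu j) x (uu (j+1)) ha0 le_rfl hx
              (le_trans hxy hy) hb1) (huusm j hj)) (by positivity)
        have h3 := norm_le_add_sub (M (uu j) - Mh (uu j)) (M x - Mh x)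
        have h4 : c * ω (uu j) x ^ (1/q) ≤ c * eta q ^ (1/q) :=
          mul_le_mul_of_nonneg_left h2 hc
        have h5 : ‖(M x - Mh x) - (M (uu j) - Mh (uu j))‖ ≤ c * ω (uu j) x ^ (1/q) := h1
        linarith
      have hXi : ‖(Ω y - Ω x).comp (M x) - (Ωh y - Ωh x).comp (Mh x)‖
          ≤ ω x y ^ (1/q) * (‖M (uu j) - Mh (uu j)‖ + c * eta q ^ (1/q))
            + ε * ω x y ^ (1/q) * KK q c₀ := by
        rw [xi_diff_decomp]
        refine le_trans (norm_add_le _ _) ?_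
        have t1 : ‖(Ω y - Ω x).comp (M x - Mh x)‖
            ≤ ω x y ^ (1/q) * (‖M (uu j) - Mh (uu j)‖ + c * eta q ^ (1/q)) := by
          refine le_trans (ContinuousLinearMap.opNorm_comp_le _ _) ?_
          exact mul_le_mul (hΩb x y hx0 hxy hy1) hDx (norm_nonneg _) hωr0
        have t2 : ‖((Ω y - Ω x) - (Ωh y - Ωh x)).comp (Mh x)‖
            ≤ ε * ω x y ^ (1/q) * KK q c₀ := by
          refine le_trans (ContinuousLinearMap.opNorm_comp_le _ _) ?_
          exact mul_le_mul (hΩd x y hx0 hxy hy1) (hKMh x hx0 (le_trans hxy hy1))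
            (norm_nonneg _) (by positivity)
        linarith
      have h2q : ω x y ^ ((2:ℝ)/q) ≤ ω x y ^ (1/q) * eta q ^ (1/q) := by
        rw [rpow_two_div_eq hq0 hωxy0]
        exact mul_le_mul_of_nonneg_left hηr hωr0
      have hyl2 : ‖((M y - M x) - (Mh y - Mh x))
            - ((Ω y - Ω x).comp (M x) - (Ωh y - Ωh x).comp (Mh x))‖
          ≤ (ε * AG q c₀ + c) * Cth q * (ω x y ^ (1/q) * eta q ^ (1/q)) := by
        refine le_trans hyl ?_
        exact mul_le_mul_of_nonneg_left h2q (by positivity)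
      have hfin := norm_le_add_sub
        ((Ω y - Ω x).comp (M x) - (Ωh y - Ωh x).comp (Mh x))
        ((M y - Mh y) - (M x - Mh x))
      have heq : ((M y - Mh y) - (M x - Mh x))
          - ((Ω y - Ω x).comp (M x) - (Ωh y - Ωh x).comp (Mh x))
          = ((M y - M x) - (Mh y - Mh x))
            - ((Ω y - Ω x).comp (M x) - (Ωh y - Ωh x).comp (Mh x)) := by
        congr 1
        abel
      have hAGη : ε * AG q c₀ * Cth q * (eta q ^ (1/q)) ≤ ε * (Cth q * AG q c₀) := by
        have : ε * AG q c₀ * Cth q * (eta q ^ (1/q)) ≤ ε * AG q c₀ * Cth q * 1 :=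
          mul_le_mul_of_nonneg_left hηone (by positivity)
        linarith [this]
      have hcη : c * Cth q * eta q ^ (1/q) + c * eta q ^ (1/q) ≤ 1/2 * c := by
        have e1 : c * Cth q * eta q ^ (1/q) + c * eta q ^ (1/q)
            = c * ((1 + Cth q) * eta q ^ ((1:ℝ)/q)) := by ring
        rw [e1, hηrw]
        linarith
      calc ‖(M y - Mh y) - (M x - Mh x)‖
          ≤ ‖(Ω y - Ω x).comp (M x) - (Ωh y - Ωh x).comp (Mh x)‖
            + ‖((M y - Mh y) - (M x - Mh x))
              - ((Ω y - Ω x).comp (M x) - (Ωh y - Ωh x).comp (Mh x))‖ := hfin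
        _ ≤ (ω x y ^ (1/q) * (‖M (uu j) - Mh (uu j)‖ + c * eta q ^ (1/q))
              + ε * ω x y ^ (1/q) * KK q c₀)
            + (ε * AG q c₀ + c) * Cth q * (ω x y ^ (1/q) * eta q ^ (1/q)) := by
            rw [heq] at hfin ⊢
            linarith [hXi, hyl2]
        _ = (‖M (uu j) - Mh (uu j)‖ + ε * KK q c₀
              + ε * AG q c₀ * Cth q * (eta q ^ (1/q))
              + (c * Cth q * eta q ^ (1/q) + c * eta q ^ (1/q))) * ω x y ^ (1/q) := by
            ring
        _ ≤ (‖M (uu j) - Mh (uu j)‖ + ε * KK q c₀ + ε * (Cth q * AG q c₀)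
              + 1/2 * c) * ω x y ^ (1/q) := by
            apply mul_le_mul_of_nonneg_right _ hωr0
            linarith [hAGη, hcη]
        _ = ((‖M (uu j) - Mh (uu j)‖ + ε * EE q c₀) + 1/2 * c) * ω x y ^ (1/q) := by
            unfold EE
            ring
    · intro x y hx hxy hy
      have hx0 : 0 ≤ x := le_trans ha0 hx
      have hy1 : y ≤ 1 := le_trans hy hb1
      have h1 := hMG x y hx0 hxy hy1
      have h2 := hMhG x y hx0 hxy hy1
      have he : (M y - Mh y) - (M x - Mh x) = (M y - M x) - (Mh y - Mh x) := by abel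
      rw [he]
      calc ‖(M y - M x) - (Mh y - Mh x)‖ ≤ ‖M y - M x‖ + ‖Mh y - Mh x‖ := norm_sub_le _ _
        _ ≤ 2 * AG q c₀ * ω x y ^ (1/q) := by linarith
  -- endpoint bounds for the difference
  have hDend : ∀ j, j ≤ m → ‖M (uu j) - Mh (uu j)‖ ≤ (2^j - 1) * (ε * EE q c₀) := by
    intro j
    induction j with
    | zero =>
      intro _
      rw [huu0, hM0, hMh0, sub_self, norm_zero]
      norm_num
    | succ j ih =>
      intro hjm
      have hj : j < m := by omega
      have hKj := ih (by omega)
      have hpc := hDpiece j hj (uu j) (uu (j+1)) le_rfl (huumono j hj) le_rfl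
      have hωj : ω (uu j) (uu (j+1)) ^ (1/q) ≤ 1/2 := by
        refine le_trans ?_ hηhalf
        apply Real.rpow_le_rpow
          (hωnn _ _ (huuIcc j hj.le).1 (huumono j hj) (huuIcc (j+1) hj).2)
          (huusm j hj) (by positivity)
      have hnorm := norm_le_add_sub (M (uu j) - Mh (uu j)) (M (uu (j+1)) - Mh (uu (j+1)))
      have hstep2 : ‖(M (uu (j+1)) - Mh (uu (j+1))) - (M (uu j) - Mh (uu j))‖
          ≤ (2 * (‖M (uu j) - Mh (uu j)‖ + ε * EE q c₀)) * (1/2) := by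
        refine le_trans hpc ?_
        exact mul_le_mul_of_nonneg_left hωj (by positivity)
      have h2 : (2:ℝ)^(j+1) = 2 * 2^j := by ring
      rw [h2]
      nlinarith [norm_nonneg (M (uu j) - Mh (uu j)), mul_nonneg hε hEE0]
  -- glue for the difference
  have hQ : ∀ j, j < m → ∀ x y, uu j ≤ x → x ≤ y → y ≤ uu (j+1) →
      ‖(M y - Mh y) - (M x - Mh x)‖ ≤ ((2:ℝ)^(m+1) * (ε * EE q c₀)) * ω x y ^ (1/q) := by
    intro j hj x y hx hxy hy
    have hωr0 : 0 ≤ ω x y ^ (1/q) :=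
      Real.rpow_nonneg (hωnn x y (le_trans (huuIcc j hj.le).1 hx) hxy
        (le_trans hy (huuIcc (j+1) hj).2)) _
    refine le_trans (hDpiece j hj x y hx hxy hy)
      (mul_le_mul_of_nonneg_right ?_ hωr0)
    have h1 := hDend j hj.le
    have h2 : (2:ℝ)^(j+1) ≤ 2^(m+1) :=
      pow_le_pow_right₀ (by norm_num) (by omega)
    have h3 : (0:ℝ) ≤ ε * EE q c₀ := mul_nonneg hε hEE0
    calc 2 * (‖M (uu j) - Mh (uu j)‖ + ε * EE q c₀)
        ≤ 2 * ((2^j - 1) * (ε * EE q c₀) + ε * EE q c₀) := by linarith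
      _ = (2:ℝ)^(j+1) * (ε * EE q c₀) := by ring
      _ ≤ (2:ℝ)^(m+1) * (ε * EE q c₀) := mul_le_mul_of_nonneg_right h2 h3
  have hg := glue q hq0 (fun r => M r - Mh r) ω hωnn hmono uu m huu0 huum huumono
    ((2:ℝ)^(m+1) * (ε * EE q c₀)) (by positivity) hQ
  intro s t hs hst ht
  have hfin := hg s t hs hst ht
  have he : (M t - Mh t) - (M s - Mh s) = (M t - M s) - (Mh t - Mh s) := by abel
  rw [he] at hfin
  have hωr0 : 0 ≤ ω s t ^ (1/q) := Real.rpow_nonneg (hωnn s t hs hst ht) _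
  calc ‖(M t - M s) - (Mh t - Mh s)‖
      ≤ ((m:ℝ) * ((2:ℝ)^(m+1) * (ε * EE q c₀))) * ω s t ^ (1/q) := hfin
    _ = ((m:ℝ) * 2^(m+1) * EE q c₀) * ε * ω s t ^ (1/q) := by ring
    _ ≤ CC q c₀ * ε * ω s t ^ (1/q) := by
        apply mul_le_mul_of_nonneg_right _ hωr0
        apply mul_le_mul_of_nonneg_right _ hε
        rw [hmdef]
        unfold CC
        linarith
end

section
/- Let V be a real Banach space, θ > 1, ε ≥ 0, let ω be a control function, and let A, B : Δ → V satisfy, for all 0 ≤ s ≤ u ≤ t ≤ 1: ‖A_{s,t} − A_{s,u} − A_{u,t}‖ ≤ ω(s,t)^θ, ‖B_{s,t} − B_{s,u} − B_{u,t}‖ ≤ ω(s,t)^θ, and ‖(A_{s,t} − A_{s,u} − A_{u,t}) − (B_{s,t} − B_{s,u} − B_{u,t})‖ ≤ ε ω(s,t)^θ. Suppose that for every (s,t) ∈ Δ the limits Â_{s,t} := lim_{|P| → 0} Σ_{i=1}^N A_{t_{i−1}, t_i} and B̂_{s,t} := lim_{|P| → 0} Σ_{i=1}^N B_{t_{i−1},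 t_i}, taken over finite partitions P = {s = t_0 < ⋯ < t_N = t} of [s,t] as the mesh tends to 0, exist. Then for all (s,t) ∈ Δ, ‖(Â_{s,t} − A_{s,t}) − (B̂_{s,t} − B_{s,t})‖ ≤ ε · 2^θ · ζ(θ) · ω(s,t)^θ. -/
/-!
STATEMENT 14: comparison of two almost rough paths (first level) with their associated
rough paths.
-/

universe u

/-- `L = lim_{|P| → 0} ∑_i A_{t_{i−1}, t_i}` over finite partitions `P` of `[s,t]`. -/
def PartSumLimit {V : Type u} [NormedAddCommGroup V]
    (A : ℝ → ℝ → V) (s t : ℝ) (L : V) : Prop :=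
  ∀ ε > (0 : ℝ), ∃ δ > (0 : ℝ), ∀ P : Subdivision s t, P.mesh < δ →
    ‖(∑ i ∈ Finset.range P.N, A (P.pt i) (P.pt (i + 1))) - L‖ ≤ ε

lemma st14_ptmono (pt : ℕ → ℝ) (N : ℕ) (h : ∀ i < N, pt i ≤ pt (i+1)) :
    ∀ i k, i ≤ k → k ≤ N → pt i ≤ pt k := by
  intro i k hik hkN
  induction k with
  | zero =>
    have : i = 0 := by omega
    simp [this]
  | succ k ih =>
    rcases Nat.lt_or_ge i (k+1) with h1 | h2
    · exact le_trans (ih (by omega) (by omega)) (h k (by omega))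
    · have : i = k+1 := by omega
      simp [this]

lemma st14_omega_nonneg {ω : ℝ → ℝ → ℝ} (hω : IsControl ω) {a b : ℝ}
    (ha : 0 ≤ a) (hab : a ≤ b) (hb : b ≤ 1) : 0 ≤ ω a b :=
  hω.2.2.1 a b ha hab hb

lemma st14_omega_mono {ω : ℝ → ℝ → ℝ} (hω : IsControl ω) {a a' b' b : ℝ}
    (ha : 0 ≤ a) (h1 : a ≤ a') (h2 : a' ≤ b') (h3 : b' ≤ b) (hb : b ≤ 1) :
    ω a' b' ≤ ω a b := by
  have t1 := hω.2.2.2 a a' b' ha h1 h2 (by linarith)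
  have t2 := hω.2.2.2 a b' b ha (by linarith) h3 hb
  have n1 := hω.2.2.1 a a' ha h1 (by linarith)
  have n2 := hω.2.2.1 b' b (by linarith) h3 hb
  linarith

lemma st14_chain {ω : ℝ → ℝ → ℝ} (hω : IsControl ω) (q : ℕ → ℝ) (K : ℕ)
    (hm : ∀ k < K, q k ≤ q (k+1)) (h0 : 0 ≤ q 0) (h1 : q K ≤ 1) :
    ∑ k ∈ Finset.range K, ω (q k) (q (k+1)) ≤ ω (q 0) (q K) := by
  induction K with
  | zero => simpa using st14_omega_nonneg hω h0 le_rfl h1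
  | succ K ih =>
    have hmK : ∀ k < K, q k ≤ q (k+1) := fun k hk => hm k (by omega)
    have hqK1 : q K ≤ q (K+1) := hm K (by omega)
    have hq0K : q 0 ≤ q K := st14_ptmono q (K+1) hm 0 K (by omega) (by omega)
    rw [Finset.sum_range_succ]
    have hsup := hω.2.2.2 (q 0) (q K) (q (K+1)) h0 hq0K hqK1 h1
    have := ih hmK (le_trans hqK1 h1)
    linarith

lemma st14_evenodd {M : Type*} [AddCommMonoid M] (g : ℕ → M) (m : ℕ) :
    ∑ j ∈ Finset.range m, g j
      = (∑ k ∈ Finset.range ((m+1)/2), g (2*k)) + ∑ k ∈ Finset.range (m/2), g (2*k+1) := by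
  induction m with
  | zero => simp
  | succ m ih =>
    rcases Nat.even_or_odd m with ⟨r, hr⟩ | ⟨r, hr⟩
    · have h1 : (m+1+1)/2 = r+1 := by omega
      have h2 : (m+1)/2 = r := by omega
      have h3 : m/2 = r := by omega
      rw [Finset.sum_range_succ, ih, h1, h2, h3, Finset.sum_range_succ]
      have : 2*r = m := by omega
      rw [this]
      abel
    · have h1 : (m+1+1)/2 = r+1 := by omega
      have h2 : (m+1)/2 = r+1 := by omega
      have h3 : m/2 = r := by omega
      rw [Finset.sum_range_succ, ih, h1, h2, h3,
        Finset.sum_range_succ (fun k => g (2*k+1)) r]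
      have : 2*r+1 = m := by omega
      rw [this]
      abel

lemma st14_parity {ω : ℝ → ℝ → ℝ} (hω : IsControl ω) (pt : ℕ → ℝ) (m : ℕ)
    (hm : ∀ i < m+1, pt i ≤ pt (i+1)) (h0 : 0 ≤ pt 0) (h1 : pt (m+1) ≤ 1) :
    ∑ j ∈ Finset.range m, ω (pt j) (pt (j+2)) ≤ 2 * ω (pt 0) (pt (m+1)) := by
  have hmono := st14_ptmono pt (m+1) hm
  rw [st14_evenodd (fun j => ω (pt j) (pt (j+2))) m]
  have he : (∑ k ∈ Finset.range ((m+1)/2), ω (pt (2*k)) (pt (2*k+2)))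
      ≤ ω (pt 0) (pt (m+1)) := by
    have hc := st14_chain hω (fun k => pt (2*k)) ((m+1)/2)
      (fun k hk => by
        have : 2*k ≤ 2*k+1 ∧ 2*(k+1) ≤ m+1 := by omega
        simpa [Nat.mul_add] using hmono (2*k) (2*(k+1)) (by omega) (by omega))
      h0 (le_trans (hmono (2*((m+1)/2)) (m+1) (by omega) (by omega)) h1)
    have heq : (∑ k ∈ Finset.range ((m+1)/2), ω (pt (2*k)) (pt (2*k+2)))
        = ∑ k ∈ Finset.range ((m+1)/2), ω (pt (2*k)) (pt (2*(k+1))) := by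
      refine Finset.sum_congr rfl (fun k _ => by ring_nf)
    rw [heq]
    refine le_trans hc (st14_omega_mono hω h0 le_rfl ?_ ?_ h1)
    · exact hmono 0 (2*((m+1)/2)) (by omega) (by omega)
    · exact hmono (2*((m+1)/2)) (m+1) (by omega) (by omega)
  have ho : (∑ k ∈ Finset.range (m/2), ω (pt (2*k+1)) (pt (2*k+3)))
      ≤ ω (pt 0) (pt (m+1)) := by
    have hc := st14_chain hω (fun k => pt (2*k+1)) (m/2)
      (fun k hk => by
        simpa [Nat.mul_add] using hmono (2*k+1) (2*(k+1)+1) (by omega) (by omega))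
      (le_trans h0 (hmono 0 1 (by omega) (by omega)))
      (le_trans (hmono (2*(m/2)+1) (m+1) (by omega) (by omega)) h1)
    have heq : (∑ k ∈ Finset.range (m/2), ω (pt (2*k+1)) (pt (2*k+3)))
        = ∑ k ∈ Finset.range (m/2), ω (pt (2*k+1)) (pt (2*(k+1)+1)) := by
      refine Finset.sum_congr rfl (fun k _ => by ring_nf)
    rw [heq]
    refine le_trans hc (st14_omega_mono hω h0 (hmono 0 1 (by omega) (by omega)) ?_ ?_ h1)
    · exact hmono 1 (2*(m/2)+1) (by omega) (by omega)
    · exact hmono (2*(m/2)+1) (m+1) (by omega) (by omega)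
  have heq2 : (∑ j ∈ Finset.range m, ω (pt j) (pt (j+2)))
      = (∑ k ∈ Finset.range ((m+1)/2), ω (pt (2*k)) (pt (2*k+2)))
        + ∑ k ∈ Finset.range (m/2), ω (pt (2*k+1)) (pt (2*k+3)) := by
    rw [st14_evenodd (fun j => ω (pt j) (pt (j+2))) m]
  linarith [he, ho]

lemma st14_key {θ ε : ℝ} (hθ : 1 < θ) (hε : 0 ≤ ε) {V : Type u} [NormedAddCommGroup V]
    {ω : ℝ → ℝ → ℝ} (hω : IsControl ω) (C : ℝ → ℝ → V)
    (hC : ∀ s u t, 0 ≤ s → s ≤ u → u ≤ t → t ≤ 1 →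
      ‖C s t - C s u - C u t‖ ≤ ε * ω s t ^ θ) :
    ∀ N, 1 ≤ N → ∀ pt : ℕ → ℝ, (∀ i < N, pt i ≤ pt (i+1)) → 0 ≤ pt 0 → pt N ≤ 1 →
      ‖(∑ i ∈ Finset.range N, C (pt i) (pt (i+1))) - C (pt 0) (pt N)‖
        ≤ ε * 2 ^ θ * (∑ k ∈ Finset.range (N-1), ((k:ℝ)+1) ^ (-θ)) * ω (pt 0) (pt N) ^ θ := by
  intro N
  induction N with
  | zero => omega
  | succ n ih =>
    intro _ pt hmono h0 hN
    rcases Nat.eq_zero_or_pos n with rfl | hn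
    · -- base case: one interval
      simp only [Finset.sum_range_one, Nat.sub_self, Finset.range_zero,
        Finset.sum_empty, sub_self, norm_zero]
      have hωnn : 0 ≤ ω (pt 0) (pt 1) := st14_omega_nonneg hω h0 (hmono 0 (by omega)) hN
      have : (0:ℝ) ≤ ε * 2 ^ θ * 0 * ω (pt 0) (pt 1) ^ θ := by simp
      simpa using this
    · -- inductive step: n ≥ 1
      have hchain := st14_ptmono pt (n+1) hmono
      have hW : 0 ≤ ω (pt 0) (pt (n+1)) :=
        st14_omega_nonneg hω h0 (hchain 0 (n+1) (by omega) le_rfl) hN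
      set W : ℝ := ω (pt 0) (pt (n+1)) with hWdef
      -- find a cheap interior point to remove
      have hpar := st14_parity hω pt n hmono h0 hN
      have hsumconst : (∑ _j ∈ Finset.range n, 2 * W / n) = 2 * W := by
        rw [Finset.sum_const, Finset.card_range, nsmul_eq_mul]
        field_simp
      obtain ⟨j, hjmem, hjle⟩ := Finset.exists_le_of_sum_le
        (f := fun j => ω (pt j) (pt (j+2))) (g := fun _ => 2 * W / n)
        (s := Finset.range n)
        (Finset.nonempty_range_iff.mpr (by omega))
        (by rw [hsumconst]; exact hpar)
      have hj : j < n := Finset.mem_range.mp hjmem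
      -- the partition with point j+1 removed
      set pt' : ℕ → ℝ := fun i => if i ≤ j then pt i else pt (i+1) with hpt'
      have hpt'0 : pt' 0 = pt 0 := by simp [hpt']
      have hpt'n : pt' n = pt (n+1) := by simp [hpt', Nat.not_le.mpr hj]
      have hmono' : ∀ i < n, pt' i ≤ pt' (i+1) := by
        intro i hi
        by_cases h1 : i + 1 ≤ j
        · simp only [hpt', if_pos (by omega : i ≤ j), if_pos h1]
          exact hmono i (by omega)
        · by_cases h2 : i ≤ j
          · simp only [hpt', if_pos h2, if_neg h1]
            have : i = j := by omega
            subst this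
            exact le_trans (hmono i (by omega)) (hmono (i+1) (by omega))
          · simp only [hpt', if_neg h2, if_neg h1]
            exact hmono (i+1) (by omega)
      have ih' := ih (by omega) pt' hmono' (by rw [hpt'0]; exact h0) (by rw [hpt'n]; exact hN)
      rw [hpt'0, hpt'n] at ih'
      -- sum decomposition
      set E : ℕ → V := fun i => C (pt i) (pt (i+1)) with hE
      set D : ℕ → V := fun i => C (pt' i) (pt' (i+1)) with hD
      have hEsplit : (∑ i ∈ Finset.range (n+1), E i)
          = (∑ i ∈ Finset.Ico 0 j, E i) + E j + E (j+1) + ∑ i ∈ Finset.Ico (j+2) (n+1), E i := by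
        rw [Finset.range_eq_Ico, ← Finset.sum_Ico_consecutive _ (Nat.zero_le j) (by omega : j ≤ n+1)]
        rw [Finset.sum_eq_sum_Ico_succ_bot (by omega : j < n+1)]
        rw [Finset.sum_eq_sum_Ico_succ_bot (by omega : j+1 < n+1)]
        abel
      have hDsplit : (∑ i ∈ Finset.range n, D i)
          = (∑ i ∈ Finset.Ico 0 j, D i) + D j + ∑ i ∈ Finset.Ico (j+1) n, D i := by
        rw [Finset.range_eq_Ico, ← Finset.sum_Ico_consecutive _ (Nat.zero_le j) (by omega : j ≤ n)]
        rw [Finset.sum_eq_sum_Ico_succ_bot (by omega : j < n)]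
        abel
      have hD1 : (∑ i ∈ Finset.Ico 0 j, D i) = ∑ i ∈ Finset.Ico 0 j, E i := by
        refine Finset.sum_congr rfl (fun i hi => ?_)
        have hij : i < j := (Finset.mem_Ico.mp hi).2
        simp only [hD, hE, hpt', if_pos (by omega : i ≤ j), if_pos (by omega : i+1 ≤ j)]
      have hD2 : D j = C (pt j) (pt (j+2)) := by
        simp only [hD, hpt', if_pos le_rfl, if_neg (by omega : ¬ j+1 ≤ j)]
      have hD3 : (∑ i ∈ Finset.Ico (j+1) n, D i) = ∑ i ∈ Finset.Ico (j+2) (n+1), E i := by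
        rw [Finset.sum_Ico_eq_sum_range, Finset.sum_Ico_eq_sum_range]
        have hnum : n - (j+1) = n + 1 - (j+2) := by omega
        rw [← hnum]
        refine Finset.sum_congr rfl (fun i hi => ?_)
        simp only [hD, hE, hpt', if_neg (by omega : ¬ j+1+i ≤ j), if_neg (by omega : ¬ j+1+i+1 ≤ j)]
        have e1 : j+1+i+1 = j+2+i := by omega
        rw [e1]
      -- rearrangement
      have hrearr : (∑ i ∈ Finset.range (n+1), E i) - C (pt 0) (pt (n+1))
          = ((∑ i ∈ Finset.range n, D i) - C (pt 0) (pt (n+1)))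
            + (E j + E (j+1) - D j) := by
        rw [hEsplit, hDsplit, hD1, hD3]
        abel
      -- defect bound for the removed point
      have hcond1 : 0 ≤ pt j := le_trans h0 (hchain 0 j (by omega) (by omega))
      have hcond2 : pt (j+2) ≤ 1 := le_trans (hchain (j+2) (n+1) (by omega) (by omega)) hN
      have hdef : ‖E j + E (j+1) - D j‖ ≤ ε * ω (pt j) (pt (j+2)) ^ θ := by
        have := hC (pt j) (pt (j+1)) (pt (j+2)) hcond1 (hmono j (by omega))
          (hmono (j+1) (by omega)) hcond2
        have heq : E j + E (j+1) - D j
            = -(C (pt j) (pt (j+2)) - C (pt j) (pt (j+1)) - C (pt (j+1)) (pt (j+2))) := by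
          rw [hD2]; simp only [hE]; abel
        rw [heq, norm_neg]
        exact this
      have hθ0 : (0:ℝ) < θ := by linarith
      have hωj : 0 ≤ ω (pt j) (pt (j+2)) :=
        st14_omega_nonneg hω hcond1
          (le_trans (hmono j (by omega)) (hmono (j+1) (by omega))) hcond2
      have hnpos : (0:ℝ) < (n:ℝ) := by exact_mod_cast hn
      have hpow : ω (pt j) (pt (j+2)) ^ θ ≤ (2 * W / n) ^ θ :=
        Real.rpow_le_rpow hωj hjle hθ0.le
      have hpoweq : (2 * W / n) ^ θ = 2 ^ θ * (n:ℝ) ^ (-θ) * W ^ θ := by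
        rw [Real.div_rpow (by linarith) hnpos.le, Real.mul_rpow (by norm_num) hW,
          Real.rpow_neg hnpos.le]
        field_simp
      -- assemble
      have hsumstep : (∑ k ∈ Finset.range (n+1-1), ((k:ℝ)+1) ^ (-θ))
          = (∑ k ∈ Finset.range (n-1), ((k:ℝ)+1) ^ (-θ)) + (n:ℝ) ^ (-θ) := by
        have h1 : n + 1 - 1 = (n-1) + 1 := by omega
        rw [h1, Finset.sum_range_succ]
        congr 1
        have : ((n-1 : ℕ):ℝ) + 1 = (n:ℝ) := by
          have : ((n-1 : ℕ):ℝ) = (n:ℝ) - 1 := by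
            push_cast [Nat.cast_sub (by omega : 1 ≤ n)]; ring
          rw [this]; ring
        rw [this]
      calc ‖(∑ i ∈ Finset.range (n+1), E i) - C (pt 0) (pt (n+1))‖
          ≤ ‖(∑ i ∈ Finset.range n, D i) - C (pt 0) (pt (n+1))‖ + ‖E j + E (j+1) - D j‖ := by
            rw [hrearr]; exact norm_add_le _ _
        _ ≤ ε * 2 ^ θ * (∑ k ∈ Finset.range (n-1), ((k:ℝ)+1) ^ (-θ)) * W ^ θ
            + ε * (2 ^ θ * (n:ℝ) ^ (-θ) * W ^ θ) := by
            refine add_le_add ih' ?_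
            refine le_trans hdef ?_
            rw [← hpoweq]
            exact mul_le_mul_of_nonneg_left hpow hε
        _ = ε * 2 ^ θ * ((∑ k ∈ Finset.range (n-1), ((k:ℝ)+1) ^ (-θ)) + (n:ℝ) ^ (-θ)) * W ^ θ := by
            ring
        _ = ε * 2 ^ θ * (∑ k ∈ Finset.range (n+1-1), ((k:ℝ)+1) ^ (-θ)) * W ^ θ := by
            rw [hsumstep]

lemma st14_summable {θ : ℝ} (hθ : 1 < θ) : Summable (fun k : ℕ => ((k:ℝ)+1) ^ (-θ)) := by
  have h1 : Summable (fun n : ℕ => (n:ℝ) ^ (-θ)) :=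
    (Real.summable_nat_rpow (p := -θ)).2 (by linarith)
  have h2 := (summable_nat_add_iff (f := fun n : ℕ => (n:ℝ) ^ (-θ)) 1).2 h1
  refine h2.congr (fun k => ?_)
  push_cast
  ring_nf

lemma st14_unif (s t δ : ℝ) (hst : s ≤ t) (hδ : 0 < δ) :
    ∃ P : Subdivision s t, P.mesh < δ := by
  obtain ⟨M, hM⟩ := exists_nat_gt ((t - s)/δ)
  set N : ℕ := M + 1 with hNdef
  have hNpos : (0:ℝ) < (N:ℝ) := by positivity
  have hq : 0 ≤ (t-s)/(N:ℝ) := by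
    apply div_nonneg (by linarith) hNpos.le
  refine ⟨⟨N, fun i => s + (i:ℝ) * ((t-s)/(N:ℝ)), Nat.succ_pos M, by simp, ?_, ?_⟩, ?_⟩
  · field_simp
    ring
  · intro i hi
    have h1 : ((i+1 : ℕ):ℝ) = (i:ℝ) + 1 := by push_cast; ring
    simp only [h1]
    nlinarith [hq]
  · rw [Subdivision.mesh, Finset.sup'_lt_iff]
    intro i hi
    have hlt : (t - s)/(N:ℝ) < δ := by
      rw [div_lt_iff₀ hNpos]
      have : (t-s)/δ < (N:ℝ) := by
        have : (M:ℝ) < (N:ℝ) := by exact_mod_cast Nat.lt_succ_self M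
        linarith
      calc t - s = ((t-s)/δ) * δ := by field_simp
        _ < (N:ℝ) * δ := by exact mul_lt_mul_of_pos_right this hδ
        _ = δ * (N:ℝ) := by ring
    have : s + ((i:ℝ)+1) * ((t-s)/(N:ℝ)) - (s + (i:ℝ) * ((t-s)/(N:ℝ))) = (t-s)/(N:ℝ) := by
      ring
    simp only [Nat.cast_add, Nat.cast_one]
    calc s + ((i:ℝ)+1) * ((t-s)/(N:ℝ)) - (s + (i:ℝ) * ((t-s)/(N:ℝ)))
        = (t-s)/(N:ℝ) := by ring
      _ < δ := hlt

/-- If two first-level almost rough paths `A, B` have `ε`-close defects,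
then `‖(Â_{s,t} − A_{s,t}) − (B̂_{s,t} − B_{s,t})‖ ≤ ε 2^θ ζ(θ) ω(s,t)^θ`. -/
theorem statement14 (θ ε : ℝ) (hθ : 1 < θ) (hε : 0 ≤ ε)
    (V : Type u) [NormedAddCommGroup V] [NormedSpace ℝ V] [CompleteSpace V]
    (ω : ℝ → ℝ → ℝ) (hω : IsControl ω)
    (A B Ahat Bhat : ℝ → ℝ → V)
    (hA : ∀ s u t, 0 ≤ s → s ≤ u → u ≤ t → t ≤ 1 →
      ‖A s t - A s u - A u t‖ ≤ ω s t ^ θ)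
    (hB : ∀ s u t, 0 ≤ s → s ≤ u → u ≤ t → t ≤ 1 →
      ‖B s t - B s u - B u t‖ ≤ ω s t ^ θ)
    (hAB : ∀ s u t, 0 ≤ s → s ≤ u → u ≤ t → t ≤ 1 →
      ‖(A s t - A s u - A u t) - (B s t - B s u - B u t)‖ ≤ ε * ω s t ^ θ)
    (hAhat : ∀ s t, 0 ≤ s → s ≤ t → t ≤ 1 → PartSumLimit A s t (Ahat s t))
    (hBhat : ∀ s t, 0 ≤ s → s ≤ t → t ≤ 1 → PartSumLimit B s t (Bhat s t)) :
    ∀ s t, 0 ≤ s → s ≤ t → t ≤ 1 →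
      ‖(Ahat s t - A s t) - (Bhat s t - B s t)‖
        ≤ ε * 2 ^ θ * zetaR θ * ω s t ^ θ := by
  intro s t hs hst ht
  set C : ℝ → ℝ → V := fun a b => A a b - B a b with hCdef
  have hC : ∀ s' u t', 0 ≤ s' → s' ≤ u → u ≤ t' → t' ≤ 1 →
      ‖C s' t' - C s' u - C u t'‖ ≤ ε * ω s' t' ^ θ := by
    intro s' u t' h1 h2 h3 h4
    have he : C s' t' - C s' u - C u t'
        = (A s' t' - A s' u - A u t') - (B s' t' - B s' u - B u t') := by
      simp only [hCdef]; abel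
    rw [he]
    exact hAB s' u t' h1 h2 h3 h4
  -- the uniform-in-partition estimate
  have hωst : 0 ≤ ω s t := st14_omega_nonneg hω hs hst ht
  have hbound : ∀ P : Subdivision s t,
      ‖(∑ i ∈ Finset.range P.N, C (P.pt i) (P.pt (i+1))) - C s t‖
        ≤ ε * 2 ^ θ * zetaR θ * ω s t ^ θ := by
    intro P
    have hkey := st14_key hθ hε hω C hC P.N P.pos P.pt P.mono
      (by rw [P.first]; exact hs) (by rw [P.last]; exact ht)
    rw [P.first, P.last] at hkey
    refine le_trans hkey ?_
    have hpartial : (∑ k ∈ Finset.range (P.N-1), ((k:ℝ)+1) ^ (-θ)) ≤ zetaR θ := by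
      apply Summable.sum_le_tsum _ (fun k _ => Real.rpow_nonneg (by positivity) _) (st14_summable hθ)
    have h2θ : (0:ℝ) ≤ (2:ℝ) ^ θ := Real.rpow_nonneg (by norm_num) _
    have hωθ : (0:ℝ) ≤ ω s t ^ θ := Real.rpow_nonneg hωst _
    have := mul_le_mul_of_nonneg_right
      (mul_le_mul_of_nonneg_left hpartial (mul_nonneg hε h2θ)) hωθ
    calc ε * 2 ^ θ * (∑ k ∈ Finset.range (P.N-1), ((k:ℝ)+1) ^ (-θ)) * ω s t ^ θ
        = (ε * 2 ^ θ) * (∑ k ∈ Finset.range (P.N-1), ((k:ℝ)+1) ^ (-θ)) * ω s t ^ θ := by ring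
      _ ≤ (ε * 2 ^ θ) * zetaR θ * ω s t ^ θ := this
      _ = ε * 2 ^ θ * zetaR θ * ω s t ^ θ := by ring
  -- pass to the limit
  refine le_of_forall_pos_le_add ?_
  intro η hη
  obtain ⟨δA, hδA, hPA⟩ := hAhat s t hs hst ht (η/2) (by linarith)
  obtain ⟨δB, hδB, hPB⟩ := hBhat s t hs hst ht (η/2) (by linarith)
  obtain ⟨P, hP⟩ := st14_unif s t (min δA δB) hst (lt_min hδA hδB)
  have hPA' := hPA P (lt_of_lt_of_le hP (min_le_left _ _))
  have hPB' := hPB P (lt_of_lt_of_le hP (min_le_right _ _))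
  set SA : V := ∑ i ∈ Finset.range P.N, A (P.pt i) (P.pt (i+1)) with hSA
  set SB : V := ∑ i ∈ Finset.range P.N, B (P.pt i) (P.pt (i+1)) with hSB
  have hSC : (∑ i ∈ Finset.range P.N, C (P.pt i) (P.pt (i+1))) = SA - SB := by
    simp only [hCdef, hSA, hSB, Finset.sum_sub_distrib]
  have hid : (Ahat s t - A s t) - (Bhat s t - B s t)
      = -(SA - Ahat s t) + (SB - Bhat s t)
        + ((∑ i ∈ Finset.range P.N, C (P.pt i) (P.pt (i+1))) - C s t) := by
    rw [hSC]
    simp only [hCdef]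
    abel
  calc ‖(Ahat s t - A s t) - (Bhat s t - B s t)‖
      = ‖-(SA - Ahat s t) + (SB - Bhat s t)
          + ((∑ i ∈ Finset.range P.N, C (P.pt i) (P.pt (i+1))) - C s t)‖ := by rw [hid]
    _ ≤ ‖-(SA - Ahat s t)‖ + ‖SB - Bhat s t‖
          + ‖(∑ i ∈ Finset.range P.N, C (P.pt i) (P.pt (i+1))) - C s t‖ :=
        norm_add₃_le
    _ ≤ η/2 + η/2 + ε * 2 ^ θ * zetaR θ * ω s t ^ θ := by
        rw [norm_neg]
        exact add_le_add (add_le_add hPA' hPB') (hbound P)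
    _ = ε * 2 ^ θ * zetaR θ * ω s t ^ θ + η := by ring
end
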